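/- arXiv:1008.4808 — 6 statements merged into one kernel-verified Lean document; each statement's English description precedes it below -/
import Mathlib

section
/- Let K be a linearly ordered field and let t ≥ 1. Then: (i) every nonzero polynomial f ∈ K[x] having at most t+1 nonzero terms has at most 2t distinct roots in K \ {0}; and (ii) there exists a polynomial in K[x] with exactly t+1 nonzero terms having exactly 2t distinct roots in K \ {0} (for instance (x²−1²)(x²−2²)⋯(x²−t²)). In other words, B₁(t,K) = 2t. -/
open Polynomial
namespace B1Aux
variable {K : Type*} [Field K] [LinearOrder K] [IsStrictOrderedRing K]

def vchain : K → List K → ℕ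
  | _, [] => 0
  | a, x :: l => if x = 0 then vchain a l else (if a * x < 0 then 1 else 0) + vchain x l
def vlist : List K → ℕ
  | [] => 0
  | x :: l => if x = 0 then vlist l else vchain x l
def diffs (r : K) : K → List K → List K
  | a, [] => [a]
  | a, x :: l => (a - r * x) :: diffs r x l

@[simp] lemma vchain_nil (a : K) : vchain a ([] : List K) = 0 := rfl
lemma vchain_cons (a x : K) (l : List K) :
    vchain a (x :: l) = if x = 0 then vchain a l else (if a * x < 0 then 1 else 0) + vchain x l := rfl
@[simp] lemma vlist_nil : vlist ([] : List K) = 0 := rfl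
lemma vlist_cons (x : K) (l : List K) :
    vlist (x :: l) = if x = 0 then vlist l else vchain x l := rfl
@[simp] lemma diffs_nil (r a : K) : diffs r a [] = [a] := rfl
@[simp] lemma diffs_cons (r a x : K) (l : List K) :
    diffs r a (x :: l) = (a - r * x) :: diffs r x l := rfl

lemma vchain_congr {a b : K} (h : 0 < a * b) (l : List K) : vchain a l = vchain b l := by
  induction l with
  | nil => rfl
  | cons x l ih =>
    rw [vchain_cons, vchain_cons]
    by_cases hx : x = 0
    · simp [hx, ih]
    · have : (a * x < 0) ↔ (b * x < 0) := by
        rcases mul_pos_iff.1 h with ⟨ha, hb⟩ | ⟨ha, hb⟩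
        · constructor <;> intro h' <;> nlinarith
        · constructor <;> intro h' <;> nlinarith
      simp [hx, this]

lemma vchain_le_one_add (a b : K) (l : List K) : vchain a l ≤ 1 + vchain b l := by
  induction l generalizing a b with
  | nil => simp [vchain]
  | cons x l ih =>
    rw [vchain_cons, vchain_cons]
    by_cases hx : x = 0
    · simpa [hx] using ih a b
    · simp only [hx, if_false]
      have h1 : (if a * x < 0 then 1 else 0) ≤ 1 + (if b * x < 0 then 1 else 0) := by
        split <;> split <;> omega
      omega


lemma vchain_cons_zero (a : K) (l : List K) : vchain a (0 :: l) = vchain a l := by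
  simp [vchain_cons]

lemma vchain_cons_ne (a : K) {x : K} (hx : x ≠ 0) (l : List K) :
    vchain a (x :: l) = (if a * x < 0 then 1 else 0) + vchain x l := by
  simp [vchain_cons, hx]

set_option maxHeartbeats 1000000 in
lemma DF {r : K} (hr : 0 < r) :
    ∀ n : ℕ, ∀ l : List K, l.length ≤ n → ∀ a : K, a ≠ 0 →
    (vchain a l + 1 ≤ vchain (-a) (diffs r a l)) ∧ (vchain a l ≤ vchain a (diffs r 0 l)) := by
  have base : ∀ a : K, a ≠ 0 → (vchain a ([]:List K) + 1 ≤ vchain (-a) (diffs r a []))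
      ∧ (vchain a ([]:List K) ≤ vchain a (diffs r 0 [])) := by
    intro a ha
    have h1 : 0 < a * a := mul_self_pos.2 ha
    have h2 : (-a) * a < 0 := by nlinarith
    constructor
    · rw [diffs_nil, vchain_cons_ne _ ha, if_pos h2, vchain_nil]
    · rw [diffs_nil, vchain_cons_zero]
  intro n
  induction n with
  | zero =>
    intro l hl a ha
    rw [List.length_eq_zero_iff.1 (Nat.le_zero.1 hl)]
    exact base a ha
  | succ n ih =>
    intro l hl a ha
    match l with
    | [] => exact base a ha
    | x :: l' =>
      have hl' : l'.length ≤ n := by simpa using hl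
      constructor
      · -- D part
        by_cases hx : x = 0
        · subst hx
          have hF := (ih l' hl' a ha).2
          have hind : (-a) * a < 0 := by nlinarith [mul_self_pos.2 ha]
          rw [diffs_cons, mul_zero, sub_zero, vchain_cons_zero, vchain_cons_ne _ ha,
            if_pos hind]
          omega
        · have hD := (ih l' hl' x hx).1
          rw [vchain_cons_ne _ hx, diffs_cons]
          by_cases hax : a - r * x = 0
          · have haeq : a = r * x := by linarith [sub_eq_zero.1 hax]
            have hsame : 0 < a * x := by rw [haeq]; nlinarith [mul_self_pos.2 hx]
            have hnot : ¬ (a * x < 0) := by linarith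
            have hcongr : vchain (-a) (diffs r x l') = vchain (-x) (diffs r x l') := by
              apply vchain_congr; nlinarith
            rw [hax, vchain_cons_zero, hcongr, if_neg hnot]
            omega
          · rw [vchain_cons_ne _ hax]
            by_cases hax2 : a * x < 0
            · -- a, x opposite signs; a - rx has sign of a, i.e. of -x
              have hrx : 0 < r * (-(a*x)) := mul_pos hr (by linarith)
              have haxs : 0 < (a - r * x) * (-x) := by nlinarith [mul_self_pos.2 hx]
              have hcongr : vchain (a - r * x) (diffs r x l') = vchain (-x) (diffs r x l') :=
                vchain_congr haxs _
              have hind : (-a) * (a - r * x) < 0 := by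
                nlinarith [mul_self_pos.2 ha]
              rw [hcongr, if_pos hax2, if_pos hind]
              omega
            · have h0 : 0 < a * x := by
                rcases lt_or_gt_of_ne ha with h | h <;> rcases lt_or_gt_of_ne hx with h' | h'
                · nlinarith
                · exfalso; exact hax2 (by nlinarith)
                · exfalso; exact hax2 (by nlinarith)
                · nlinarith
              rw [if_neg hax2]
              by_cases haxs : (a - r * x) * x < 0
              · -- a - rx has sign of -x
                have hcongr : vchain (a - r * x) (diffs r x l') = vchain (-x) (diffs r x l') :=
                  vchain_congr (by nlinarith [mul_self_pos.2 hx]) _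
                rw [hcongr]
                omega
              · have h0x : 0 < (a - r * x) * x := by
                  rcases (not_lt.1 haxs).lt_or_eq with h | h
                  · exact h
                  · exfalso
                    rcases mul_eq_zero.1 h.symm with h' | h'
                    · exact hax h'
                    · exact hx h'
                have key : 0 < (a * (a - r * x)) * (x * x) := by
                  have h3 := mul_pos h0 h0x
                  have h4 : (a * x) * ((a - r * x) * x) = (a * (a - r * x)) * (x * x) := by ring
                  rw [← h4]; exact h3
                have hpos : 0 < a * (a - r * x) := by
                  by_contra hle
                  push_neg at hle
                  have h2 := mul_le_mul_of_nonneg_right hle (le_of_lt (mul_self_pos.2 hx))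
                  rw [zero_mul] at h2
                  linarith
                have hind : (-a) * (a - r * x) < 0 := by
                  have hre : (-a) * (a - r * x) = -(a * (a - r * x)) := by ring
                  rw [hre]; linarith
                have hch : vchain (-x) (diffs r x l') ≤ 1 + vchain (a - r * x) (diffs r x l') :=
                  vchain_le_one_add _ _ _
                rw [if_pos hind]
                omega
      · -- F part
        by_cases hx : x = 0
        · subst hx
          have hF := (ih l' hl' a ha).2
          rw [diffs_cons, mul_zero, sub_zero, vchain_cons_zero, vchain_cons_zero]
          exact hF
        · have hD := (ih l' hl' x hx).1
          have hrx : (0:K) - r * x ≠ 0 := by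
            intro h
            have : r * x = 0 := by linarith
            rcases mul_eq_zero.1 this with h' | h'
            · exact hr.ne' h'
            · exact hx h'
          have hcongr : vchain (0 - r * x) (diffs r x l') = vchain (-x) (diffs r x l') :=
            vchain_congr (by nlinarith [mul_pos hr (mul_self_pos.2 hx)]) _
          rw [vchain_cons_ne _ hx, diffs_cons, vchain_cons_ne _ hrx, hcongr]
          by_cases hax : a * x < 0
          · have hpos : 0 < a * (0 - r * x) := by
              nlinarith [mul_pos hr (by linarith : (0:K) < -(a*x))]
            rw [if_pos hax, if_neg (by linarith : ¬ (a * (0 - r * x) < 0))]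
            omega
          · rw [if_neg hax]
            have : (0:ℕ) ≤ if a * (0 - r * x) < 0 then 1 else 0 := Nat.zero_le _
            omega


lemma D' {r : K} (hr : 0 < r) (l : List K) {a : K} (ha : a ≠ 0) :
    vchain a l + 1 ≤ vchain (-a) (diffs r a l) := (DF hr l.length l le_rfl a ha).1

lemma F' {r : K} (hr : 0 < r) (l : List K) {a : K} (ha : a ≠ 0) :
    vchain a l ≤ vchain a (diffs r 0 l) := (DF hr l.length l le_rfl a ha).2

lemma F0 {r : K} (hr : 0 < r) : ∀ l : List K, (∃ x ∈ l, x ≠ 0) →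
    vlist l + 1 ≤ vlist (diffs r 0 l) := by
  intro l
  induction l with
  | nil => rintro ⟨x, hx, _⟩; cases hx
  | cons y m ih =>
    rintro ⟨x, hx, hxne⟩
    by_cases hy : y = 0
    · subst hy
      have hm : ∃ x ∈ m, x ≠ 0 := by
        rcases List.mem_cons.1 hx with rfl | h
        · exact absurd rfl hxne
        · exact ⟨x, h, hxne⟩
      have := ih hm
      rw [diffs_cons, mul_zero, sub_zero, vlist_cons, if_pos rfl, vlist_cons, if_pos rfl]
      exact this
    · have hry : (0:K) - r * y ≠ 0 := by
        intro h
        have : r * y = 0 := by linarith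
        rcases mul_eq_zero.1 this with h' | h'
        · exact hr.ne' h'
        · exact hy h'
      have hcongr : vchain (0 - r * y) (diffs r y m) = vchain (-y) (diffs r y m) :=
        vchain_congr (by nlinarith [mul_pos hr (mul_self_pos.2 hy)]) _
      rw [diffs_cons, vlist_cons, if_neg hy, vlist_cons, if_neg hry, hcongr]
      exact D' hr m hy

lemma G {r : K} (hr : 0 < r) (a : K) (l : List K) (h : ∃ x ∈ a :: l, x ≠ 0) :
    vlist (a :: l) + 1 ≤ vlist ((-(r * a)) :: diffs r a l) := by
  by_cases ha : a = 0
  · subst ha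
    have hm : ∃ x ∈ l, x ≠ 0 := by
      rcases h with ⟨x, hx, hxne⟩
      rcases List.mem_cons.1 hx with rfl | h'
      · exact absurd rfl hxne
      · exact ⟨x, h', hxne⟩
    rw [vlist_cons, if_pos rfl, mul_zero, neg_zero, vlist_cons, if_pos rfl]
    exact F0 hr l hm
  · have hra : -(r * a) ≠ 0 := by
      intro h'
      have : r * a = 0 := by linarith
      rcases mul_eq_zero.1 this with h'' | h''
      · exact hr.ne' h''
      · exact ha h''
    have hcongr : vchain (-(r * a)) (diffs r a l) = vchain (-a) (diffs r a l) :=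
      vchain_congr (by nlinarith [mul_pos hr (mul_self_pos.2 ha)]) _
    rw [vlist_cons, if_neg ha, vlist_cons, if_neg hra, hcongr]
    exact D' hr l ha


open Polynomial in
noncomputable def clist (f : K[X]) : List K := (List.range (f.natDegree + 1)).map f.coeff

noncomputable def vpoly (f : K[X]) : ℕ := vlist (clist f)

lemma getD_map_range (m : ℕ) (F : ℕ → K) (hF : ∀ j, m ≤ j → F j = 0) (i : ℕ) :
    (((List.range m).map F).getD i 0) = F i := by
  by_cases h : i < m
  · rw [List.getD_eq_getElem _ _ (by simpa using h)]
    simp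
  · rw [List.getD_eq_default _ _ (by simpa using not_lt.1 h)]
    exact (hF i (not_lt.1 h)).symm

lemma clist_getD (f : K[X]) (i : ℕ) : (clist f).getD i 0 = f.coeff i := by
  apply getD_map_range
  intro j hj
  exact Polynomial.coeff_eq_zero_of_natDegree_lt (by omega)

@[simp] lemma length_diffs (r : K) : ∀ (a : K) (l : List K), (diffs r a l).length = l.length + 1
  | a, [] => rfl
  | a, x :: l => by rw [diffs_cons, List.length_cons, length_diffs r x l, List.length_cons]

lemma diffs_getD (r : K) : ∀ (l : List K) (a : K) (i : ℕ),
    (diffs r a l).getD i 0 = (a :: l).getD i 0 - r * l.getD i 0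
  | [], a, 0 => by simp
  | [], a, (i+1) => by simp
  | x :: l, a, 0 => by simp
  | x :: l, a, (i+1) => by
    rw [diffs_cons, List.getD_cons_succ, diffs_getD r l x i]
    rfl

lemma clist_eq (g : K[X]) :
    clist g = g.coeff 0 :: (List.range g.natDegree).map (fun i => g.coeff (i + 1)) := by
  rw [clist, List.range_succ_eq_map, List.map_cons, List.map_map]
  rfl

lemma list_ext_getD {l1 l2 : List K} (hlen : l1.length = l2.length)
    (h : ∀ i, l1.getD i 0 = l2.getD i 0) : l1 = l2 := by
  apply List.ext_getElem hlen
  intro i h1 h2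
  rw [← List.getD_eq_getElem l1 0 h1, ← List.getD_eq_getElem l2 0 h2]
  exact h i

open Polynomial in
lemma clist_mul (r : K) {g : K[X]} (hg : g ≠ 0) :
    clist ((X - C r) * g) =
      (-(r * g.coeff 0)) :: diffs r (g.coeff 0) ((List.range g.natDegree).map (fun i => g.coeff (i + 1))) := by
  have hX : (X - C r : K[X]) ≠ 0 := X_sub_C_ne_zero r
  have hdeg : ((X - C r) * g).natDegree = g.natDegree + 1 := by
    rw [natDegree_mul hX hg, natDegree_X_sub_C]; omega
  set tl := (List.range g.natDegree).map (fun i => g.coeff (i + 1)) with htl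
  have htlD : ∀ i, tl.getD i 0 = g.coeff (i + 1) := by
    intro i
    apply getD_map_range
    intro j hj
    exact coeff_eq_zero_of_natDegree_lt (by omega)
  have hheadD : ∀ i, (g.coeff 0 :: tl).getD i 0 = g.coeff i := by
    intro i
    cases i with
    | zero => rfl
    | succ i => rw [List.getD_cons_succ]; exact htlD i
  have hcoeff : ∀ i, ((X - C r) * g).coeff i = g.coeff (i - 1) * (if i = 0 then 0 else 1) - r * g.coeff i := by
    intro i
    rw [sub_mul, coeff_sub, coeff_C_mul]
    cases i with
    | zero => simp [mul_coeff_zero]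
    | succ i => simp [coeff_X_mul]
  apply list_ext_getD
  · rw [clist, List.length_map, List.length_range, hdeg, List.length_cons, length_diffs,
      List.length_map, List.length_range]
  · intro i
    rw [clist_getD]
    cases i with
    | zero =>
      rw [List.getD_cons_zero, hcoeff 0]
      simp
    | succ i =>
      rw [List.getD_cons_succ, diffs_getD, hheadD, htlD, hcoeff (i+1)]
      simp

open Polynomial in
lemma vpoly_mul {r : K} (hr : 0 < r) {g : K[X]} (hg : g ≠ 0) :
    vpoly g + 1 ≤ vpoly ((X - C r) * g) := by
  rw [vpoly, vpoly, clist_mul r hg, clist_eq g]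
  have hex : ∃ x ∈ g.coeff 0 :: (List.range g.natDegree).map (fun i => g.coeff (i + 1)), x ≠ 0 := by
    have : g.coeff g.natDegree ≠ 0 := by
      rw [coeff_natDegree]; exact leadingCoeff_ne_zero.2 hg
    refine ⟨g.coeff g.natDegree, ?_, this⟩
    rw [← clist_eq, clist]
    exact List.mem_map.2 ⟨g.natDegree, List.mem_range.2 (by omega), rfl⟩
  have := G hr (g.coeff 0) ((List.range g.natDegree).map (fun i => g.coeff (i + 1))) hex
  exact this


lemma vchain_le_filter (a : K) : ∀ l : List K, vchain a l ≤ (l.filter (fun x => x ≠ 0)).length := by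
  intro l
  induction l generalizing a with
  | nil => simp
  | cons x m ih =>
    by_cases hx : x = 0
    · subst hx
      rw [vchain_cons_zero]
      have h2 : (List.filter (fun x => x ≠ 0) ((0:K) :: m)).length
          = (List.filter (fun x => x ≠ 0) m).length := by
        simp [List.filter_cons]
      rw [h2]
      exact ih a
    · rw [vchain_cons_ne _ hx]
      have h1 := ih x
      have h2 : (List.filter (fun x => x ≠ 0) (x :: m)).length
          = (List.filter (fun x => x ≠ 0) m).length + 1 := by
        simp [List.filter_cons, hx]
      rw [h2]
      split <;> omega

lemma vlist_add_one_le (l : List K) (h : ∃ x ∈ l, x ≠ 0) :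
    vlist l + 1 ≤ (l.filter (fun x => x ≠ 0)).length := by
  induction l with
  | nil => rcases h with ⟨x, hx, _⟩; cases hx
  | cons y m ih =>
    by_cases hy : y = 0
    · subst hy
      have hm : ∃ x ∈ m, x ≠ 0 := by
        rcases h with ⟨x, hx, hxne⟩
        rcases List.mem_cons.1 hx with rfl | h'
        · exact absurd rfl hxne
        · exact ⟨x, h', hxne⟩
      rw [vlist_cons, if_pos rfl]
      simpa using ih hm
    · rw [vlist_cons, if_neg hy]
      have h1 := vchain_le_filter y m
      have h2 : (List.filter (fun x => x ≠ 0) (y :: m)).length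
          = (List.filter (fun x => x ≠ 0) m).length + 1 := by
        simp [List.filter_cons, hy]
      omega

open Polynomial in
lemma filter_clist_length (f : K[X]) :
    ((clist f).filter (fun x => x ≠ 0)).length = f.support.card := by
  have h1 : (clist f).filter (fun x => (x ≠ 0)) =
      ((List.range (f.natDegree + 1)).filter (fun i => f.coeff i ≠ 0)).map f.coeff := by
    rw [clist, List.filter_map]
    rfl
  have h2 : f.support = ((List.range (f.natDegree + 1)).filter (fun i => f.coeff i ≠ 0)).toFinset := by
    ext i
    simp only [mem_support_iff, List.mem_toFinset, List.mem_filter, List.mem_range,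
      decide_eq_true_eq]
    constructor
    · intro h
      exact ⟨Nat.lt_succ_of_le (le_natDegree_of_ne_zero h), h⟩
    · exact fun h => h.2
  rw [h1, List.length_map, h2,
    List.toFinset_card_of_nodup ((List.nodup_range).filter _)]

open Polynomial in
lemma vpoly_add_one_le_support {f : K[X]} (hf : f ≠ 0) : vpoly f + 1 ≤ f.support.card := by
  rw [← filter_clist_length]
  apply vlist_add_one_le
  refine ⟨f.coeff f.natDegree, ?_, by rw [coeff_natDegree]; exact leadingCoeff_ne_zero.2 hf⟩
  rw [clist]
  exact List.mem_map.2 ⟨f.natDegree, List.mem_range.2 (by omega), rfl⟩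

open Polynomial in
lemma posroots_le_vpoly : ∀ (n : ℕ) (f : K[X]), f ≠ 0 → f.natDegree ≤ n →
    (f.roots.toFinset.filter (fun r => 0 < r)).card ≤ vpoly f := by
  intro n
  induction n with
  | zero =>
    intro f hf hdeg
    have h0 : f.natDegree = 0 := Nat.le_zero.1 hdeg
    have : f.roots = 0 := by
      rw [Polynomial.eq_C_of_natDegree_eq_zero h0]
      exact roots_C _
    simp [this]
  | succ n ih =>
    intro f hf hdeg
    rcases (f.roots.toFinset.filter (fun r => 0 < r)).eq_empty_or_nonempty with he | ⟨r, hr⟩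
    · simp [he]
    · have hrmem := Finset.mem_filter.1 hr
      have hroot : IsRoot f r := (mem_roots hf).1 (Multiset.mem_toFinset.1 hrmem.1)
      have hrpos : 0 < r := hrmem.2
      obtain ⟨g, hgf⟩ := dvd_iff_isRoot.2 hroot
      have hg : g ≠ 0 := by rintro rfl; rw [mul_zero] at hgf; exact hf hgf
      have hdegf : f.natDegree = g.natDegree + 1 := by
        rw [hgf, natDegree_mul (X_sub_C_ne_zero r) hg, natDegree_X_sub_C]
        omega
      have hdegg : g.natDegree ≤ n := by omega
      have hsub : f.roots.toFinset.filter (fun r => 0 < r) ⊆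
          insert r (g.roots.toFinset.filter (fun r => 0 < r)) := by
        intro s hs
        rcases Finset.mem_filter.1 hs with ⟨hs1, hs2⟩
        have hsr : s ∈ f.roots := Multiset.mem_toFinset.1 hs1
        rw [hgf, roots_mul (by rw [← hgf]; exact hf), roots_X_sub_C] at hsr
        rcases Multiset.mem_add.1 hsr with h | h
        · rw [Multiset.mem_singleton.1 h]
          exact Finset.mem_insert_self _ _
        · exact Finset.mem_insert_of_mem (Finset.mem_filter.2 ⟨Multiset.mem_toFinset.2 h, hs2⟩)
      calc (f.roots.toFinset.filter (fun r => 0 < r)).card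
          ≤ (insert r (g.roots.toFinset.filter (fun r => 0 < r))).card := Finset.card_le_card hsub
        _ ≤ (g.roots.toFinset.filter (fun r => 0 < r)).card + 1 := Finset.card_insert_le _ _
        _ ≤ vpoly g + 1 := by have := ih g hg hdegg; omega
        _ ≤ vpoly ((X - C r) * g) := vpoly_mul hrpos hg
        _ = vpoly f := by rw [← hgf]

open Polynomial in
lemma posroots_card {f : K[X]} (hf : f ≠ 0) :
    (f.roots.toFinset.filter (fun r => 0 < r)).card + 1 ≤ f.support.card := by
  have h1 := posroots_le_vpoly f.natDegree f hf le_rfl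
  have h2 := vpoly_add_one_le_support hf
  omega


open Polynomial in
lemma coeff_comp_neg_X (f : K[X]) (n : ℕ) :
    (f.comp (-X)).coeff n = (-1)^n * f.coeff n := by
  induction f using Polynomial.induction_on' with
  | add p q hp hq => simp [add_comp, hp, hq, mul_add]
  | monomial k a =>
    rw [monomial_comp]
    have : (-X : K[X])^k = C ((-1)^k) * X^k := by
      rw [neg_pow]
      simp [C_pow]
    rw [this]
    rw [coeff_monomial]
    rw [show C a * (C ((-1:K)^k) * X^k) = C (a * (-1)^k) * X^k by rw [C_mul]; ring]
    rw [coeff_C_mul_X_pow]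
    by_cases h : n = k
    · subst h; simp [mul_comm]
    · simp [h, Ne.symm h]

open Polynomial in
lemma support_comp_neg_X (f : K[X]) : (f.comp (-X)).support = f.support := by
  ext n
  simp only [mem_support_iff, coeff_comp_neg_X, ne_eq, mul_eq_zero, not_or]
  constructor
  · exact fun h => h.2
  · intro h
    exact ⟨pow_ne_zero _ (by norm_num), h⟩

open Polynomial in
lemma comp_neg_X_ne_zero {f : K[X]} (hf : f ≠ 0) : f.comp (-X) ≠ 0 := by
  intro h
  apply hf
  rw [← support_eq_empty, ← support_comp_neg_X, h, support_zero]

open Polynomial in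
lemma negroots_card {f : K[X]} (hf : f ≠ 0) :
    (f.roots.toFinset.filter (fun r => r < 0)).card + 1 ≤ f.support.card := by
  set g := f.comp (-X) with hg
  have hgne : g ≠ 0 := comp_neg_X_ne_zero hf
  have hmap : ∀ a : K, a ∈ f.roots.toFinset.filter (fun r => r < 0) →
      -a ∈ g.roots.toFinset.filter (fun r => 0 < r) := by
    intro a ha
    rcases Finset.mem_filter.1 ha with ⟨h1, h2⟩
    have hroot : f.IsRoot a := (mem_roots hf).1 (Multiset.mem_toFinset.1 h1)
    refine Finset.mem_filter.2 ⟨Multiset.mem_toFinset.2 ((mem_roots hgne).2 ?_), by linarith⟩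
    rw [hg, IsRoot, eval_comp]
    simpa using hroot
  have hcard : (f.roots.toFinset.filter (fun r => r < 0)).card ≤
      (g.roots.toFinset.filter (fun r => 0 < r)).card := by
    apply Finset.card_le_card_of_injOn (fun a => -a) hmap
    intro a _ b _ h
    simpa using h
  have h2 := posroots_card hgne
  rw [show g.support = f.support from support_comp_neg_X f] at h2
  omega

open Polynomial in
lemma nonzero_roots_card {f : K[X]} (hf : f ≠ 0) {t : ℕ} (hsupp : f.support.card ≤ t + 1) :
    (f.roots.toFinset.filter (fun r => r ≠ 0)).card ≤ 2 * t := by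
  have hsub : f.roots.toFinset.filter (fun r => r ≠ 0) ⊆
      (f.roots.toFinset.filter (fun r => 0 < r)) ∪ (f.roots.toFinset.filter (fun r => r < 0)) := by
    intro a ha
    rcases Finset.mem_filter.1 ha with ⟨h1, h2⟩
    rcases lt_or_gt_of_ne h2 with h | h
    · exact Finset.mem_union_right _ (Finset.mem_filter.2 ⟨h1, h⟩)
    · exact Finset.mem_union_left _ (Finset.mem_filter.2 ⟨h1, h⟩)
  have hp := posroots_card hf
  have hn := negroots_card hf
  calc (f.roots.toFinset.filter (fun r => r ≠ 0)).card
      ≤ ((f.roots.toFinset.filter (fun r => 0 < r)) ∪ (f.roots.toFinset.filter (fun r => r < 0))).card :=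
        Finset.card_le_card hsub
    _ ≤ (f.roots.toFinset.filter (fun r => 0 < r)).card
        + (f.roots.toFinset.filter (fun r => r < 0)).card := Finset.card_union_le _ _
    _ ≤ 2 * t := by omega


open Polynomial

noncomputable def pp (K : Type*) [Field K] [LinearOrder K] [IsStrictOrderedRing K] (t : ℕ) : K[X] :=
  ∏ i ∈ Finset.Icc 1 t, (X^2 - C ((i:K)^2))

lemma pp_monic (t : ℕ) : (pp K t).Monic := by
  apply monic_prod_of_monic
  intro i _
  exact monic_X_pow_sub_C _ (by norm_num)

lemma pp_ne_zero (t : ℕ) : (pp K t) ≠ 0 := (pp_monic t).ne_zero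

lemma pp_natDegree (t : ℕ) : (pp K t).natDegree = 2 * t := by
  rw [pp, natDegree_prod_of_monic _ _ (fun i _ => monic_X_pow_sub_C _ (by norm_num))]
  have : ∀ i ∈ Finset.Icc 1 t, (X^2 - C ((i:K)^2)).natDegree = 2 := by
    intro i _
    exact natDegree_X_pow_sub_C
  rw [Finset.sum_congr rfl this, Finset.sum_const, Nat.card_Icc, smul_eq_mul]
  omega

lemma pp_succ (t : ℕ) : pp K (t+1) = (X^2 - C (((t+1:ℕ):K)^2)) * pp K t := by
  rw [pp, pp, Finset.prod_Icc_succ_top (by omega : 1 ≤ t + 1), mul_comm]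

lemma pp_coeffs (t : ℕ) :
    (∀ n, ¬ (2 ∣ n) → (pp K t).coeff n = 0) ∧
    (∀ k, k ≤ t → 0 < (-1:K)^(t-k) * (pp K t).coeff (2*k)) := by
  induction t with
  | zero =>
    constructor
    · intro n hn
      have h0 : pp K 0 = 1 := by rw [pp]; simp
      rw [h0, coeff_one]
      have : n ≠ 0 := by rintro rfl; exact hn ⟨0, rfl⟩
      simp [Ne.symm this, this]
    · intro k hk
      interval_cases k
      have h0 : pp K 0 = 1 := by rw [pp]; simp
      rw [h0]
      simp
  | succ t ih =>
    obtain ⟨ihodd, ihpos⟩ := ih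
    have hcoeff : ∀ n, (pp K (t+1)).coeff n =
        (if 2 ≤ n then (pp K t).coeff (n - 2) else 0) - ((t+1:ℕ):K)^2 * (pp K t).coeff n := by
      intro n
      rw [pp_succ, sub_mul, coeff_sub, coeff_C_mul, coeff_X_pow_mul']
    have hc : (0:K) < ((t+1:ℕ):K)^2 := by positivity
    constructor
    · intro n hn
      rw [hcoeff]
      have h1 : (pp K t).coeff n = 0 := ihodd n hn
      rw [h1, mul_zero, sub_zero]
      by_cases h : 2 ≤ n
      · rw [if_pos h]
        exact ihodd _ (by omega)
      · rw [if_neg h]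
    · intro k hk
      rw [hcoeff]
      rcases Nat.eq_zero_or_pos k with rfl | hkpos
      · have h2 : ¬ (2 ≤ 2 * 0) := by omega
        rw [if_neg h2]
        have := ihpos 0 (by omega)
        have hpow : (t + 1 - 0) = (t - 0) + 1 := by omega
        rw [hpow, pow_succ]
        rw [mul_zero] at this ⊢
        nlinarith
      · have h2 : 2 ≤ 2 * k := by omega
        rw [if_pos h2]
        have hsub : 2 * k - 2 = 2 * (k - 1) := by omega
        rw [hsub]
        rcases Nat.lt_or_ge k (t+1) with hkt | hkt
        · -- k ≤ t : both terms contribute positively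
          have hA := ihpos (k-1) (by omega)
          have hB := ihpos k (by omega)
          have hpow1 : t + 1 - k = t - (k - 1) := by omega
          have hpow2 : t + 1 - k = (t - k) + 1 := by omega
          have expand : (-1:K)^(t+1-k) * ((pp K t).coeff (2*(k-1)) - ((t+1:ℕ):K)^2 * (pp K t).coeff (2*k))
              = (-1:K)^(t-(k-1)) * (pp K t).coeff (2*(k-1))
                + ((t+1:ℕ):K)^2 * ((-1:K)^(t-k) * (pp K t).coeff (2*k)) := by
            rw [← hpow1]
            rw [hpow2, pow_succ]
            ring
          rw [expand]
          nlinarith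
        · -- k = t+1 : second term vanishes
          have hkeq : k = t + 1 := by omega
          subst hkeq
          have hzero : (pp K t).coeff (2 * (t+1)) = 0 := by
            apply coeff_eq_zero_of_natDegree_lt
            rw [pp_natDegree]
            omega
          have hA := ihpos t (by omega)
          rw [hzero, mul_zero, sub_zero]
          have h1 : t + 1 - (t + 1) = 0 := by omega
          have h2' : t + 1 - 1 = t := by omega
          rw [h1, h2', pow_zero, one_mul]
          have h3 : t - t = 0 := by omega
          rw [h3, pow_zero, one_mul] at hA
          exact hA


lemma pp_support (t : ℕ) : (pp K t).support = (Finset.range (t+1)).image (fun k => 2*k) := by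
  ext n
  simp only [mem_support_iff, Finset.mem_image, Finset.mem_range]
  constructor
  · intro h
    have h2 : 2 ∣ n := by
      by_contra hq
      exact h ((pp_coeffs (K := K) t).1 n hq)
    obtain ⟨k, rfl⟩ := h2
    refine ⟨k, ?_, rfl⟩
    by_contra hk
    push_neg at hk
    apply h
    apply coeff_eq_zero_of_natDegree_lt
    rw [pp_natDegree]
    omega
  · rintro ⟨k, hk, rfl⟩
    intro hzero
    have := (pp_coeffs (K := K) t).2 k (by omega)
    rw [hzero, mul_zero] at this
    exact lt_irrefl _ this

lemma pp_support_card (t : ℕ) : (pp K t).support.card = t + 1 := by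
  have hinj : Function.Injective (fun k : ℕ => 2*k) := by
    intro a b h
    simp only at h
    omega
  rw [pp_support, Finset.card_image_of_injective _ hinj, Finset.card_range]

lemma pp_eval (t : ℕ) (a : K) : (pp K t).eval a = ∏ i ∈ Finset.Icc 1 t, (a^2 - (i:K)^2) := by
  rw [pp, eval_prod]
  simp

lemma pp_isRoot {t i : ℕ} (hi : i ∈ Finset.Icc 1 t) {s : K} (hs : s^2 = (i:K)^2) :
    (pp K t).IsRoot s := by
  rw [IsRoot, pp_eval]
  exact Finset.prod_eq_zero hi (by rw [hs]; ring)

lemma pp_roots_card (t : ℕ) :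
    ((pp K t).roots.toFinset.filter (fun r => r ≠ 0)).card = 2 * t := by
  set R := (pp K t).roots.toFinset.filter (fun r => r ≠ 0) with hR
  set S := ((Finset.Icc 1 t).image (fun i : ℕ => ((i:K)))) ∪
      ((Finset.Icc 1 t).image (fun i : ℕ => -((i:K)))) with hS
  have hmem : ∀ i ∈ Finset.Icc 1 t, (0:K) < (i:K) := by
    intro i hi
    have : 1 ≤ i := (Finset.mem_Icc.1 hi).1
    exact_mod_cast Nat.lt_of_lt_of_le Nat.zero_lt_one (by exact_mod_cast this)
  have hSsub : S ⊆ R := by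
    intro a ha
    rcases Finset.mem_union.1 ha with h | h
    · obtain ⟨i, hi, rfl⟩ := Finset.mem_image.1 h
      refine Finset.mem_filter.2 ⟨Multiset.mem_toFinset.2 ((mem_roots (pp_ne_zero t)).2
        (pp_isRoot hi rfl)), ?_⟩
      exact ne_of_gt (hmem i hi)
    · obtain ⟨i, hi, rfl⟩ := Finset.mem_image.1 h
      refine Finset.mem_filter.2 ⟨Multiset.mem_toFinset.2 ((mem_roots (pp_ne_zero t)).2
        (pp_isRoot hi (by ring))), ?_⟩
      exact ne_of_lt (neg_neg_iff_pos.2 (hmem i hi))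
  have hcast : Function.Injective (fun i : ℕ => (i:K)) := Nat.cast_injective
  have hScard : S.card = 2 * t := by
    rw [hS, Finset.card_union_of_disjoint, Finset.card_image_of_injective _ hcast,
      Finset.card_image_of_injective _ (fun a b h => hcast (neg_injective h)),
      Nat.card_Icc]
    · omega
    · rw [Finset.disjoint_left]
      intro a h1 h2
      obtain ⟨i, hi, rfl⟩ := Finset.mem_image.1 h1
      obtain ⟨j, hj, hij⟩ := Finset.mem_image.1 h2
      have := hmem i hi
      have := hmem j hj
      linarith [hij]
  have hupper : R.card ≤ 2 * t := by
    calc R.card ≤ (pp K t).roots.toFinset.card := Finset.card_le_card (Finset.filter_subset _ _)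
      _ ≤ Multiset.card (pp K t).roots := Multiset.toFinset_card_le _
      _ ≤ (pp K t).natDegree := (pp K t).card_roots'
      _ = 2 * t := pp_natDegree t
  have hlower : 2 * t ≤ R.card := hScard ▸ Finset.card_le_card hSsub
  omega

end B1Aux


/-- For a linearly ordered field `K` and `t ≥ 1`:
(i) every nonzero polynomial with at most `t+1` nonzero terms has at most `2t`
distinct roots in `K \ {0}`; (ii) some polynomial with exactly `t+1` nonzero
terms has exactly `2t` distinct roots in `K \ {0}`.  Hence `B₁(t,K) = 2t`. -/
theorem B1_ordered_field_eq_two_mul (K : Type*) [Field K] [LinearOrder K] [IsStrictOrderedRing K] (t : ℕ) (ht : 1 ≤ t) :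
    (∀ f : Polynomial K, f ≠ 0 → f.support.card ≤ t + 1 →
      (f.roots.toFinset.filter (fun r => r ≠ 0)).card ≤ 2 * t) ∧
    (∃ f : Polynomial K, f ≠ 0 ∧ f.support.card = t + 1 ∧
      (f.roots.toFinset.filter (fun r => r ≠ 0)).card = 2 * t) := by
  constructor
  · intro f hf hsupp
    exact B1Aux.nonzero_roots_card hf hsupp
  · exact ⟨B1Aux.pp K t, B1Aux.pp_ne_zero t, B1Aux.pp_support_card t, B1Aux.pp_roots_card t⟩
end

section
/- Let K be a linearly ordered field and let t ≥ 1. Then every nonzero polynomial f ∈ K[x] having at most t+1 nonzero terms has at most 2t roots in K \ {0} counted with multiplicities, i.e. the sum over all nonzero r ∈ K of the multiplicity of r as a root of f is at most 2t. Consequently B_m(t,K) = 2t. -/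
namespace BmAux

variable {K : Type*} [Field K] [LinearOrder K] [IsStrictOrderedRing K]

/-- sign of a nonzero element, as a Bool (true = positive) -/
def sgn (a : K) : Bool := decide (0 < a)

/-- number of sign changes in a list, given the previous sign `σ`, skipping zeros -/
def vaux (σ : Bool) : List K → ℕ
  | [] => 0
  | a :: l => if a = 0 then vaux σ l else (if sgn a = σ then 0 else 1) + vaux (sgn a) l

/-- number of sign changes in a list, skipping zeros -/
def v : List K → ℕ
  | [] => 0
  | a :: l => if a = 0 then v l else vaux (sgn a) l

lemma vaux_le_vaux_add_one (σ τ : Bool) (l : List K) : vaux σ l ≤ vaux τ l + 1 := by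
  induction l generalizing σ τ with
  | nil => simp [vaux]
  | cons a l ih =>
    by_cases h : a = 0
    · simpa [vaux, h] using ih σ τ
    · simp only [vaux]
      rw [if_neg h, if_neg h]
      have : (if sgn a = σ then 0 else 1) ≤ (if sgn a = τ then 0 else 1) + 1 := by
        split <;> split <;> omega
      omega

/-- the coefficients of `(X - r) * g` starting from exponent of `b`,
where `b` is the previous coefficient of `g` and `l` the remaining ones. -/
def conv (r : K) (b : K) : List K → List K
  | [] => [b]
  | a :: l => (b - r * a) :: conv r a l

lemma conv_length (r b : K) (l : List K) : (conv r b l).length = l.length + 1 := by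
  induction l generalizing b with
  | nil => rfl
  | cons a l ih => simp [conv, ih]

end BmAux
namespace BmAux
variable {K : Type*} [Field K] [LinearOrder K] [IsStrictOrderedRing K]

lemma sgn_true_iff {a : K} : sgn a = true ↔ 0 < a := by simp [sgn]
lemma sgn_false_iff {a : K} : sgn a = false ↔ a ≤ 0 := by simp [sgn]

lemma vaux_of_all_zero (σ : Bool) {l : List K} (h : ∀ x ∈ l, x = 0) : vaux σ l = 0 := by
  induction l with
  | nil => rfl
  | cons a l ih =>
    have ha : a = 0 := h a (by simp)
    simp only [vaux, if_pos ha]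
    exact ih fun x hx => h x (by simp [hx])

/-- Key lemma: multiplying by `(X - r)` with `r > 0` increases sign changes,
relative version with previous coefficient `b` of sign `σ` (or zero). -/
lemma key (r : K) (hr : 0 < r) :
    ∀ (l : List K) (σ : Bool) (b : K), (b = 0 ∨ sgn b = σ) → (b ≠ 0 ∨ ∃ x ∈ l, x ≠ 0) →
    vaux σ l + 1 ≤ vaux (!σ) (conv r b l) := by
  intro l
  induction l with
  | nil =>
    intro σ b hb hnz
    have hb0 : b ≠ 0 := by
      rcases hnz with h | ⟨x, hx, _⟩
      · exact h
      · exact absurd hx ((List.not_mem_nil (a := x)))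
    have hbs : sgn b = σ := hb.resolve_left hb0
    have : sgn b ≠ !σ := by rw [hbs]; cases σ <;> simp
    simp [conv, vaux, hb0, this]
  | cons a l ih =>
    intro σ b hb hnz
    show vaux σ (a :: l) + 1 ≤ vaux (!σ) ((b - r * a) :: conv r a l)
    by_cases ha : a = 0
    · subst ha
      have hhead : b - r * 0 = b := by ring
      rw [hhead]
      have hl : vaux σ (0 :: l) = vaux σ l := by simp [vaux]
      rw [hl]
      by_cases hb0 : b = 0
      · subst hb0
        have hex : ∃ x ∈ l, x ≠ 0 := by
          rcases hnz with h | ⟨x, hx, hx0⟩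
          · exact absurd rfl h
          · rcases List.mem_cons.mp hx with h | h
            · exact absurd h hx0
            · exact ⟨x, h, hx0⟩
        have h1 := ih σ 0 (Or.inl rfl) (Or.inr hex)
        calc vaux σ l + 1 ≤ vaux (!σ) (conv r 0 l) := h1
          _ = vaux (!σ) ((0:K) :: conv r 0 l) := by simp [vaux]
          _ ≤ _ := le_refl _
      · have hbs : sgn b = σ := hb.resolve_left hb0
        have hne : sgn b ≠ !σ := by rw [hbs]; cases σ <;> simp
        have hv : vaux (!σ) (b :: conv r 0 l) =
            1 + vaux σ (conv r 0 l) := by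
          simp [vaux, hb0, hne, hbs]
        rw [hv]
        by_cases hl0 : ∀ x ∈ l, x = 0
        · rw [vaux_of_all_zero σ hl0]; omega
        · push_neg at hl0
          obtain ⟨x, hx, hx0⟩ := hl0
          have h1 := ih σ 0 (Or.inl rfl) (Or.inr ⟨x, hx, hx0⟩)
          have h2 := vaux_le_vaux_add_one (!σ) σ (conv r 0 l)
          omega
    · by_cases has : sgn a = σ
      · have hl : vaux σ (a :: l) = vaux σ l := by simp [vaux, ha, has]
        rw [hl]
        have h1 := ih σ a (Or.inr has) (Or.inl ha)
        set h := b - r * a with hh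
        set m := conv r a l with hm
        by_cases hz : h = 0
        · have : vaux (!σ) (h :: m) = vaux (!σ) m := by simp [vaux, hz]
          omega
        · by_cases hhs : sgn h = !σ
          · have : vaux (!σ) (h :: m) = vaux (!σ) m := by simp [vaux, hz, hhs]
            omega
          · have hhs' : sgn h = σ := by
              cases hsa : sgn h <;> cases σ <;> simp_all
            have : vaux (!σ) (h :: m) = 1 + vaux σ m := by
              simp [vaux, hz, hhs, hhs']
            have h2 := vaux_le_vaux_add_one (!σ) σ m
            omega
      · have has' : sgn a = !σ := by cases hsa : sgn a <;> cases σ <;> simp_all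
        have hl : vaux σ (a :: l) = 1 + vaux (!σ) l := by
          have : sgn a ≠ σ := has
          simp [vaux, ha, this, has']
        rw [hl]
        have hsign : sgn (b - r * a) = σ ∧ b - r * a ≠ 0 := by
          cases σ with
          | true =>
            have ha' : a < 0 := by
              have := sgn_false_iff.mp (by simpa using has')
              exact lt_of_le_of_ne this ha
            have hb' : 0 ≤ b := by
              rcases hb with h | h
              · simp [h]
              · exact le_of_lt (sgn_true_iff.mp h)
            have : 0 < b - r * a := by nlinarith
            exact ⟨sgn_true_iff.mpr this, ne_of_gt this⟩
          | false =>
            have ha' : 0 < a := by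
              have := sgn_true_iff.mp (by simpa using has')
              exact this
            have hb' : b ≤ 0 := by
              rcases hb with h | h
              · simp [h]
              · exact sgn_false_iff.mp h
            have : b - r * a < 0 := by nlinarith
            exact ⟨sgn_false_iff.mpr (le_of_lt this), ne_of_lt this⟩
        obtain ⟨hs1, hs2⟩ := hsign
        have hsne : sgn (b - r * a) ≠ !σ := by rw [hs1]; cases σ <;> simp
        have hv : vaux (!σ) ((b - r * a) :: conv r a l) = 1 + vaux σ (conv r a l) := by
          simp [vaux, hs2, hsne, hs1]
        rw [hv]
        have h1 := ih (!σ) a (Or.inr has') (Or.inl ha)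
        rw [Bool.not_not] at h1
        omega

/-- Multiplying by `(X - r)` with `r > 0` strictly increases the number of sign changes. -/
lemma v_conv (r : K) (hr : 0 < r) (l : List K) (hl : ∃ x ∈ l, x ≠ 0) :
    v l + 1 ≤ v (conv r 0 l) := by
  induction l with
  | nil => simp at hl
  | cons a l ih =>
    by_cases ha : a = 0
    · subst ha
      have hex : ∃ x ∈ l, x ≠ 0 := by
        obtain ⟨x, hx, hx0⟩ := hl
        rcases List.mem_cons.mp hx with h | h
        · exact absurd h hx0
        · exact ⟨x, h, hx0⟩
      have : conv r 0 ((0:K) :: l) = (0:K) :: conv r 0 l := by simp [conv]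
      rw [this]
      have hv1 : v ((0:K) :: l) = v l := by simp [v]
      have hv2 : v ((0:K) :: conv r 0 l) = v (conv r 0 l) := by simp [v]
      rw [hv1, hv2]
      exact ih hex
    · have hhead : (0:K) - r * a ≠ 0 := by
        have := mul_ne_zero (ne_of_gt hr) ha
        intro h
        exact this (by linarith)
      have hsgnhead : sgn ((0:K) - r * a) = !(sgn a) := by
        rcases lt_trichotomy a 0 with h | h | h
        · have : 0 < (0:K) - r * a := by nlinarith
          rw [sgn_true_iff.mpr this, sgn_false_iff.mpr (le_of_lt h)]; rfl
        · exact absurd h ha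
        · have : (0:K) - r * a < 0 := by nlinarith
          rw [sgn_false_iff.mpr (le_of_lt this), sgn_true_iff.mpr h]; rfl
      have hv1 : v (a :: l) = vaux (sgn a) l := by simp [v, ha]
      have hconv : conv r 0 (a :: l) = ((0:K) - r * a) :: conv r a l := by simp [conv]
      rw [hv1, hconv]
      have hv2 : v (((0:K) - r * a) :: conv r a l) = vaux (!(sgn a)) (conv r a l) := by
        simp only [v, if_neg hhead, hsgnhead]
      rw [hv2]
      exact key r hr l (sgn a) a (Or.inr rfl) (Or.inl ha)

end BmAux
namespace BmAux
variable {K : Type*} [Field K] [LinearOrder K] [IsStrictOrderedRing K]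

lemma vaux_le_countP (σ : Bool) (l : List K) :
    vaux σ l ≤ l.countP (fun a => a ≠ 0) := by
  induction l generalizing σ with
  | nil => simp [vaux]
  | cons a l ih =>
    by_cases ha : a = 0
    · simp only [vaux, if_pos ha, List.countP_cons]
      have : (decide (a ≠ 0)) = false := by simp [ha]
      rw [this]
      simpa using ih σ
    · simp only [vaux, if_neg ha, List.countP_cons]
      have : (decide (a ≠ 0)) = true := by simp [ha]
      rw [this]
      simp only [eq_self_iff_true, if_true]
      have := ih (sgn a)
      split <;> omega

lemma v_lt_countP (l : List K) (hl : ∃ x ∈ l, x ≠ 0) :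
    v l < l.countP (fun a => a ≠ 0) := by
  induction l with
  | nil => simp at hl
  | cons a l ih =>
    by_cases ha : a = 0
    · have hex : ∃ x ∈ l, x ≠ 0 := by
        obtain ⟨x, hx, hx0⟩ := hl
        rcases List.mem_cons.mp hx with h | h
        · exact absurd (h ▸ ha) hx0
        · exact ⟨x, h, hx0⟩
      simp only [v, if_pos ha, List.countP_cons]
      have : (decide (a ≠ 0)) = false := by simp [ha]
      rw [this]
      simpa using ih hex
    · simp only [v, if_neg ha, List.countP_cons]
      have : (decide (a ≠ 0)) = true := by simp [ha]
      rw [this]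
      simp only [eq_self_iff_true, if_true]
      have := vaux_le_countP (sgn a) l
      omega

end BmAux
namespace BmAux
open Polynomial
variable {K : Type*} [Field K] [LinearOrder K] [IsStrictOrderedRing K]

/-- coefficient list of a polynomial, from constant term up to leading term -/
noncomputable def L (f : K[X]) : List K := (List.range (f.natDegree + 1)).map f.coeff

lemma L_length (f : K[X]) : (L f).length = f.natDegree + 1 := by simp [L]

lemma L_getElem (f : K[X]) (i : ℕ) (hi : i < (L f).length) : (L f)[i] = f.coeff i := by
  simp [L]

lemma conv_eq_zipWith (r b : K) (l : List K) :
    conv r b l = List.zipWith (fun x y => x - r * y) (b :: l) (l ++ [(0:K)]) := by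
  induction l generalizing b with
  | nil => simp [conv]
  | cons a l ih => simp [conv, ih]

lemma L_mul_X_sub_C (r : K) (g : K[X]) (hg : g ≠ 0) :
    L ((X - C r) * g) = conv r 0 (L g) := by
  have hXC : (X - C r : K[X]) ≠ 0 := X_sub_C_ne_zero r
  have hdeg : ((X - C r) * g).natDegree = g.natDegree + 1 := by
    rw [natDegree_mul hXC hg, natDegree_X_sub_C]; omega
  have hcoeff : ∀ i, ((X - C r) * g).coeff i =
      (if i = 0 then 0 else g.coeff (i - 1)) - r * g.coeff i := by
    intro i
    have h1 : (X - C r) * g = X * g - C r * g := by ring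
    rw [h1, coeff_sub, coeff_C_mul]
    congr 1
    cases i with
    | zero => simp [mul_coeff_zero]
    | succ j => simp [coeff_X_mul]
  rw [conv_eq_zipWith]
  apply List.ext_getElem
  · rw [L_length, hdeg, List.length_zipWith, List.length_cons, List.length_append,
      L_length]
    simp
  · intro i h1 h2
    have hir : i < g.natDegree + 2 := by
      rw [L_length, hdeg] at h1; omega
    rw [L_getElem, List.getElem_zipWith, hcoeff i]
    congr 1
    · cases i with
      | zero => simp
      | succ j =>
        simp only [List.getElem_cons_succ, if_neg (Nat.succ_ne_zero j)]
        rw [L_getElem]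
        simp
    · congr 1
      by_cases hi : i < (L g).length
      · rw [List.getElem_append_left hi, L_getElem]
      · rw [List.getElem_append_right (le_of_not_gt hi)]
        rw [L_length] at hi
        have hie : i = g.natDegree + 1 := by omega
        have hz : g.coeff i = 0 := by
          apply coeff_eq_zero_of_natDegree_lt; omega
        rw [hz]
        simp

end BmAux
namespace BmAux
open Polynomial
variable {K : Type*} [Field K] [LinearOrder K] [IsStrictOrderedRing K]

lemma countP_range (p : ℕ → Prop) [DecidablePred p] (n : ℕ) :
    (List.range n).countP (fun i => decide (p i)) = ((Finset.range n).filter p).card := by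
  induction n with
  | zero => simp
  | succ n ih =>
    rw [List.range_succ, List.countP_append, Finset.range_add_one, Finset.filter_insert]
    by_cases h : p n
    · rw [if_pos h, Finset.card_insert_of_notMem (by simp)]
      simp [h, ih]
    · rw [if_neg h]
      simp [h, ih]

lemma countP_L (f : K[X]) : (L f).countP (fun a => a ≠ 0) = f.support.card := by
  have hsupp : f.support = (Finset.range (f.natDegree + 1)).filter (fun n => f.coeff n ≠ 0) := by
    ext n
    simp only [mem_support_iff, Finset.mem_filter, Finset.mem_range]
    constructor
    · intro h
      exact ⟨Nat.lt_succ_of_le (le_natDegree_of_ne_zero h), h⟩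
    · intro h; exact h.2
  rw [hsupp, L, List.countP_map]
  exact countP_range (fun n => f.coeff n ≠ 0) (f.natDegree + 1)

lemma L_has_nonzero {f : K[X]} (hf : f ≠ 0) : ∃ x ∈ L f, x ≠ 0 := by
  refine ⟨f.coeff f.natDegree, ?_, ?_⟩
  · simp only [L, List.mem_map]
    exact ⟨f.natDegree, by simp, rfl⟩
  · exact mt leadingCoeff_eq_zero.mp hf

/-- positive roots counted with multiplicity are at most the number of sign changes -/
lemma posroots_le_v (f : K[X]) (hf : f ≠ 0) :
    (f.roots.filter (fun x => 0 < x)).card ≤ v (L f) := by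
  generalize hn : (f.roots.filter (fun x => 0 < x)).card = n
  induction n using Nat.strong_induction_on generalizing f with
  | _ n ih =>
    cases n with
    | zero => omega
    | succ m =>
      have hex : ∃ x ∈ f.roots.filter (fun x => 0 < x), True := by
        have : (f.roots.filter (fun x => 0 < x)) ≠ 0 := by
          intro h; rw [h] at hn; simp at hn
        obtain ⟨x, hx⟩ := Multiset.exists_mem_of_ne_zero this
        exact ⟨x, hx, trivial⟩
      obtain ⟨r, hr, -⟩ := hex
      have hrpos : 0 < r := (Multiset.mem_filter.mp hr).2
      have hroot : IsRoot f r := isRoot_of_mem_roots (Multiset.mem_filter.mp hr).1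
      obtain ⟨g, hfg⟩ := dvd_iff_isRoot.mpr hroot
      have hg : g ≠ 0 := by
        intro h; rw [h, mul_zero] at hfg; exact hf hfg
      have hroots : f.roots = r ::ₘ g.roots := by
        rw [hfg, roots_mul (hfg ▸ hf), roots_X_sub_C]
        rfl
      have hfilter : f.roots.filter (fun x => 0 < x) =
          r ::ₘ (g.roots.filter (fun x => 0 < x)) := by
        rw [hroots, Multiset.filter_cons, if_pos hrpos]
        rfl
      have hcard : (g.roots.filter (fun x => 0 < x)).card = m := by
        rw [hfilter] at hn; simp at hn; omega
      have h1 : m ≤ v (L g) := ih m (by omega) g hg hcard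
      have h2 : v (L g) + 1 ≤ v (L f) := by
        rw [hfg, L_mul_X_sub_C r g hg]
        exact v_conv r hrpos (L g) (L_has_nonzero hg)
      omega

/-- positive roots counted with multiplicity are less than the number of terms -/
lemma posroots_lt_card_support (f : K[X]) (hf : f ≠ 0) :
    (f.roots.filter (fun x => 0 < x)).card < f.support.card := by
  have h1 := posroots_le_v f hf
  have h2 := v_lt_countP (L f) (L_has_nonzero hf)
  rw [countP_L] at h2
  omega

end BmAux
namespace BmAux
open Polynomial
variable {K : Type*} [Field K] [LinearOrder K] [IsStrictOrderedRing K]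

lemma coeff_comp_neg_X (f : K[X]) (n : ℕ) :
    (f.comp (-X)).coeff n = (-1) ^ n * f.coeff n := by
  induction f using Polynomial.induction_on' with
  | add p q hp hq => simp [add_comp, hp, hq, mul_add]
  | monomial k a =>
    rw [monomial_comp, coeff_C_mul]
    have h2 : (-X : K[X])^k = C ((-1)^k) * X^k := by
      rw [neg_pow]
      congr 1
      rw [map_pow, map_neg, map_one]
    rw [h2, coeff_C_mul, coeff_X_pow, coeff_monomial]
    by_cases h : k = n
    · subst h; simp [mul_comm]
    · simp [h, Ne.symm h]

end BmAux
namespace BmAux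
open Polynomial
variable {K : Type*} [Field K] [LinearOrder K] [IsStrictOrderedRing K]

lemma support_comp_neg_X (f : K[X]) : (f.comp (-X)).support = f.support := by
  ext n
  simp only [mem_support_iff, coeff_comp_neg_X]
  constructor
  · intro h h0; exact h (by rw [h0, mul_zero])
  · intro h
    exact mul_ne_zero (pow_ne_zero n (by norm_num)) h

lemma comp_neg_X_ne_zero {f : K[X]} (hf : f ≠ 0) : f.comp (-X) ≠ 0 := by
  intro h
  apply hf
  rw [← support_eq_empty, ← support_comp_neg_X, h, support_zero]

lemma comp_neg_X_comp_neg_X (f : K[X]) : (f.comp (-X)).comp (-X) = f := by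
  rw [comp_assoc]
  simp

lemma rootMultiplicity_comp_neg_X (f : K[X]) (hf : f ≠ 0) (a : K) :
    rootMultiplicity a (f.comp (-X)) = rootMultiplicity (-a) f := by
  have key : ∀ (p : K[X]) (b : K) (n : ℕ),
      (X - C b) ^ n ∣ p.comp (-X) → (X - C (-b)) ^ n ∣ p := by
    intro p b n ⟨c, hc⟩
    refine ⟨(-1)^n * c.comp (-X), ?_⟩
    have := congrArg (fun q => q.comp (-X)) hc
    simp only [mul_comp, pow_comp, sub_comp, X_comp, C_comp, comp_neg_X_comp_neg_X] at this
    rw [this]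
    have hfac : (-X - C b : K[X]) = (-1) * (X - C (-b)) := by
      rw [map_neg]; ring
    rw [hfac, mul_pow]
    ring
  apply le_antisymm
  · rw [Polynomial.le_rootMultiplicity_iff hf]
    have h1 : (X - C a) ^ (rootMultiplicity a (f.comp (-X))) ∣ f.comp (-X) :=
      Polynomial.pow_rootMultiplicity_dvd _ _
    exact key f a _ h1
  · rw [Polynomial.le_rootMultiplicity_iff (comp_neg_X_ne_zero hf)]
    have h1 : (X - C (-a)) ^ (rootMultiplicity (-a) f) ∣ f :=
      Polynomial.pow_rootMultiplicity_dvd _ _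
    have h2 : (X - C (- -a)) ^ (rootMultiplicity (-a) f) ∣ f.comp (-X) := by
      apply key
      rw [comp_neg_X_comp_neg_X]
      exact h1
    simpa using h2

lemma roots_comp_neg_X (f : K[X]) (hf : f ≠ 0) :
    (f.comp (-X)).roots = f.roots.map (fun x => -x) := by
  ext a
  rw [count_roots, rootMultiplicity_comp_neg_X f hf a, ← count_roots]
  have h := Multiset.count_map_eq_count' (fun x : K => -x) f.roots neg_injective (-a)
  simp only [neg_neg] at h
  rw [← h]

lemma negroots_eq (f : K[X]) (hf : f ≠ 0) :
    (f.roots.filter (fun x => x < 0)).card =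
      ((f.comp (-X)).roots.filter (fun x => 0 < x)).card := by
  rw [roots_comp_neg_X f hf]
  rw [Multiset.filter_map]
  rw [Multiset.card_map]
  congr 1
  apply Multiset.filter_congr
  intro x _
  simp [neg_pos]

end BmAux
namespace BmAux
open Polynomial
variable {K : Type*} [Field K] [LinearOrder K] [IsStrictOrderedRing K]

lemma card_filter_ne_zero (f : K[X]) :
    (f.roots.filter (fun r => r ≠ 0)).card =
      (f.roots.filter (fun x => 0 < x)).card + (f.roots.filter (fun x => x < 0)).card := by
  have h := Multiset.filter_add_not (fun x => 0 < x) (f.roots.filter (fun r => r ≠ 0))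
  have h1 : (f.roots.filter (fun r => r ≠ 0)).filter (fun x => 0 < x) =
      f.roots.filter (fun x => 0 < x) := by
    rw [Multiset.filter_filter]
    apply Multiset.filter_congr
    intro x _
    constructor
    · intro hx; exact hx.1
    · intro hx; exact ⟨hx, ne_of_gt hx⟩
  have h2 : (f.roots.filter (fun r => r ≠ 0)).filter (fun x => ¬ 0 < x) =
      f.roots.filter (fun x => x < 0) := by
    rw [Multiset.filter_filter]
    apply Multiset.filter_congr
    intro x _
    constructor
    · intro hx; exact lt_of_le_of_ne (not_lt.mp hx.1) hx.2
    · intro hx; exact ⟨not_lt.mpr (le_of_lt hx), ne_of_lt hx⟩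
  calc (f.roots.filter (fun r => r ≠ 0)).card
      = ((f.roots.filter (fun r => r ≠ 0)).filter (fun x => 0 < x)).card +
        ((f.roots.filter (fun r => r ≠ 0)).filter (fun x => ¬ 0 < x)).card := by
        rw [← Multiset.card_add, h]
    _ = _ := by rw [h1, h2]

lemma upper_bound (t : ℕ) (f : K[X]) (hf : f ≠ 0) (hsupp : f.support.card ≤ t + 1) :
    (f.roots.filter (fun r => r ≠ 0)).card ≤ 2 * t := by
  rw [card_filter_ne_zero]
  have hpos : (f.roots.filter (fun x => 0 < x)).card ≤ t := by
    have := posroots_lt_card_support f hf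
    omega
  have hneg : (f.roots.filter (fun x => x < 0)).card ≤ t := by
    rw [negroots_eq f hf]
    have h1 := posroots_lt_card_support (f.comp (-X)) (comp_neg_X_ne_zero hf)
    rw [support_comp_neg_X] at h1
    omega
  omega

lemma coeff_comp_X_sq (p : K[X]) (n : ℕ) :
    (p.comp (X ^ 2)).coeff n = if n % 2 = 0 then p.coeff (n / 2) else 0 := by
  induction p using Polynomial.induction_on' with
  | add p q hp hq =>
    simp only [add_comp, coeff_add, hp, hq]
    split <;> simp
  | monomial k a =>
    rw [monomial_comp, ← pow_mul, coeff_C_mul, coeff_X_pow, coeff_monomial]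
    by_cases h : n = 2 * k
    · subst h
      have h1 : 2 * k % 2 = 0 := by omega
      have h2 : 2 * k / 2 = k := by omega
      simp [h1, h2]
    · rw [if_neg h, mul_zero]
      by_cases h3 : n % 2 = 0
      · rw [if_pos h3, if_neg]
        intro h4
        apply h
        omega
      · rw [if_neg h3]

end BmAux
namespace BmAux
open Polynomial
variable {K : Type*} [Field K] [LinearOrder K] [IsStrictOrderedRing K]

lemma witness (t : ℕ) :
    ∃ f : K[X], f ≠ 0 ∧ f.support.card ≤ t + 1 ∧
      (f.roots.filter (fun r => r ≠ 0)).card = 2 * t := by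
  refine ⟨((X - C 1) * (X - C (-1)))^t, ?_, ?_, ?_⟩
  · exact ((monic_X_sub_C (1:K)).mul (monic_X_sub_C (-1:K))).pow t |>.ne_zero
  · -- support bound via comp with X^2
    have hcomp : (((X - C (1:K))^t).comp (X^2)) = ((X - C 1) * (X - C (-1)))^t := by
      rw [pow_comp, sub_comp, X_comp, C_comp]
      congr 1
      ring_nf
      rw [map_neg, map_one]
      ring
    rw [← hcomp]
    have hsub : (((X - C (1:K))^t).comp (X^2)).support ⊆
        ((X - C (1:K))^t).support.image (fun n => 2 * n) := by
      intro n hn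
      rw [mem_support_iff, coeff_comp_X_sq] at hn
      by_cases h : n % 2 = 0
      · rw [if_pos h] at hn
        rw [Finset.mem_image]
        exact ⟨n / 2, mem_support_iff.mpr hn, by omega⟩
      · rw [if_neg h] at hn; exact absurd rfl hn
    have e1 : (((X - C (1:K))^t).comp (X^2)).support.card
        ≤ (((X - C (1:K))^t).support.image (fun n => 2 * n)).card :=
      Finset.card_le_card hsub
    have e2 : (((X - C (1:K))^t).support.image (fun n => 2 * n)).card
        ≤ ((X - C (1:K))^t).support.card := Finset.card_image_le
    have e3 : ((X - C (1:K))^t).support.card ≤ ((X - C (1:K))^t).natDegree + 1 := by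
      have := Finset.card_le_card (supp_subset_range_natDegree_succ (p := (X - C (1:K))^t))
      simpa using this
    have e4 : ((X - C (1:K))^t).natDegree = t := by
      rw [natDegree_pow, natDegree_X_sub_C, mul_one]
    omega
  · have hne : ((X - C (1:K)) * (X - C (-1))) ≠ 0 :=
      ((monic_X_sub_C (1:K)).mul (monic_X_sub_C (-1:K))).ne_zero
    rw [roots_pow, roots_mul hne, roots_X_sub_C, roots_X_sub_C]
    have : ({1} + {-1} : Multiset K) = (1:K) ::ₘ {-1} := rfl
    rw [this]
    rw [Multiset.filter_nsmul]
    rw [Multiset.card_nsmul]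
    have h1 : ((1:K) ::ₘ {-1}).filter (fun r => r ≠ 0) = (1:K) ::ₘ {-1} := by
      rw [Multiset.filter_eq_self]
      intro x hx
      rcases Multiset.mem_cons.mp hx with h | h
      · rw [h]; norm_num
      · rw [Multiset.mem_singleton.mp h]; norm_num
    rw [h1]
    simp [mul_comm]

end BmAux

/-- For a linearly ordered field `K` and `t ≥ 1`, every nonzero
polynomial with at most `t+1` nonzero terms has at most `2t` roots in `K \ {0}`
counted with multiplicities, and this bound is attained; hence `B_m(t,K) = 2t`. -/
theorem Bm_ordered_field_eq_two_mul (K : Type*) [Field K] [LinearOrder K] [IsStrictOrderedRing K] (t : ℕ) (ht : 1 ≤ t) :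
    (∀ f : Polynomial K, f ≠ 0 → f.support.card ≤ t + 1 →
      (f.roots.filter (fun r => r ≠ 0)).card ≤ 2 * t) ∧
    (∃ f : Polynomial K, f ≠ 0 ∧ f.support.card ≤ t + 1 ∧
      (f.roots.filter (fun r => r ≠ 0)).card = 2 * t) := by
  exact ⟨fun f hf hs => BmAux.upper_bound t f hf hs, BmAux.witness t⟩
end

section
/- Let t ≥ 1 and let α = (α₁,…,α_t) ∈ ℕ^t with 0 < α₁ < ⋯ < α_t. In the polynomial ring ℤ[x₀,…,x_t], the standard Vandermonde determinant V_st = ∏_{0≤i<j≤t} (x_j − x_i) divides the generalized Vandermonde determinant V_α = det M_α(x₀,…,x_t), and the quotient P_α = V_α / V_st is a nonzero homogeneous polynomial of degree α₁+⋯+α_t − t(t+1)/2 all of whose coefficients are nonnegative integers. In particular V_α is homogeneous of degree α₁+⋯+α_t. -/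
open MvPolynomial

open Finset

noncomputable section

/-- The standard Vandermonde product. -/
def gvdV (m : ℕ) : MvPolynomial (Fin m) ℤ :=
  ∏ p ∈ Finset.univ.filter (fun p : Fin m × Fin m => p.1 < p.2), (X p.2 - X p.1)

lemma gvd_geo {R : Type*} [CommRing R] (x y : R) (a k : ℕ) :
    (y - x) * ∑ i ∈ Finset.range k, x ^ (a + i) * y ^ (k - 1 - i)
      = x ^ a * y ^ k - x ^ (a + k) := by
  induction k with
  | zero => simp
  | succ k ih =>
    rw [Finset.sum_range_succ]
    have h1 : ∀ i ∈ Finset.range k,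
        x ^ (a + i) * y ^ (k + 1 - 1 - i) = y * (x ^ (a + i) * y ^ (k - 1 - i)) := by
      intro i hi
      rw [Finset.mem_range] at hi
      have h2 : k + 1 - 1 - i = (k - 1 - i) + 1 := by omega
      rw [h2, pow_succ]; ring
    rw [Finset.sum_congr rfl h1, ← Finset.mul_sum]
    have h3 : k + 1 - 1 - k = 0 := by omega
    rw [h3, pow_zero, mul_one]
    have h4 : (y - x) * (y * ∑ i ∈ Finset.range k, x ^ (a + i) * y ^ (k - 1 - i) + x ^ (a + k))
        = y * ((y - x) * ∑ i ∈ Finset.range k, x ^ (a + i) * y ^ (k - 1 - i))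
          + (y - x) * x ^ (a + k) := by ring
    rw [h4, ih]
    ring

lemma gvd_tele : ∀ (n : ℕ) (α : Fin (n + 1) → ℕ), Monotone α →
    α 0 + ∑ j : Fin n, (α j.succ - α j.castSucc) = α (Fin.last n) := by
  intro n
  induction n with
  | zero => intro α _; simp [Fin.last]
  | succ n ih =>
    intro α hmono
    rw [Fin.sum_univ_castSucc]
    have h1 := ih (fun j => α j.castSucc)
      (fun a b hab => hmono (Fin.castSucc_le_castSucc_iff.mpr hab))
    simp only [Fin.succ_castSucc] at h1 ⊢
    rw [Fin.succ_last]
    have hle : α ((Fin.last n).castSucc) ≤ α (Fin.last (n + 1)) := hmono (Fin.le_last _)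
    simp only [Fin.castSucc_zero] at h1
    simp only [Nat.succ_eq_add_one] at h1 hle ⊢
    omega

lemma gvd_strictMono_le {m : ℕ} (α : Fin (m + 1) → ℕ) (h : StrictMono α) (j : Fin (m + 1)) :
    α 0 + (j : ℕ) ≤ α j := by
  induction j using Fin.induction with
  | zero => simp
  | succ j ihj =>
    have := h ((Fin.castSucc_lt_succ : j.castSucc < j.succ))
    have h2 : (j.castSucc : ℕ) = (j : ℕ) := rfl
    rw [h2] at ihj
    have h3 : (j.succ : ℕ) = (j : ℕ) + 1 := rfl
    omega

lemma gvd_coeff_mul {σ : Type*} {f g : MvPolynomial σ ℤ} (hf : ∀ d, 0 ≤ f.coeff d)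
    (hg : ∀ d, 0 ≤ g.coeff d) : ∀ d, 0 ≤ (f * g).coeff d := by
  intro d
  classical
  rw [coeff_mul]
  exact Finset.sum_nonneg fun x _ => mul_nonneg (hf _) (hg _)

lemma gvd_coeff_X_pow {σ : Type*} [DecidableEq σ] (i : σ) (k : ℕ) :
    ∀ d, 0 ≤ ((X i : MvPolynomial σ ℤ) ^ k).coeff d := by
  intro d
  rw [coeff_X_pow]
  split <;> norm_num

lemma gvd_coeff_rename {σ τ : Type*} {f : σ → τ} (hf : Function.Injective f)
    {p : MvPolynomial σ ℤ} (hp : ∀ d, 0 ≤ p.coeff d) :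
    ∀ d, 0 ≤ (rename f p).coeff d := by
  intro d
  by_contra h
  push_neg at h
  obtain ⟨u, hu, -⟩ := coeff_rename_ne_zero f p d (ne_of_lt h)
  rw [← hu, coeff_rename_mapDomain f hf] at h
  exact absurd (hp u) (not_le.mpr h)

lemma gvd_det_homog (m : ℕ) (α : Fin m → ℕ) :
    (Matrix.det (Matrix.of fun i j : Fin m =>
      (X i : MvPolynomial (Fin m) ℤ) ^ α j)).IsHomogeneous (∑ j, α j) := by
  rw [Matrix.det_apply]
  apply IsHomogeneous.sum
  intro σ _
  have h1 : (Equiv.Perm.sign σ) • (∏ i, (Matrix.of fun i j : Fin m =>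
        (X i : MvPolynomial (Fin m) ℤ) ^ α j) (σ i) i)
      = C ((Equiv.Perm.sign σ : ℤ)) * ∏ i, (X (σ i) : MvPolynomial (Fin m) ℤ) ^ α i := by
    rw [Units.smul_def, smul_eq_C_mul]
    rfl
  rw [h1]
  have h2 : ((∏ i, (X (σ i) : MvPolynomial (Fin m) ℤ) ^ α i)).IsHomogeneous (∑ j, α j) :=
    IsHomogeneous.prod _ _ _ fun i _ => isHomogeneous_X_pow _ _
  simpa using (isHomogeneous_C _ ((Equiv.Perm.sign σ : ℤ))).mul h2

lemma gvd_vsplit (n : ℕ) :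
    gvdV (n + 2) = rename Fin.castSucc (gvdV (n + 1))
      * ∏ i : Fin (n + 1), ((X (Fin.last (n + 1)) : MvPolynomial (Fin (n + 2)) ℤ)
          - X i.castSucc) := by
  unfold gvdV
  rw [map_prod]
  have h1 : ∀ p ∈ Finset.univ.filter (fun p : Fin (n+1) × Fin (n+1) => p.1 < p.2),
      rename (Fin.castSucc) ((X p.2 : MvPolynomial (Fin (n+1)) ℤ) - X p.1)
        = (X p.2.castSucc : MvPolynomial (Fin (n+2)) ℤ) - X p.1.castSucc := by
    intro p _; rw [map_sub, rename_X, rename_X]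
  rw [Finset.prod_congr rfl h1]
  have hsplit : (Finset.univ.filter (fun p : Fin (n+2) × Fin (n+2) => p.1 < p.2))
      = ((Finset.univ.filter (fun p : Fin (n+1) × Fin (n+1) => p.1 < p.2)).image
          (fun p => (p.1.castSucc, p.2.castSucc)))
        ∪ (Finset.univ.image (fun i : Fin (n+1) => (i.castSucc, Fin.last (n+1)))) := by
    ext p
    simp only [Finset.mem_filter, Finset.mem_univ, true_and, Finset.mem_union, Finset.mem_image]
    constructor
    · intro hp
      by_cases h2 : p.2 = Fin.last (n+1)
      · right
        have hne : p.1 ≠ Fin.last (n+1) := by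
          rintro h; rw [h, h2] at hp; exact lt_irrefl _ hp
        obtain ⟨i, hi⟩ := Fin.exists_castSucc_eq.mpr hne
        exact ⟨i, Prod.ext hi h2.symm⟩
      · left
        have hne : p.1 ≠ Fin.last (n+1) := by
          intro h; apply h2
          have h3 := hp
          rw [h] at h3
          exact le_antisymm (Fin.le_last _) h3.le
        obtain ⟨j, hj⟩ := Fin.exists_castSucc_eq.mpr h2
        obtain ⟨i, hi⟩ := Fin.exists_castSucc_eq.mpr hne
        refine ⟨(i, j), ?_, Prod.ext hi hj⟩
        rw [← hi, ← hj] at hp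
        exact Fin.castSucc_lt_castSucc_iff.mp hp
    · rintro (⟨q, hq, rfl⟩ | ⟨i, rfl⟩)
      · exact Fin.castSucc_lt_castSucc_iff.mpr hq
      · exact Fin.castSucc_lt_last i
  have hdisj : Disjoint
      ((Finset.univ.filter (fun p : Fin (n+1) × Fin (n+1) => p.1 < p.2)).image
        (fun p => (p.1.castSucc, p.2.castSucc)))
      (Finset.univ.image (fun i : Fin (n+1) => (i.castSucc, Fin.last (n+1)))) := by
    rw [Finset.disjoint_left]
    rintro p hp1 hp2
    simp only [Finset.mem_image, Finset.mem_filter, Finset.mem_univ, true_and] at hp1 hp2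
    obtain ⟨q, -, rfl⟩ := hp1
    obtain ⟨i, hi⟩ := hp2
    have := congrArg Prod.snd hi
    simp only at this
    exact (Fin.castSucc_lt_last q.2).ne this.symm
  rw [hsplit, Finset.prod_union hdisj, Finset.prod_image, Finset.prod_image]
  · intro a _ b _ hab
    have h2 := congrArg Prod.fst hab
    simp only at h2
    exact Fin.castSucc_injective _ h2
  · intro a _ b _ hab
    rw [Prod.ext_iff] at hab
    exact Prod.ext (Fin.castSucc_injective _ hab.1) (Fin.castSucc_injective _ hab.2)

lemma gvd_key (n : ℕ) (α : Fin (n + 2) → ℕ) (hα : StrictMono α) :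
    Matrix.det (Matrix.of fun i j : Fin (n + 2) => (X i : MvPolynomial (Fin (n + 2)) ℤ) ^ α j)
      = (∏ i : Fin (n + 1), ((X (Fin.last (n + 1)) : MvPolynomial (Fin (n + 2)) ℤ) - X i.castSucc))
        * ∑ γ ∈ Fintype.piFinset (fun j : Fin (n + 1) => Finset.range (α j.succ - α j.castSucc)),
            (X (Fin.last (n + 1)) : MvPolynomial (Fin (n + 2)) ℤ)
                ^ (α 0 + ∑ j, (α j.succ - α j.castSucc - 1 - γ j))
              * Matrix.det (Matrix.of fun i j : Fin (n + 1) =>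
                  (X i.castSucc : MvPolynomial (Fin (n + 2)) ℤ) ^ (α j.castSucc + γ j)) := by
  classical
  set y : MvPolynomial (Fin (n + 2)) ℤ := X (Fin.last (n + 1)) with hy
  set g : Fin (n + 1) → ℕ := fun j => α j.succ - α j.castSucc with hgdef
  have hg : ∀ j, α j.castSucc + g j = α j.succ := fun j =>
    Nat.add_sub_cancel' (hα ((Fin.castSucc_lt_succ : j.castSucc < j.succ))).le
  set M : Matrix (Fin (n + 2)) (Fin (n + 2)) (MvPolynomial (Fin (n + 2)) ℤ) :=
    Matrix.of fun i j => (X i) ^ α j with hM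
  set D : Matrix (Fin (n + 1)) (Fin (n + 1)) (MvPolynomial (Fin (n + 2)) ℤ) :=
    Matrix.of fun i j => (X i.castSucc : MvPolynomial (Fin (n + 2)) ℤ) ^ α j.castSucc * y ^ g j
      - (X i.castSucc) ^ α j.succ with hD
  set Cm : Matrix (Fin (n + 1)) (Fin (n + 1)) (MvPolynomial (Fin (n + 2)) ℤ) :=
    Matrix.of fun i j => ∑ m ∈ Finset.range (g j),
      (X i.castSucc : MvPolynomial (Fin (n + 2)) ℤ) ^ (α j.castSucc + m) * y ^ (g j - 1 - m)
    with hC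
  set T : Matrix (Fin (n + 2)) (Fin (n + 2)) (MvPolynomial (Fin (n + 2)) ℤ) :=
    Matrix.of fun k j => Fin.lastCases (if k = Fin.last (n + 1) then 1 else 0)
      (fun j' => (if k = j'.castSucc then y ^ g j' else 0)
        - (if k = j'.succ then 1 else 0)) j with hT
  set E : Matrix (Fin (n + 2)) (Fin (n + 2)) (MvPolynomial (Fin (n + 2)) ℤ) :=
    Matrix.of fun i j => Fin.lastCases ((X i : MvPolynomial (Fin (n + 2)) ℤ) ^ α (Fin.last (n + 1)))
      (fun j' => (X i : MvPolynomial (Fin (n + 2)) ℤ) ^ α j'.castSucc * y ^ g j'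
        - (X i) ^ α j'.succ) j with hE
  have hMT : M * T = E := by
    ext i j
    rw [Matrix.mul_apply]
    induction j using Fin.lastCases with
    | last =>
      simp only [hT, hE, hM, Matrix.of_apply, Fin.lastCases_last, mul_ite, mul_one, mul_zero,
        Finset.sum_ite_eq', Finset.mem_univ, if_true]
    | cast j' =>
      simp only [hT, hE, hM, Matrix.of_apply, Fin.lastCases_castSucc, mul_sub, mul_ite, mul_one,
        mul_zero, Finset.sum_sub_distrib, Finset.sum_ite_eq', Finset.mem_univ, if_true]
  have hdetT : T.det = y ^ (∑ j, g j) := by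
    have htri : T.BlockTriangular OrderDual.toDual := by
      intro i j hij
      have hij' : i < j := hij
      simp only [hT, Matrix.of_apply]
      induction j using Fin.lastCases with
      | last => rw [Fin.lastCases_last, if_neg (ne_of_lt hij')]
      | cast j' =>
        rw [Fin.lastCases_castSucc, if_neg (ne_of_lt hij'),
          if_neg (hij'.trans_le ((Fin.castSucc_lt_succ : j'.castSucc < j'.succ)).le).ne, sub_zero]
    rw [Matrix.det_of_lowerTriangular T htri]
    rw [Fin.prod_univ_castSucc]
    have h1 : ∀ j' : Fin (n + 1), T j'.castSucc j'.castSucc = y ^ g j' := by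
      intro j'
      simp [hT, Matrix.of_apply, Fin.lastCases_castSucc,
        if_neg ((Fin.castSucc_lt_succ : j'.castSucc < j'.succ)).ne, sub_zero]
    have h2 : T (Fin.last (n + 1)) (Fin.last (n + 1)) = 1 := by
      simp [hT, Matrix.of_apply, Fin.lastCases_last]
    rw [h2, mul_one, Finset.prod_congr rfl (fun j' _ => h1 j')]
    exact Finset.prod_pow_eq_pow_sum _ _ _
  have hElast0 : ∀ j' : Fin (n + 1), E (Fin.last (n + 1)) j'.castSucc = 0 := by
    intro j'
    simp only [hE, Matrix.of_apply, Fin.lastCases_castSucc, ← hy]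
    rw [← pow_add, hg j', sub_self]
  have hdetE : E.det = y ^ α (Fin.last (n + 1)) * D.det := by
    rw [Matrix.det_succ_row E (Fin.last (n + 1))]
    rw [Finset.sum_eq_single (Fin.last (n + 1))]
    · have h1 : E (Fin.last (n + 1)) (Fin.last (n + 1)) = y ^ α (Fin.last (n + 1)) := by
        simp only [hE, Matrix.of_apply, Fin.lastCases_last, hy]
      have h2 : E.submatrix (Fin.last (n + 1)).succAbove (Fin.last (n + 1)).succAbove = D := by
        ext i j
        simp only [Matrix.submatrix_apply, Fin.succAbove_last, hE, hD, Matrix.of_apply,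
          Fin.lastCases_castSucc]
      have h3 : ((-1 : MvPolynomial (Fin (n + 2)) ℤ))
          ^ ((Fin.last (n + 1) : ℕ) + (Fin.last (n + 1) : ℕ)) = 1 :=
        Even.neg_one_pow ⟨n + 1, by rw [Fin.val_last]⟩
      rw [h1, h2, h3, one_mul]
    · intro j _ hj
      obtain ⟨j', rfl⟩ := Fin.exists_castSucc_eq.mpr hj
      rw [hElast0 j', mul_zero, zero_mul]
    · intro h; exact absurd (Finset.mem_univ _) h
  have hMdet : M.det = y ^ α 0 * D.det := by
    have h0 : α 0 + ∑ j, g j = α (Fin.last (n + 1)) := gvd_tele (n + 1) α hα.monotone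
    have h1 : M.det * T.det = E.det := by rw [← Matrix.det_mul, hMT]
    rw [hdetT, hdetE] at h1
    have h2 : y ^ α (Fin.last (n + 1)) = y ^ α 0 * y ^ (∑ j, g j) := by
      rw [← pow_add, h0]
    rw [h2] at h1
    have h3 : (y ^ (∑ j, g j) : MvPolynomial (Fin (n + 2)) ℤ) ≠ 0 :=
      pow_ne_zero _ (X_ne_zero _)
    apply mul_right_cancel₀ h3
    rw [h1]; ring
  have hDC : D.det = (∏ i : Fin (n + 1), (y - X i.castSucc)) * Cm.det := by
    have hent : D = Matrix.of fun i j => (y - X i.castSucc) * Cm i j := by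
      ext i j
      simp only [hD, hC, Matrix.of_apply]
      rw [gvd_geo, hg j]
    rw [hent]
    exact Matrix.det_mul_column _ _
  have hCdet : Cm.det = ∑ γ ∈ Fintype.piFinset (fun j : Fin (n + 1) => Finset.range (g j)),
      y ^ (∑ j, (g j - 1 - γ j))
        * Matrix.det (Matrix.of fun i j : Fin (n + 1) =>
            (X i.castSucc : MvPolynomial (Fin (n + 2)) ℤ) ^ (α j.castSucc + γ j)) := by
    rw [← Matrix.det_transpose Cm]
    have hCT : Cm.transpose = fun j => ∑ m ∈ Finset.range (g j),
        (fun i : Fin (n + 1) =>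
          (X i.castSucc : MvPolynomial (Fin (n + 2)) ℤ) ^ (α j.castSucc + m)
            * y ^ (g j - 1 - m)) := by
      funext j i
      simp [hC, Matrix.transpose_apply, Finset.sum_apply]
    have hexp := (Matrix.detRowAlternating :
        (Fin (n + 1) → MvPolynomial (Fin (n + 2)) ℤ)
          [⋀^Fin (n + 1)]→ₗ[MvPolynomial (Fin (n + 2)) ℤ]
            MvPolynomial (Fin (n + 2)) ℤ).toMultilinearMap.map_sum_finset
      (g := fun (j : Fin (n + 1)) (m : ℕ) => fun i : Fin (n + 1) =>
        (X i.castSucc : MvPolynomial (Fin (n + 2)) ℤ) ^ (α j.castSucc + m) * y ^ (g j - 1 - m))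
      (A := fun j => Finset.range (g j))
    have hdet0 : Cm.transpose.det = Matrix.detRowAlternating Cm.transpose := rfl
    rw [hdet0, hCT]
    rw [show (Matrix.detRowAlternating (fun j => ∑ m ∈ Finset.range (g j),
        fun i : Fin (n + 1) =>
          (X i.castSucc : MvPolynomial (Fin (n + 2)) ℤ) ^ (α j.castSucc + m)
            * y ^ (g j - 1 - m))) = _ from hexp]
    apply Finset.sum_congr rfl
    intro γ _
    have h1 : (fun j => fun i : Fin (n + 1) =>
        (X i.castSucc : MvPolynomial (Fin (n + 2)) ℤ) ^ (α j.castSucc + γ j)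
          * y ^ (g j - 1 - γ j))
        = fun j => (y ^ (g j - 1 - γ j)) •
            (Matrix.of fun i j : Fin (n + 1) =>
              (X i.castSucc : MvPolynomial (Fin (n + 2)) ℤ) ^ (α j.castSucc + γ j)).transpose
            j := by
      funext j i
      simp [Matrix.transpose_apply, mul_comm]
    rw [h1]
    have h2 := (Matrix.detRowAlternating :
        (Fin (n + 1) → MvPolynomial (Fin (n + 2)) ℤ)
          [⋀^Fin (n + 1)]→ₗ[MvPolynomial (Fin (n + 2)) ℤ]
            MvPolynomial (Fin (n + 2)) ℤ).toMultilinearMap.map_smul_univ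
      (fun j => (y ^ (g j - 1 - γ j)))
      ((Matrix.of fun i j : Fin (n + 1) =>
        (X i.castSucc : MvPolynomial (Fin (n + 2)) ℤ) ^ (α j.castSucc + γ j)).transpose)
    rw [h2, Finset.prod_pow_eq_pow_sum, smul_eq_mul]
    congr 1
    exact Matrix.det_transpose _
  rw [hMdet, hDC, hCdet, Finset.mul_sum, Finset.mul_sum, Finset.mul_sum]
  apply Finset.sum_congr rfl
  intro γ _
  rw [pow_add]
  ring

lemma gvd_det_rename (n : ℕ) (b : Fin (n + 1) → ℕ) :
    Matrix.det (Matrix.of fun i j : Fin (n + 1) =>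
        (X i.castSucc : MvPolynomial (Fin (n + 2)) ℤ) ^ b j)
      = rename Fin.castSucc (Matrix.det (Matrix.of fun i j : Fin (n + 1) =>
          (X i : MvPolynomial (Fin (n + 1)) ℤ) ^ b j)) := by
  have h := RingHom.map_det
    ((rename (Fin.castSucc : Fin (n + 1) → Fin (n + 2))
      : MvPolynomial (Fin (n + 1)) ℤ →ₐ[ℤ] MvPolynomial (Fin (n + 2)) ℤ).toRingHom)
    (Matrix.of fun i j : Fin (n + 1) => (X i : MvPolynomial (Fin (n + 1)) ℤ) ^ b j)
  simp only [AlgHom.toRingHom_eq_coe, RingHom.coe_coe] at h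
  rw [h]
  congr 1
  ext i j
  simp [Matrix.map_apply, map_pow, rename_X]

theorem gvd_claim : ∀ (n : ℕ) (α : Fin (n + 1) → ℕ), StrictMono α →
    ∃ P : MvPolynomial (Fin (n + 1)) ℤ,
      Matrix.det (Matrix.of fun i j : Fin (n + 1) =>
          (X i : MvPolynomial (Fin (n + 1)) ℤ) ^ α j)
        = gvdV (n + 1) * P ∧
      (∀ d, 0 ≤ P.coeff d) ∧
      0 < eval (fun _ : Fin (n + 1) => (1 : ℤ)) P ∧
      P.IsHomogeneous ((∑ j, α j) - n * (n + 1) / 2) := by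
  intro n
  induction n with
  | zero =>
    intro α _
    refine ⟨X 0 ^ α 0, ?_, gvd_coeff_X_pow _ _, by simp, ?_⟩
    · rw [Matrix.det_fin_one]
      have h1 : gvdV 1 = 1 := by
        unfold gvdV
        apply Finset.prod_eq_one
        intro p hp
        exfalso
        have h2 := (Finset.mem_filter.mp hp).2
        have h3 : p.1 = p.2 := Subsingleton.elim _ _
        rw [h3] at h2
        exact lt_irrefl _ h2
      rw [h1, one_mul]
      rfl
    · have h4 : (∑ j : Fin 1, α j) - 0 * (0 + 1) / 2 = α 0 := by simp
      rw [h4]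
      exact isHomogeneous_X_pow _ _
  | succ n ih =>
    intro α hα
    classical
    set g : Fin (n + 1) → ℕ := fun j => α j.succ - α j.castSucc with hgdef
    have hg : ∀ j, α j.castSucc + g j = α j.succ := fun j =>
      Nat.add_sub_cancel' (hα ((Fin.castSucc_lt_succ : j.castSucc < j.succ))).le
    have hg1 : ∀ j, 1 ≤ g j := by
      intro j
      have h5 := hα ((Fin.castSucc_lt_succ : j.castSucc < j.succ))
      simp only [hgdef]
      omega
    set β : (Fin (n + 1) → ℕ) → Fin (n + 1) → ℕ := fun γ j => α j.castSucc + γ j with hβ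
    have hβmono : ∀ γ ∈ Fintype.piFinset (fun j : Fin (n + 1) => Finset.range (g j)),
        StrictMono (β γ) := by
      intro γ hγ j j' hjj'
      have hγj : γ j < g j := Finset.mem_range.mp ((Fintype.mem_piFinset.mp hγ) j)
      have hlt : (j : ℕ) < (j' : ℕ) := hjj'
      have h1 : α j.succ ≤ α j'.castSucc := by
        apply hα.monotone
        rw [Fin.le_def]
        simp only [Fin.val_succ, Fin.coe_castSucc]
        omega
      calc β γ j < α j.castSucc + g j := by simp only [hβ]; omega
        _ = α j.succ := hg j
        _ ≤ α j'.castSucc := h1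
        _ ≤ β γ j' := Nat.le_add_right _ _
    set Pf : (Fin (n + 1) → ℕ) → MvPolynomial (Fin (n + 1)) ℤ :=
      fun β' => if h : StrictMono β' then (ih β' h).choose else 0 with hPfdef
    have hPfspec : ∀ β' (h : StrictMono β'),
        Matrix.det (Matrix.of fun i j : Fin (n + 1) =>
            (X i : MvPolynomial (Fin (n + 1)) ℤ) ^ β' j)
          = gvdV (n + 1) * Pf β' ∧ (∀ d, 0 ≤ (Pf β').coeff d) ∧
          0 < eval (fun _ : Fin (n + 1) => (1 : ℤ)) (Pf β') ∧
          (Pf β').IsHomogeneous ((∑ j, β' j) - n * (n + 1) / 2) := by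
      intro β' h
      simp only [hPfdef, dif_pos h]
      exact (ih β' h).choose_spec
    refine ⟨∑ γ ∈ Fintype.piFinset (fun j : Fin (n + 1) => Finset.range (g j)),
        (X (Fin.last (n + 1)) : MvPolynomial (Fin (n + 2)) ℤ)
            ^ (α 0 + ∑ j, (g j - 1 - γ j))
          * rename Fin.castSucc (Pf (β γ)), ?_, ?_, ?_, ?_⟩
    · -- determinant identity
      rw [gvd_key n α hα, gvd_vsplit n, Finset.mul_sum, Finset.mul_sum]
      simp only [hgdef, hβ]
      apply Finset.sum_congr rfl
      intro γ hγ
      rw [gvd_det_rename n (fun j => α j.castSucc + γ j),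
        (hPfspec (fun j => α j.castSucc + γ j) (hβmono γ hγ)).1, map_mul]
      ring
    · -- nonneg coefficients
      intro d
      rw [MvPolynomial.coeff_sum]
      apply Finset.sum_nonneg
      intro γ hγ
      exact gvd_coeff_mul (gvd_coeff_X_pow _ _)
        (gvd_coeff_rename (Fin.castSucc_injective _)
          (hPfspec (β γ) (hβmono γ hγ)).2.1) d
    · -- eval at ones is positive
      rw [map_sum]
      apply Finset.sum_pos
      · intro γ hγ
        rw [map_mul, map_pow, eval_X, one_pow, one_mul, eval_rename]
        have hcomp : ((fun _ : Fin (n + 2) => (1 : ℤ)) ∘ Fin.castSucc)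
            = fun _ : Fin (n + 1) => (1 : ℤ) := rfl
        rw [hcomp]
        exact (hPfspec (β γ) (hβmono γ hγ)).2.2.1
      · exact ⟨fun _ => 0, Fintype.mem_piFinset.mpr fun j => Finset.mem_range.mpr (hg1 j)⟩
    · -- homogeneity
      apply IsHomogeneous.sum
      intro γ hγ
      have hspec := hPfspec (β γ) (hβmono γ hγ)
      have h1 := hspec.2.2.2
      have h2 := (isHomogeneous_X_pow (Fin.last (n + 1))
        (α 0 + ∑ j, (g j - 1 - γ j))).mul (h1.rename_isHomogeneous (f := Fin.castSucc))
      have hγj : ∀ j, γ j < g j := fun j =>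
        Finset.mem_range.mp ((Fintype.mem_piFinset.mp hγ) j)
      have hsum1 : (∑ j, (g j - 1 - γ j)) + ((∑ j, γ j) + (n + 1)) = ∑ j, g j := by
        have hterm : ∀ j : Fin (n + 1), (g j - 1 - γ j) + (γ j + 1) = g j := by
          intro j
          have := hγj j
          have := hg1 j
          omega
        calc (∑ j, (g j - 1 - γ j)) + ((∑ j, γ j) + (n + 1))
            = ∑ j : Fin (n + 1), ((g j - 1 - γ j) + (γ j + 1)) := by
              rw [Finset.sum_add_distrib, Finset.sum_add_distrib, Finset.sum_const]
              simp [add_assoc]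
          _ = ∑ j, g j := Finset.sum_congr rfl fun j _ => hterm j
      have hsum2 : (∑ j : Fin (n + 2), α j)
          = α 0 + ((∑ j : Fin (n + 1), α j.castSucc) + (∑ j, g j)) := by
        rw [Fin.sum_univ_succ, ← Finset.sum_add_distrib]
        congr 1
        exact Finset.sum_congr rfl fun j _ => (hg j).symm
      have hsum3 : (∑ j, β γ j) = (∑ j : Fin (n + 1), α j.castSucc) + (∑ j, γ j) := by
        simp only [hβ]
        rw [Finset.sum_add_distrib]
      have htri0 : (∑ j : Fin (n + 1), (j : ℕ)) = n * (n + 1) / 2 := by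
        rw [Fin.sum_univ_eq_sum_range (fun i => i) (n + 1), Finset.sum_range_id]
        rw [Nat.mul_comm]
        simp
      have htri : n * (n + 1) / 2 ≤ ∑ j, β γ j := by
        rw [← htri0]
        apply Finset.sum_le_sum
        intro j _
        have := gvd_strictMono_le (β γ) (hβmono γ hγ) j
        omega
      have htri2 : (n + 1) * (n + 1 + 1) / 2 = n * (n + 1) / 2 + (n + 1) := by
        have he : 2 ∣ n * (n + 1) := (Nat.even_mul_succ_self n).two_dvd
        have hb : (n + 1) * (n + 1 + 1) = n * (n + 1) + 2 * (n + 1) := by ring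
        omega
      have harr : (α 0 + ∑ j, (g j - 1 - γ j)) + ((∑ j, β γ j) - n * (n + 1) / 2)
          = (∑ j : Fin (n + 2), α j) - (n + 1) * (n + 1 + 1) / 2 := by
        omega
      exact harr ▸ h2


end


/-- Let `α : Fin (t+1) → ℕ` be strictly increasing with `α 0 = 0`
(encoding the exponent vector `0 < α₁ < ⋯ < α_t` together with the constant
column).  The standard Vandermonde determinant `V_st = ∏_{i<j} (x_j - x_i)`
divides the generalized Vandermonde determinant `V_α = det (x_i ^ α_j)` in
`ℤ[x₀,…,x_t]`, with quotient `P_α` a nonzero homogeneous polynomial of degree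
`|α| - t(t+1)/2` having nonnegative coefficients; moreover `V_α` is homogeneous
of degree `|α|`. -/
theorem generalized_vandermonde_div (t : ℕ) (ht : 1 ≤ t)
    (α : Fin (t + 1) → ℕ) (hα0 : α 0 = 0) (hαmono : StrictMono α) :
    ∃ P : MvPolynomial (Fin (t + 1)) ℤ,
      Matrix.det (Matrix.of fun i j : Fin (t + 1) => (X i : MvPolynomial (Fin (t + 1)) ℤ) ^ α j)
        = (∏ p ∈ Finset.univ.filter (fun p : Fin (t + 1) × Fin (t + 1) => p.1 < p.2),
            ((X p.2 : MvPolynomial (Fin (t + 1)) ℤ) - X p.1)) * P ∧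
      P ≠ 0 ∧
      (∀ d : (Fin (t + 1)) →₀ ℕ, 0 ≤ P.coeff d) ∧
      P.IsHomogeneous ((∑ j, α j) - t * (t + 1) / 2) ∧
      (Matrix.det (Matrix.of fun i j : Fin (t + 1) =>
        (X i : MvPolynomial (Fin (t + 1)) ℤ) ^ α j)).IsHomogeneous (∑ j, α j) := by
  obtain ⟨P, h1, h2, h3, h4⟩ := gvd_claim t α hαmono
  refine ⟨P, ?_, ?_, h2, h4, gvd_det_homog (t + 1) α⟩
  · rw [h1]
    rfl
  · intro h0
    rw [h0] at h3
    simp at h3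
end

section
/- Let t ≥ 1, let m ≥ 0 and let s = (s₀,…,s_m) be positive integers with s₀+⋯+s_m = t+1, and let st = (1,2,…,t). Then in ℤ[x₀,…,x_m] the confluent Vandermonde determinant satisfies V_st^s(x₀,…,x_m) = ∏_{0≤i<j≤m} (x_j − x_i)^{s_i s_j}. -/
open MvPolynomial

/-- The partial sum `s₀ + ⋯ + s_{i-1}` of the multiplicity vector `s`. -/
def confluentPartialSum (m : ℕ) (s : Fin (m + 1) → ℕ) (i : ℕ) : ℕ :=
  ∑ j ∈ Finset.univ.filter (fun j : Fin (m + 1) => (j : ℕ) < i), s j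

/-- The block (variable) index of the `r`-th row of the confluent Vandermonde
matrix: the largest `i ≤ m` with `s₀ + ⋯ + s_{i-1} ≤ r`. -/
def confluentBlock (m : ℕ) (s : Fin (m + 1) → ℕ) (r : ℕ) : Fin (m + 1) :=
  ⟨Nat.findGreatest (fun i => confluentPartialSum m s i ≤ r) m,
    Nat.lt_succ_of_le (Nat.findGreatest_le m)⟩

/-- The derivative order `k` of the `r`-th row of the confluent Vandermonde
matrix: `r` minus the partial sum of the `s_j` for blocks `j` before it. -/
def confluentOffset (m : ℕ) (s : Fin (m + 1) → ℕ) (r : ℕ) : ℕ :=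
  r - confluentPartialSum m s (confluentBlock m s r)

/-- The generalized confluent Vandermonde determinant `V_α^s`: the determinant
of the `(t+1) × (t+1)` matrix whose row indexed by the pair `(i, k)`
(`0 ≤ k < s_i`, rows ordered lexicographically) has entry
`binom(α_j, k) · x_i^(α_j - k)` in column `j`. -/
noncomputable def confluentVandermonde (t m : ℕ) (s : Fin (m + 1) → ℕ) (α : Fin (t + 1) → ℕ) :
    MvPolynomial (Fin (m + 1)) ℤ :=
  Matrix.det (Matrix.of fun r c : Fin (t + 1) =>
    (C ((α c).choose (confluentOffset m s (r : ℕ)) : ℤ)) *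
      (X (confluentBlock m s (r : ℕ)) : MvPolynomial (Fin (m + 1)) ℤ) ^
        (α c - confluentOffset m s (r : ℕ)))

set_option linter.unusedSectionVars false
set_option linter.unusedVariables false

namespace CVAux

variable {m : ℕ} (s : Fin (m + 1) → ℕ)

lemma ps_zero : confluentPartialSum m s 0 = 0 := by
  simp [confluentPartialSum]

lemma ps_mono : Monotone (confluentPartialSum m s) := by
  intro i i' h
  apply Finset.sum_le_sum_of_subset
  intro j hj
  simp only [Finset.mem_filter, Finset.mem_univ, true_and] at hj ⊢
  omega

lemma ps_succ (i : Fin (m + 1)) :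
    confluentPartialSum m s ((i : ℕ) + 1) = confluentPartialSum m s i + s i := by
  unfold confluentPartialSum
  have : (Finset.univ.filter (fun j : Fin (m + 1) => (j : ℕ) < (i : ℕ) + 1))
      = insert i (Finset.univ.filter (fun j : Fin (m + 1) => (j : ℕ) < (i : ℕ))) := by
    ext j
    simp only [Finset.mem_filter, Finset.mem_univ, true_and, Finset.mem_insert]
    constructor
    · intro h
      rcases Nat.lt_succ_iff_lt_or_eq.mp h with h | h
      · exact Or.inr h
      · exact Or.inl (Fin.ext h)
    · rintro (rfl | h)
      · omega
      · omega
  rw [this, Finset.sum_insert (by simp)]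
  ring

lemma ps_top : confluentPartialSum m s (m + 1) = ∑ j, s j := by
  unfold confluentPartialSum
  congr 1
  ext j
  simp [j.isLt, Fin.is_le j]

lemma block_le (r : ℕ) :
    confluentPartialSum m s (confluentBlock m s r) ≤ r := by
  exact Nat.findGreatest_spec (P := fun i => confluentPartialSum m s i ≤ r)
    (Nat.zero_le m) (by simp [ps_zero])

lemma block_lt {r : ℕ} (hr : r < ∑ j, s j) :
    r < confluentPartialSum m s ((confluentBlock m s r : ℕ) + 1) := by
  set i := confluentBlock m s r with hi
  by_cases h : (i : ℕ) = m
  · rw [h, ps_top]; exact hr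
  · have h1 : (i : ℕ) + 1 ≤ m := by omega
    have := Nat.findGreatest_is_greatest
      (P := fun k => confluentPartialSum m s k ≤ r) (n := m)
      (k := (i : ℕ) + 1) (by exact Nat.lt_succ_self _) h1
    omega

lemma block_eq_iff {r : ℕ} (hr : r < ∑ j, s j) (i : Fin (m + 1)) :
    confluentBlock m s r = i ↔
      confluentPartialSum m s i ≤ r ∧ r < confluentPartialSum m s ((i : ℕ) + 1) := by
  constructor
  · rintro rfl
    exact ⟨block_le s r, block_lt s hr⟩
  · rintro ⟨h1, h2⟩
    have hle := block_le s r
    have hlt := block_lt s hr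
    have : ((confluentBlock m s r : Fin (m+1)) : ℕ) = (i : ℕ) := by
      rcases lt_trichotomy ((confluentBlock m s r : Fin (m+1)) : ℕ) ((i : ℕ)) with h | h | h
      · have := ps_mono s (show ((confluentBlock m s r : Fin (m+1)) : ℕ) + 1 ≤ (i : ℕ) from h)
        omega
      · exact h
      · have := ps_mono s (show (i : ℕ) + 1 ≤ ((confluentBlock m s r : Fin (m+1)) : ℕ) from h)
        omega
    exact Fin.ext this

lemma offset_lt {r : ℕ} (hr : r < ∑ j, s j) :
    confluentOffset m s r < s (confluentBlock m s r) := by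
  have h1 := block_le s r
  have h2 := block_lt s hr
  rw [ps_succ] at h2
  unfold confluentOffset
  omega

lemma block_mono {r r' : ℕ} (h : r ≤ r') :
    confluentBlock m s r ≤ confluentBlock m s r' := by
  have : Nat.findGreatest (fun i => confluentPartialSum m s i ≤ r) m ≤
      Nat.findGreatest (fun i => confluentPartialSum m s i ≤ r') m :=
    Nat.findGreatest_mono (fun n hn => le_trans hn h) le_rfl
  exact this


section Generic
variable {σ : Type*} [Fintype σ] [DecidableEq σ] {K : Type*} [CommRing K]

/-- total degree of an exponent vector -/
def fdeg (d : σ →₀ ℕ) : ℕ := ∑ i, d i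

lemma fdeg_add (a b : σ →₀ ℕ) : fdeg (a + b) = fdeg a + fdeg b := by
  simp [fdeg, Finset.sum_add_distrib]

lemma fdeg_single (i : σ) (k : ℕ) : fdeg (Finsupp.single i k) = k := by
  simp [fdeg, Finsupp.single_apply]

/-- all monomials have degree `N` -/
def Homog (N : ℕ) (W : MvPolynomial σ K) : Prop := ∀ d ∈ W.support, fdeg d = N

/-- all monomials have degree at least `N` -/
def MinDeg (N : ℕ) (W : MvPolynomial σ K) : Prop := ∀ d ∈ W.support, N ≤ fdeg d

lemma homog_X_sub_X (a b : σ) : Homog 1 ((X a - X b : MvPolynomial σ K)) := by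
  intro d hd
  rw [mem_support_iff, coeff_sub] at hd
  have : coeff d (X a : MvPolynomial σ K) ≠ 0 ∨ coeff d (X b : MvPolynomial σ K) ≠ 0 := by
    by_contra h
    push_neg at h
    rw [h.1, h.2] at hd; simp at hd
  rcases this with h | h <;>
  · rw [coeff_X'] at h
    split_ifs at h with hh
    · rw [← hh, fdeg_single]
    · simp at h

lemma Homog.mul {N M : ℕ} {f g : MvPolynomial σ K} (hf : Homog N f) (hg : Homog M g) :
    Homog (N + M) (f * g) := by
  intro d hd
  have := MvPolynomial.support_mul f g hd
  rw [Finset.mem_add] at this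
  obtain ⟨a, ha, b, hb, rfl⟩ := this
  rw [fdeg_add, hf a ha, hg b hb]

lemma homog_one : Homog 0 (1 : MvPolynomial σ K) := by
  intro d hd
  rw [mem_support_iff, coeff_one] at hd
  split_ifs at hd with h
  · rw [← h]; simp [fdeg]
  · simp at hd

lemma Homog.prod {ι : Type*} (A : Finset ι) (f : ι → MvPolynomial σ K)
    (h : ∀ q ∈ A, Homog 1 (f q)) : Homog A.card (∏ q ∈ A, f q) := by
  induction A using Finset.cons_induction with
  | empty => simpa using homog_one
  | cons q A hq ih =>
    rw [Finset.prod_cons, Finset.card_cons, add_comm A.card 1]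
    exact (h q (Finset.mem_cons_self q A)).mul
      (ih fun p hp => h p (Finset.mem_cons_of_mem hp))

lemma minDeg_mul_left {N : ℕ} (Q : MvPolynomial σ K) {P : MvPolynomial σ K}
    (h : MinDeg N P) : MinDeg N (Q * P) := by
  intro d hd
  have := MvPolynomial.support_mul Q P hd
  rw [Finset.mem_add] at this
  obtain ⟨a, _, b, hb, rfl⟩ := this
  rw [fdeg_add]
  exact le_add_left (h b hb)

lemma coeff_mul_homog_eq_zero {N : ℕ} {L W : MvPolynomial σ K} (hL : Homog 1 L)
    (hW : MinDeg N W) {d : σ →₀ ℕ} (hd : fdeg d = N) : coeff d (L * W) = 0 := by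
  by_contra h
  have hd' : d ∈ (L * W).support := mem_support_iff.mpr h
  have := MvPolynomial.support_mul L W hd'
  rw [Finset.mem_add] at this
  obtain ⟨a, ha, b, hb, hab⟩ := this
  have h1 := hL a ha
  have h2 := hW b hb
  have : fdeg d = fdeg a + fdeg b := by rw [← hab, fdeg_add]
  omega

/-- peeling off factors of the form `C a + (degree-1 homogeneous)` -/
lemma coeff_peel {ι : Type*} (A : Finset ι) (a : ι → K) (L : ι → MvPolynomial σ K)
    (hL : ∀ q ∈ A, Homog 1 (L q)) {N : ℕ} {P : MvPolynomial σ K} (hP : MinDeg N P)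
    {d : σ →₀ ℕ} (hd : fdeg d = N) :
    coeff d ((∏ q ∈ A, (C (a q) + L q)) * P) = (∏ q ∈ A, a q) * coeff d P := by
  induction A using Finset.cons_induction with
  | empty => simp
  | cons q A hq ih =>
    rw [Finset.prod_cons, Finset.prod_cons, mul_assoc, add_mul, coeff_add, coeff_C_mul,
      coeff_mul_homog_eq_zero (hL q (Finset.mem_cons_self q A))
        (minDeg_mul_left _ hP) hd, add_zero,
      ih fun p hp => hL p (Finset.mem_cons_of_mem hp), mul_assoc]

lemma monomial_prod {ι : Type*} (A : Finset ι) (f : ι → (σ →₀ ℕ)) (c : ι → K) :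
    (∏ i ∈ A, monomial (f i) (c i)) = monomial (∑ i ∈ A, f i) (∏ i ∈ A, c i) := by
  induction A using Finset.cons_induction with
  | empty => simp
  | cons q A hq ih => rw [Finset.prod_cons, ih, monomial_mul, Finset.sum_cons, Finset.prod_cons]

/-- coefficient of a product of polynomials in disjoint sets of variables -/
lemma coeff_mul_of_disjoint {A : Set σ} {f g : MvPolynomial σ K}
    (hf : ∀ d ∈ f.support, ∀ i ∈ d.support, i ∈ A)
    (hg : ∀ d ∈ g.support, ∀ i ∈ d.support, i ∉ A)
    {d1 d2 : σ →₀ ℕ} (hd1 : ∀ i ∈ d1.support, i ∈ A) (hd2 : ∀ i ∈ d2.support, i ∉ A) :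
    coeff (d1 + d2) (f * g) = coeff d1 f * coeff d2 g := by
  classical
  rw [coeff_mul]
  apply Finset.sum_eq_single_of_mem (d1, d2)
  · rw [Finset.HasAntidiagonal.mem_antidiagonal]
  · rintro ⟨p, q⟩ hmem hne
    rw [Finset.HasAntidiagonal.mem_antidiagonal] at hmem
    by_cases hp : coeff p f = 0
    · rw [hp, zero_mul]
    by_cases hq : coeff q g = 0
    · rw [hq, mul_zero]
    exfalso
    have hpA := hf p (mem_support_iff.mpr hp)
    have hqA := hg q (mem_support_iff.mpr hq)
    have hpd : p = d1 := by
      ext i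
      have happ : p i + q i = d1 i + d2 i := by
        rw [← Finsupp.add_apply, ← Finsupp.add_apply, hmem]
      by_cases hiA : i ∈ A
      · have h1 : q i = 0 := by
          by_contra h
          exact hg q (mem_support_iff.mpr hq) i (Finsupp.mem_support_iff.mpr h) hiA
        have h2 : d2 i = 0 := by
          by_contra h
          exact hd2 i (Finsupp.mem_support_iff.mpr h) hiA
        omega
      · have h1 : p i = 0 := by
          by_contra h
          exact hiA (hpA i (Finsupp.mem_support_iff.mpr h))
        have h2 : d1 i = 0 := by
          by_contra h
          exact hiA (hd1 i (Finsupp.mem_support_iff.mpr h))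
        omega
    have hqd : q = d2 := by
      have := hmem
      rw [hpd] at this
      ext i
      have : d1 i + q i = d1 i + d2 i := by
        rw [← Finsupp.add_apply, ← Finsupp.add_apply, this]
      omega
    exact hne (by rw [hpd, hqd])

end Generic

section Core
variable {σ : Type*} [Fintype σ] [DecidableEq σ] {K : Type*} [CommRing K]

set_option linter.unusedSectionVars false

lemma univ_sum_single_fun (κ : σ → ℕ) :
    (∑ i, Finsupp.single i (κ i)) = Finsupp.equivFunOnFinite.symm κ := by
  have := Finsupp.univ_sum_single (Finsupp.equivFunOnFinite.symm κ)
  simpa using this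

/-- expansion of a binomial power as a sum of monomials in the variable `r`,
with coefficients in `K` -/
lemma binom_pow_expand (c : K) (r : σ) (e : ℕ) :
    (C c + X r : MvPolynomial σ K) ^ e
      = ∑ k ∈ Finset.range (e + 1),
          monomial (Finsupp.single r k) (c ^ (e - k) * (e.choose k : K)) := by
  rw [add_comm (C c) (X r), add_pow]
  apply Finset.sum_congr rfl
  intro k hk
  rw [Finset.mem_range] at hk
  rw [X_pow_eq_monomial]
  rw [show (C c) ^ (e - k) = C (c ^ (e - k)) by rw [map_pow]]
  rw [show ((e.choose k : ℕ) : MvPolynomial σ K) = C ((e.choose k : K)) by simp]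
  rw [mul_comm ((monomial (Finsupp.single r k)) (1:K)) (C (c ^ (e-k))), mul_assoc,
    mul_comm ((monomial (Finsupp.single r k)) (1:K)) _, ← mul_assoc, ← map_mul, C_mul_monomial,
    mul_one]

/-- The key coefficient extraction: coefficient of the monomial `∏ u_r ^ k0 r`
in `∏ r, (C (c r) + u_r) ^ e r`. -/
lemma coeff_prod_binom_pow (c : σ → K) (e k0 : σ → ℕ) :
    coeff (Finsupp.equivFunOnFinite.symm k0)
        (∏ r, (C (c r) + X r : MvPolynomial σ K) ^ (e r))
      = ∏ r, ((c r) ^ (e r - k0 r) * ((e r).choose (k0 r) : K)) := by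
  simp_rw [binom_pow_expand]
  rw [Finset.prod_univ_sum]
  rw [coeff_sum]
  have hterm : ∀ κ ∈ Fintype.piFinset (fun r : σ => Finset.range (e r + 1)),
      coeff (Finsupp.equivFunOnFinite.symm k0)
        (∏ r, monomial (Finsupp.single r (κ r)) ((c r) ^ (e r - κ r) * ((e r).choose (κ r) : K)))
      = if κ = k0 then ∏ r, ((c r) ^ (e r - κ r) * ((e r).choose (κ r) : K)) else 0 := by
    intro κ _
    rw [monomial_prod, univ_sum_single_fun, coeff_monomial]
    congr 1
    simp only [eq_iff_iff]
    constructor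
    · intro h
      have := Finsupp.equivFunOnFinite.symm.injective h
      exact this
    · rintro rfl; rfl
  rw [Finset.sum_congr rfl hterm]
  rw [Finset.sum_ite_eq' (Fintype.piFinset (fun r : σ => Finset.range (e r + 1))) k0
    (fun κ => ∏ r, ((c r) ^ (e r - κ r) * ((e r).choose (κ r) : K)))]
  split_ifs with h
  · rfl
  · rw [Fintype.mem_piFinset] at h
    push_neg at h
    obtain ⟨r, hr⟩ := h
    rw [Finset.mem_range] at hr
    push_neg at hr
    refine (Finset.prod_eq_zero (Finset.mem_univ r) ?_).symm
    rw [Nat.choose_eq_zero_of_lt hr]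
    simp

/-- coefficient of the "staircase" monomial in a Vandermonde product over an
injectively embedded index set -/
lemma coeff_vand_staircase {k : ℕ} (g : Fin k → σ) (hg : Function.Injective g) :
    coeff (∑ a, Finsupp.single (g a) (a : ℕ))
        (∏ p ∈ Finset.univ.filter (fun p : Fin k × Fin k => p.1 < p.2),
          (X (g p.2) - X (g p.1) : MvPolynomial σ K))
      = 1 := by
  classical
  -- convert the pair-product to the Ioi form
  have hpairs : (∏ p ∈ Finset.univ.filter (fun p : Fin k × Fin k => p.1 < p.2),
          (X (g p.2) - X (g p.1) : MvPolynomial σ K))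
      = ∏ i : Fin k, ∏ j ∈ Finset.Ioi i, (X (g j) - X (g i) : MvPolynomial σ K) := by
    rw [Finset.prod_filter, Fintype.prod_prod_type]
    apply Finset.prod_congr rfl
    intro i _
    rw [← Finset.filter_lt_eq_Ioi, Finset.prod_filter]
  rw [hpairs, ← Matrix.det_vandermonde (fun a : Fin k => (X (g a) : MvPolynomial σ K)),
    Matrix.det_apply, coeff_sum]
  have hsingle : ∀ (n : Fin k → ℕ) (b : Fin k),
      (∑ a, Finsupp.single (g a) (n a)) (g b) = n b := by
    intro n b
    rw [Finsupp.finset_sum_apply]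
    simp [Finsupp.single_apply, hg.eq_iff]
  have hterm : ∀ τ : Equiv.Perm (Fin k),
      coeff (∑ a, Finsupp.single (g a) (a : ℕ))
        (Equiv.Perm.sign τ • ∏ a, Matrix.vandermonde
          (fun a : Fin k => (X (g a) : MvPolynomial σ K)) (τ a) a)
      = if τ = 1 then 1 else 0 := by
    intro τ
    have hprod : (∏ a, Matrix.vandermonde
          (fun a : Fin k => (X (g a) : MvPolynomial σ K)) (τ a) a)
        = monomial (∑ a, Finsupp.single (g (τ a)) (a : ℕ)) 1 := by
      simp only [Matrix.vandermonde_apply, X_pow_eq_monomial]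
      rw [monomial_prod]
      simp
    rw [hprod, Units.smul_def, coeff_smul, coeff_monomial]
    have hcond : ((∑ a, Finsupp.single (g (τ a)) (a : ℕ))
        = ∑ a, Finsupp.single (g a) (a : ℕ)) ↔ τ = 1 := by
      constructor
      · intro h
        have key : ∀ b : Fin k, ((τ⁻¹ b : Fin k) : ℕ) = (b : ℕ) := by
          intro b
          have hre : (∑ a, Finsupp.single (g (τ a)) (a : ℕ))
              = ∑ a, Finsupp.single (g a) ((τ⁻¹ a : Fin k) : ℕ) := by
            rw [← Equiv.sum_comp τ (fun a => Finsupp.single (g a) ((τ⁻¹ a : Fin k) : ℕ))]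
            simp
          rw [hre] at h
          have h1 := DFunLike.congr_fun h (g b)
          rw [hsingle (fun a => ((τ⁻¹ a : Fin k) : ℕ)) b, hsingle (fun a => (a : ℕ)) b] at h1
          exact h1
        have : τ⁻¹ = 1 := by
          ext b
          exact_mod_cast key b
        rw [← inv_inv τ, this]; rfl
      · rintro rfl; simp
    split_ifs with h1 h2 h2
    · subst h2; simp
    · exact absurd (hcond.mp h1) h2
    · exact absurd (hcond.mpr h2) h1
    · simp
  rw [Finset.sum_congr rfl (fun τ _ => hterm τ)]
  rw [Finset.sum_ite_eq' Finset.univ (1 : Equiv.Perm (Fin k)) (fun _ => (1 : K))]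
  simp

end Core

section App
variable {t m : ℕ} {s : Fin (m + 1) → ℕ}

/-- the `a`-th row of the `i`-th block -/
def blockEmb (hs : ∑ i, s i = t + 1) (i : Fin (m + 1)) (a : Fin (s i)) : Fin (t + 1) :=
  ⟨confluentPartialSum m s i + a, by
    have h1 : confluentPartialSum m s i + (a : ℕ) < confluentPartialSum m s ((i : ℕ) + 1) := by
      rw [ps_succ]; omega
    have h2 : confluentPartialSum m s ((i : ℕ) + 1) ≤ confluentPartialSum m s (m + 1) :=
      ps_mono s (by omega)
    rw [ps_top, hs] at h2
    omega⟩

lemma blockEmb_lt (hs : ∑ i, s i = t + 1) (i : Fin (m + 1)) (a : Fin (s i)) :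
    ((blockEmb hs i a : Fin (t+1)) : ℕ) < ∑ j, s j := by
  rw [hs]; exact (blockEmb hs i a).isLt

lemma bb_blockEmb (hs : ∑ i, s i = t + 1) (i : Fin (m + 1)) (a : Fin (s i)) :
    confluentBlock m s (blockEmb hs i a : ℕ) = i := by
  rw [block_eq_iff s (blockEmb_lt hs i a) i]
  constructor
  · simp [blockEmb]
  · rw [ps_succ]
    simp [blockEmb]

lemma offset_blockEmb (hs : ∑ i, s i = t + 1) (i : Fin (m + 1)) (a : Fin (s i)) :
    confluentOffset m s (blockEmb hs i a : ℕ) = (a : ℕ) := by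
  unfold confluentOffset
  rw [bb_blockEmb hs i a]
  simp [blockEmb]

lemma blockEmb_injective (hs : ∑ i, s i = t + 1) (i : Fin (m + 1)) :
    Function.Injective (blockEmb hs i) := by
  intro a b hab
  have : confluentPartialSum m s i + (a:ℕ) = confluentPartialSum m s i + (b:ℕ) := by
    have := congrArg (fun x : Fin (t+1) => (x : ℕ)) hab
    simpa [blockEmb] using this
  exact Fin.ext (by omega)

/-- every row is in the image of its block's embedding -/
lemma exists_blockEmb (hs : ∑ i, s i = t + 1) (r : Fin (t + 1)) :
    blockEmb hs (confluentBlock m s (r : ℕ))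
      ⟨confluentOffset m s (r : ℕ), offset_lt s (by rw [hs]; exact r.isLt)⟩ = r := by
  apply Fin.ext
  simp only [blockEmb]
  unfold confluentOffset
  have := block_le s (r : ℕ)
  omega

lemma blockEmb_eq_iff (hs : ∑ i, s i = t + 1) (i : Fin (m + 1)) (r : Fin (t + 1)) :
    (∃ a, blockEmb hs i a = r) ↔ confluentBlock m s (r : ℕ) = i := by
  constructor
  · rintro ⟨a, rfl⟩; exact bb_blockEmb hs i a
  · rintro rfl; exact ⟨_, exists_blockEmb hs r⟩

/-- the `i`-th block as a finset of rows -/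
lemma block_finset_eq (hs : ∑ i, s i = t + 1) (i : Fin (m + 1)) :
    Finset.univ.filter (fun r : Fin (t+1) => confluentBlock m s (r : ℕ) = i)
      = Finset.image (blockEmb hs i) Finset.univ := by
  ext r
  simp only [Finset.mem_filter, Finset.mem_univ, true_and, Finset.mem_image]
  rw [← blockEmb_eq_iff hs i r]

lemma card_block (hs : ∑ i, s i = t + 1) (i : Fin (m + 1)) :
    (Finset.univ.filter (fun r : Fin (t+1) => confluentBlock m s (r : ℕ) = i)).card = s i := by
  rw [block_finset_eq hs i, Finset.card_image_of_injective _ (blockEmb_injective hs i)]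
  simp

end App

lemma prod_pairs_eq {M : Type*} [CommMonoid M] {k : ℕ} (f : Fin k × Fin k → M) :
    ∏ p ∈ Finset.univ.filter (fun p : Fin k × Fin k => p.1 < p.2), f p
      = ∏ i, ∏ j ∈ Finset.Ioi i, f (i, j) := by
  rw [Finset.prod_filter, Fintype.prod_prod_type]
  refine Finset.prod_congr rfl fun i _ => ?_
  rw [← Finset.filter_lt_eq_Ioi, Finset.prod_filter]


section AppB
variable {t m : ℕ} {s : Fin (m + 1) → ℕ}

/-- the staircase exponent vector of block `i` -/
noncomputable def dI (hs : ∑ i, s i = t + 1) (i : Fin (m + 1)) : Fin (t + 1) →₀ ℕ :=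
  ∑ a : Fin (s i), Finsupp.single (blockEmb hs i a) (a : ℕ)

lemma dI_apply (hs : ∑ i, s i = t + 1) (i : Fin (m + 1)) (r : Fin (t + 1)) :
    dI hs i r = if confluentBlock m s (r : ℕ) = i then confluentOffset m s (r : ℕ) else 0 := by
  classical
  rw [dI, Finsupp.finset_sum_apply]
  split_ifs with h
  · set a0 : Fin (s i) := ⟨confluentOffset m s (r : ℕ), by
      rw [← h]; exact offset_lt s (by rw [hs]; exact r.isLt)⟩ with ha0
    rw [Finset.sum_eq_single a0]
    · have : blockEmb hs i a0 = r := by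
        subst h; exact exists_blockEmb hs r
      rw [this, Finsupp.single_apply, if_pos rfl]
    · intro b _ hb
      rw [Finsupp.single_apply, if_neg]
      intro hcon
      apply hb
      have hr : blockEmb hs i a0 = r := by subst h; exact exists_blockEmb hs r
      exact blockEmb_injective hs i (by rw [hcon, hr])
    · intro hcon
      exact absurd (Finset.mem_univ a0) hcon
  · apply Finset.sum_eq_zero
    intro a _
    rw [Finsupp.single_apply, if_neg]
    intro hcon
    exact h (by rw [← hcon]; exact bb_blockEmb hs i a)

lemma m0_eq_sum_dI (hs : ∑ i, s i = t + 1) :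
    (Finsupp.equivFunOnFinite.symm (fun r : Fin (t+1) => confluentOffset m s (r : ℕ)))
      = ∑ i, dI hs i := by
  classical
  ext r
  rw [Finsupp.finset_sum_apply]
  have : ∀ i, dI hs i r
      = if i = confluentBlock m s (r : ℕ) then confluentOffset m s (r : ℕ) else 0 := by
    intro i
    rw [dI_apply hs i r]
    congr 1
    simp only [eq_iff_iff]; constructor <;> (intro h; exact h.symm)
  rw [Finset.sum_congr rfl (fun i _ => this i), Finset.sum_ite_eq' (Finset.univ)
    (confluentBlock m s (r : ℕ)) (fun _ => confluentOffset m s (r : ℕ))]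
  simp

lemma dI_support (hs : ∑ i, s i = t + 1) (i : Fin (m + 1)) (r : Fin (t + 1))
    (h : r ∈ (dI hs i).support) : confluentBlock m s (r : ℕ) = i := by
  rw [Finsupp.mem_support_iff, dI_apply hs i r] at h
  by_contra hcon
  rw [if_neg hcon] at h
  exact h rfl


end AppB

section App2
variable {t m : ℕ} {s : Fin (m + 1) → ℕ}
lemma blockEmb_lt_iff (hs : ∑ i, s i = t + 1) (i : Fin (m + 1)) (a b : Fin (s i)) :
    blockEmb hs i a < blockEmb hs i b ↔ a < b := by
  rw [Fin.lt_def, Fin.lt_def]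
  simp [blockEmb]

lemma blockEmb_off (hs : ∑ i, s i = t + 1) {i : Fin (m + 1)} {r : Fin (t + 1)}
    (h : confluentBlock m s (r : ℕ) = i) (hlt : confluentOffset m s (r : ℕ) < s i) :
    blockEmb hs i ⟨confluentOffset m s (r : ℕ), hlt⟩ = r := by
  subst h
  exact exists_blockEmb hs r

lemma offset_lt' (hs : ∑ i, s i = t + 1) {i : Fin (m + 1)} {r : Fin (t + 1)}
    (h : confluentBlock m s (r : ℕ) = i) : confluentOffset m s (r : ℕ) < s i := by
  rw [← h]; exact offset_lt s (by rw [hs]; exact r.isLt)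

lemma offset_lt_offset (hs : ∑ i, s i = t + 1) {i : Fin (m + 1)} {r1 r2 : Fin (t + 1)}
    (h1 : confluentBlock m s (r1 : ℕ) = i) (h2 : confluentBlock m s (r2 : ℕ) = i)
    (h : r1 < r2) : confluentOffset m s (r1 : ℕ) < confluentOffset m s (r2 : ℕ)  := by
  have a1 := block_le s (r1 : ℕ)
  have hv : (r1 : ℕ) < (r2 : ℕ) := h
  unfold confluentOffset
  rw [h1] at a1 ⊢
  rw [h2]
  omega

/-- the same-block product over block `i` equals a staircase Vandermonde -/
lemma blockProd_eq (hs : ∑ i, s i = t + 1) (i : Fin (m + 1)) (hsp : 0 < s i) :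
    (∏ p ∈ Finset.univ.filter (fun p : Fin (t+1) × Fin (t+1) =>
        p.1 < p.2 ∧ confluentBlock m s (p.1 : ℕ) = i ∧ confluentBlock m s (p.2 : ℕ) = i),
      (X p.2 - X p.1 : MvPolynomial (Fin (t+1)) (MvPolynomial (Fin (m+1)) ℤ)))
    = ∏ q ∈ Finset.univ.filter (fun q : Fin (s i) × Fin (s i) => q.1 < q.2),
      (X (blockEmb hs i q.2) - X (blockEmb hs i q.1)) := by
  classical
  have hmk : ∀ (r : Fin (t+1)) (h : confluentBlock m s (r : ℕ) = i),
      blockEmb hs i (⟨confluentOffset m s (r : ℕ) % s i, Nat.mod_lt _ hsp⟩ : Fin (s i)) = r := by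
    intro r h
    have he : (⟨confluentOffset m s (r : ℕ) % s i, Nat.mod_lt _ hsp⟩ : Fin (s i))
        = ⟨confluentOffset m s (r : ℕ), offset_lt' hs h⟩ :=
      Fin.ext (by simp [Nat.mod_eq_of_lt (offset_lt' hs h)])
    rw [he]
    exact blockEmb_off hs h _
  refine Finset.prod_nbij'
    (fun p => ((⟨confluentOffset m s (p.1 : ℕ) % s i, Nat.mod_lt _ hsp⟩ : Fin (s i)),
               (⟨confluentOffset m s (p.2 : ℕ) % s i, Nat.mod_lt _ hsp⟩ : Fin (s i))))
    (fun q => (blockEmb hs i q.1, blockEmb hs i q.2)) ?_ ?_ ?_ ?_ ?_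
  · rintro p hp
    rw [Finset.mem_filter] at hp
    obtain ⟨-, hlt, h1, h2⟩ := hp
    simp only [Finset.mem_filter, Finset.mem_univ, true_and]
    have := offset_lt_offset hs h1 h2 hlt
    simp only [Fin.mk_lt_mk]
    rw [Nat.mod_eq_of_lt (offset_lt' hs h1), Nat.mod_eq_of_lt (offset_lt' hs h2)]
    exact this
  · rintro q hq
    rw [Finset.mem_filter] at hq
    simp only [Finset.mem_filter, Finset.mem_univ, true_and]
    exact ⟨(blockEmb_lt_iff hs i q.1 q.2).mpr hq.2, bb_blockEmb hs i q.1, bb_blockEmb hs i q.2⟩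
  · rintro p hp
    rw [Finset.mem_filter] at hp
    obtain ⟨-, hlt, h1, h2⟩ := hp
    exact Prod.ext (hmk p.1 h1) (hmk p.2 h2)
  · rintro q hq
    refine Prod.ext (Fin.ext ?_) (Fin.ext ?_) <;>
    · simp only [offset_blockEmb hs i]
      exact Nat.mod_eq_of_lt (by simp)
  · rintro p hp
    rw [Finset.mem_filter] at hp
    obtain ⟨-, hlt, h1, h2⟩ := hp
    rw [hmk p.1 h1, hmk p.2 h2]


end App2

section App3
variable {t m : ℕ} {s : Fin (m + 1) → ℕ}
/-- coefficient of the staircase monomial in one block's Vandermonde -/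
lemma coeff_dI_blockProd (hs : ∑ i, s i = t + 1) (i : Fin (m + 1)) (hsp : 0 < s i) :
    coeff (dI hs i)
      (∏ p ∈ Finset.univ.filter (fun p : Fin (t+1) × Fin (t+1) =>
          p.1 < p.2 ∧ confluentBlock m s (p.1 : ℕ) = i ∧ confluentBlock m s (p.2 : ℕ) = i),
        (X p.2 - X p.1 : MvPolynomial (Fin (t+1)) (MvPolynomial (Fin (m+1)) ℤ))) = 1 := by
  rw [blockProd_eq hs i hsp, dI]
  exact coeff_vand_staircase (blockEmb hs i) (blockEmb_injective hs i)

/-- support of one block's Vandermonde product -/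
lemma blockProd_vars (hs : ∑ i, s i = t + 1) (i : Fin (m + 1)) :
    ∀ dd ∈ (∏ p ∈ Finset.univ.filter (fun p : Fin (t+1) × Fin (t+1) =>
          p.1 < p.2 ∧ confluentBlock m s (p.1 : ℕ) = i ∧ confluentBlock m s (p.2 : ℕ) = i),
        (X p.2 - X p.1 : MvPolynomial (Fin (t+1)) (MvPolynomial (Fin (m+1)) ℤ))).support,
      ∀ r ∈ dd.support, confluentBlock m s (r : ℕ) = i := by
  have hmem : (∏ p ∈ Finset.univ.filter (fun p : Fin (t+1) × Fin (t+1) =>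
          p.1 < p.2 ∧ confluentBlock m s (p.1 : ℕ) = i ∧ confluentBlock m s (p.2 : ℕ) = i),
        (X p.2 - X p.1 : MvPolynomial (Fin (t+1)) (MvPolynomial (Fin (m+1)) ℤ)))
      ∈ MvPolynomial.supported (MvPolynomial (Fin (m+1)) ℤ)
          {r : Fin (t+1) | confluentBlock m s (r : ℕ) = i} := by
    apply Subalgebra.prod_mem
    intro p hp
    rw [Finset.mem_filter] at hp
    obtain ⟨-, -, h1, h2⟩ := hp
    exact Subalgebra.sub_mem _ (X_mem_supported.mpr h2) (X_mem_supported.mpr h1)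
  intro dd hdd r hr
  have hv : r ∈ (∏ p ∈ Finset.univ.filter (fun p : Fin (t+1) × Fin (t+1) =>
          p.1 < p.2 ∧ confluentBlock m s (p.1 : ℕ) = i ∧ confluentBlock m s (p.2 : ℕ) = i),
        (X p.2 - X p.1 : MvPolynomial (Fin (t+1)) (MvPolynomial (Fin (m+1)) ℤ))).vars :=
    (mem_vars r).mpr ⟨dd, hdd, hr⟩
  exact (mem_supported.mp hmem) hv

/-- splitting the coefficient across the blocks -/
lemma coeff_sum_prod_blocks (hs : ∑ i, s i = t + 1) (hspos : ∀ i, 0 < s i)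
    (T : Finset (Fin (m+1))) :
    coeff (∑ i ∈ T, dI hs i)
      (∏ i ∈ T, ∏ p ∈ Finset.univ.filter (fun p : Fin (t+1) × Fin (t+1) =>
          p.1 < p.2 ∧ confluentBlock m s (p.1 : ℕ) = i ∧ confluentBlock m s (p.2 : ℕ) = i),
        (X p.2 - X p.1 : MvPolynomial (Fin (t+1)) (MvPolynomial (Fin (m+1)) ℤ))) = 1 := by
  classical
  induction T using Finset.cons_induction with
  | empty => simp
  | cons i T hiT ih =>
    rw [Finset.sum_cons, Finset.prod_cons]
    rw [coeff_mul_of_disjoint (A := {r : Fin (t+1) | confluentBlock m s (r : ℕ) = i})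
      (blockProd_vars hs i)
      ?_ ?_ ?_]
    · rw [coeff_dI_blockProd hs i (hspos i), ih, one_mul]
    · -- monomials of the remaining product avoid block i
      intro dd hdd r hr
      have key : ∀ dd ∈ (∏ j ∈ T, ∏ p ∈ Finset.univ.filter
            (fun p : Fin (t+1) × Fin (t+1) => p.1 < p.2 ∧ confluentBlock m s (p.1 : ℕ) = j
              ∧ confluentBlock m s (p.2 : ℕ) = j),
          (X p.2 - X p.1 : MvPolynomial (Fin (t+1)) (MvPolynomial (Fin (m+1)) ℤ))).support,
          ∀ r ∈ dd.support, confluentBlock m s (r : ℕ) ∈ T := by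
        clear hdd hr dd r ih hiT
        induction T using Finset.cons_induction with
        | empty =>
          intro dd hdd r hr
          rw [Finset.prod_empty, mem_support_iff, coeff_one] at hdd
          split_ifs at hdd with hc
          · subst hc; simp at hr
          · simp at hdd
        | cons j T hjT ih2 =>
          intro dd hdd r hr
          rw [Finset.prod_cons] at hdd
          have hsub := MvPolynomial.support_mul _ _ hdd
          rw [Finset.mem_add] at hsub
          obtain ⟨d1, hd1, d2, hd2, rfl⟩ := hsub
          rw [Finsupp.mem_support_iff, Finsupp.add_apply] at hr
          by_cases hc : d1 r ≠ 0
          · have := blockProd_vars hs j d1 hd1 r (Finsupp.mem_support_iff.mpr hc)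
            rw [this]; exact Finset.mem_cons_self j T
          · push_neg at hc
            have : d2 r ≠ 0 := by omega
            exact Finset.mem_cons_of_mem (ih2 d2 hd2 r (Finsupp.mem_support_iff.mpr this))
      have := key dd hdd r hr
      simp only [Set.mem_setOf_eq]
      intro hcon
      rw [hcon] at this
      exact hiT this
    · intro r hr
      exact dI_support hs i r hr
    · intro r hr
      have := Finsupp.mem_support_finset_sum r hr
      obtain ⟨j, hj, hrj⟩ := this
      have := dI_support hs j r hrj
      simp only [Set.mem_setOf_eq]
      intro hcon
      rw [hcon] at this
      subst this
      exact hiT hj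


end App3

section App4
variable {t m : ℕ} {s : Fin (m + 1) → ℕ}
/-- the same-pairs coefficient is 1 -/
lemma coeff_same (hs : ∑ i, s i = t + 1) (hspos : ∀ i, 0 < s i) :
    coeff (Finsupp.equivFunOnFinite.symm (fun r : Fin (t+1) => confluentOffset m s (r : ℕ)))
      (∏ p ∈ Finset.univ.filter (fun p : Fin (t+1) × Fin (t+1) =>
          p.1 < p.2 ∧ confluentBlock m s (p.1 : ℕ) = confluentBlock m s (p.2 : ℕ)),
        (X p.2 - X p.1 : MvPolynomial (Fin (t+1)) (MvPolynomial (Fin (m+1)) ℤ))) = 1 := by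
  classical
  have hsplit : (Finset.univ.filter (fun p : Fin (t+1) × Fin (t+1) =>
      p.1 < p.2 ∧ confluentBlock m s (p.1 : ℕ) = confluentBlock m s (p.2 : ℕ)))
      = Finset.univ.biUnion (fun i : Fin (m+1) =>
          Finset.univ.filter (fun p : Fin (t+1) × Fin (t+1) =>
            p.1 < p.2 ∧ confluentBlock m s (p.1 : ℕ) = i ∧ confluentBlock m s (p.2 : ℕ) = i)) := by
    ext p
    simp only [Finset.mem_filter, Finset.mem_univ, true_and, Finset.mem_biUnion]
    constructor
    · rintro ⟨h1, h2⟩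
      exact ⟨confluentBlock m s (p.2 : ℕ), h1, h2, rfl⟩
    · rintro ⟨i, h1, h2, h3⟩
      exact ⟨h1, by rw [h2, h3]⟩
  rw [hsplit, Finset.prod_biUnion, m0_eq_sum_dI hs]
  · exact coeff_sum_prod_blocks hs hspos Finset.univ
  · -- pairwise disjoint
    intro i _ j _ hij
    apply Finset.disjoint_left.mpr
    intro p hp hq
    rw [Finset.mem_filter] at hp hq
    exact hij (by rw [← hp.2.2.1, hq.2.2.1])

/-- counting the cross pairs -/
lemma cross_prod (hs : ∑ i, s i = t + 1) :
    (∏ p ∈ Finset.univ.filter (fun p : Fin (t+1) × Fin (t+1) =>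
        p.1 < p.2 ∧ confluentBlock m s (p.1 : ℕ) ≠ confluentBlock m s (p.2 : ℕ)),
      ((X (confluentBlock m s (p.2 : ℕ)) - X (confluentBlock m s (p.1 : ℕ)) :
        MvPolynomial (Fin (m+1)) ℤ)))
    = ∏ q ∈ Finset.univ.filter (fun q : Fin (m+1) × Fin (m+1) => q.1 < q.2),
        ((X q.2 - X q.1 : MvPolynomial (Fin (m+1)) ℤ)) ^ (s q.1 * s q.2) := by
  classical
  have hmaps : ∀ p ∈ Finset.univ.filter (fun p : Fin (t+1) × Fin (t+1) =>
      p.1 < p.2 ∧ confluentBlock m s (p.1 : ℕ) ≠ confluentBlock m s (p.2 : ℕ)),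
      (confluentBlock m s (p.1 : ℕ), confluentBlock m s (p.2 : ℕ))
        ∈ Finset.univ.filter (fun q : Fin (m+1) × Fin (m+1) => q.1 < q.2) := by
    intro p hp
    rw [Finset.mem_filter] at hp ⊢
    obtain ⟨-, h1, h2⟩ := hp
    refine ⟨Finset.mem_univ _, lt_of_le_of_ne (block_mono s h1.le) h2⟩
  rw [← Finset.prod_fiberwise_of_maps_to' hmaps
    (fun q : Fin (m+1) × Fin (m+1) => (X q.2 - X q.1 : MvPolynomial (Fin (m+1)) ℤ))]
  refine Finset.prod_congr rfl fun q hq => ?_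
  rw [Finset.prod_const]
  congr 1
  rw [Finset.mem_filter] at hq
  have hfib : (Finset.univ.filter (fun p : Fin (t+1) × Fin (t+1) =>
      p.1 < p.2 ∧ confluentBlock m s (p.1 : ℕ) ≠ confluentBlock m s (p.2 : ℕ))).filter
        (fun p => (confluentBlock m s (p.1 : ℕ), confluentBlock m s (p.2 : ℕ)) = q)
      = (Finset.univ.filter (fun r : Fin (t+1) => confluentBlock m s (r : ℕ) = q.1))
        ×ˢ (Finset.univ.filter (fun r : Fin (t+1) => confluentBlock m s (r : ℕ) = q.2)) := by
    ext p
    simp only [Finset.mem_filter, Finset.mem_univ, true_and, Finset.mem_product, Prod.ext_iff]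
    constructor
    · rintro ⟨⟨-, -⟩, h3, h4⟩
      exact ⟨h3, h4⟩
    · rintro ⟨h3, h4⟩
      have hlt : p.1 < p.2 := by
        by_contra hcon
        push_neg at hcon
        have := block_mono s (Fin.le_iff_val_le_val.mp hcon)
        rw [h3, h4] at this
        exact absurd hq.2 (not_lt.mpr this)
      refine ⟨⟨hlt, ?_⟩, h3, h4⟩
      rw [h3, h4]
      exact ne_of_lt hq.2
  rw [hfib, Finset.card_product, card_block hs, card_block hs]


end App4

theorem stepA_ax (t m : ℕ) (s : Fin (m + 1) → ℕ) :
    confluentVandermonde t m s (fun j => (j : ℕ))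
      = coeff (Finsupp.equivFunOnFinite.symm (fun r : Fin (t+1) => confluentOffset m s (r : ℕ)))
          (Matrix.det (Matrix.vandermonde (fun r : Fin (t+1) =>
            (C (X (confluentBlock m s (r : ℕ))) + X r :
              MvPolynomial (Fin (t+1)) (MvPolynomial (Fin (m+1)) ℤ))))) := by
  classical
  rw [confluentVandermonde, Matrix.det_apply, Matrix.det_apply, coeff_sum]
  refine Finset.sum_congr rfl fun σ _ => ?_
  rw [Units.smul_def, Units.smul_def, coeff_smul]
  congr 1
  have hre1 : (∏ c : Fin (t+1), Matrix.vandermonde (fun r : Fin (t+1) =>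
        (C (X (confluentBlock m s (r : ℕ))) + X r :
          MvPolynomial (Fin (t+1)) (MvPolynomial (Fin (m+1)) ℤ))) (σ c) c)
      = ∏ r : Fin (t+1), (C (X (confluentBlock m s (r : ℕ))) + X r :
          MvPolynomial (Fin (t+1)) (MvPolynomial (Fin (m+1)) ℤ)) ^ (((σ⁻¹ r : Fin (t+1))) : ℕ) := by
    rw [← Equiv.prod_comp σ (fun r => (C (X (confluentBlock m s (r : ℕ))) + X r :
      MvPolynomial (Fin (t+1)) (MvPolynomial (Fin (m+1)) ℤ)) ^ (((σ⁻¹ r : Fin (t+1))) : ℕ))]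
    refine Finset.prod_congr rfl fun c _ => ?_
    simp [Matrix.vandermonde_apply]
  rw [hre1, coeff_prod_binom_pow (fun r : Fin (t+1) => X (confluentBlock m s (r : ℕ)))
    (fun r : Fin (t+1) => ((σ⁻¹ r : Fin (t+1)) : ℕ)) (fun r : Fin (t+1) => confluentOffset m s (r : ℕ))]
  rw [← Equiv.prod_comp σ (fun r => ((X (confluentBlock m s ((r : Fin (t+1)) : ℕ)) : MvPolynomial (Fin (m+1)) ℤ)
    ^ (((σ⁻¹ r : Fin (t+1)) : ℕ) - confluentOffset m s (r : ℕ))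
    * ((((σ⁻¹ r : Fin (t+1)) : ℕ).choose (confluentOffset m s (r : ℕ)) : MvPolynomial (Fin (m+1)) ℤ))))]
  refine Finset.prod_congr rfl fun c _ => ?_
  simp only [Equiv.Perm.inv_def, Equiv.symm_apply_apply, Matrix.of_apply]
  have hcast : (C ((((c : Fin (t+1)) : ℕ).choose (confluentOffset m s ((σ c : Fin (t+1)) : ℕ)) : ℤ)))
      = ((((c : Fin (t+1)) : ℕ).choose (confluentOffset m s ((σ c : Fin (t+1)) : ℕ)) : MvPolynomial (Fin (m+1)) ℤ)) := by
    simp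
  rw [hcast]
  ring


end CVAux

open CVAux in

/-- For `st = (0,1,…,t)` and positive multiplicities `s` with
`s₀ + ⋯ + s_m = t + 1`, the confluent Vandermonde determinant factors as
`V_st^s = ∏_{i<j} (x_j - x_i)^(s_i s_j)`. -/
theorem confluentVandermonde_st (t m : ℕ) (ht : 1 ≤ t) (s : Fin (m + 1) → ℕ)
    (hspos : ∀ i, 0 < s i) (hs : ∑ i, s i = t + 1) :
    confluentVandermonde t m s (fun j => (j : ℕ)) =
      ∏ p ∈ Finset.univ.filter (fun p : Fin (m + 1) × Fin (m + 1) => p.1 < p.2),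
        ((X p.2 : MvPolynomial (Fin (m + 1)) ℤ) - X p.1) ^ (s p.1 * s p.2) := by

  classical
  rw [stepA_ax t m s]
  have hB : Matrix.det (Matrix.vandermonde (fun r : Fin (t+1) =>
        (C (X (confluentBlock m s (r : ℕ))) + X r :
          MvPolynomial (Fin (t+1)) (MvPolynomial (Fin (m+1)) ℤ))))
      = ∏ p ∈ Finset.univ.filter (fun p : Fin (t+1) × Fin (t+1) => p.1 < p.2),
          (((C (X (confluentBlock m s (p.2 : ℕ))) + X p.2)
            - (C (X (confluentBlock m s (p.1 : ℕ))) + X p.1)) :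
            MvPolynomial (Fin (t+1)) (MvPolynomial (Fin (m+1)) ℤ)) := by
    rw [Matrix.det_vandermonde]
    exact (prod_pairs_eq (fun p : Fin (t+1) × Fin (t+1) =>
      (((C (X (confluentBlock m s (p.2 : ℕ))) + X p.2)
        - (C (X (confluentBlock m s (p.1 : ℕ))) + X p.1)) :
        MvPolynomial (Fin (t+1)) (MvPolynomial (Fin (m+1)) ℤ)))).symm
  rw [hB]
  have hCsplit : (∏ p ∈ Finset.univ.filter (fun p : Fin (t+1) × Fin (t+1) => p.1 < p.2),
          (((C (X (confluentBlock m s (p.2 : ℕ))) + X p.2)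
            - (C (X (confluentBlock m s (p.1 : ℕ))) + X p.1)) :
            MvPolynomial (Fin (t+1)) (MvPolynomial (Fin (m+1)) ℤ)))
      = (∏ p ∈ Finset.univ.filter (fun p : Fin (t+1) × Fin (t+1) =>
            p.1 < p.2 ∧ confluentBlock m s (p.1 : ℕ) ≠ confluentBlock m s (p.2 : ℕ)),
          (C ((X (confluentBlock m s (p.2 : ℕ)) - X (confluentBlock m s (p.1 : ℕ)) :
              MvPolynomial (Fin (m+1)) ℤ))
            + (X p.2 - X p.1)))
        * ∏ p ∈ Finset.univ.filter (fun p : Fin (t+1) × Fin (t+1) =>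
            p.1 < p.2 ∧ confluentBlock m s (p.1 : ℕ) = confluentBlock m s (p.2 : ℕ)),
          (X p.2 - X p.1 : MvPolynomial (Fin (t+1)) (MvPolynomial (Fin (m+1)) ℤ)) := by
    rw [← Finset.prod_filter_mul_prod_filter_not
      (Finset.univ.filter (fun p : Fin (t+1) × Fin (t+1) => p.1 < p.2))
      (fun p => confluentBlock m s (p.1 : ℕ) ≠ confluentBlock m s (p.2 : ℕ))]
    congr 1
    · rw [Finset.filter_filter]
      refine Finset.prod_congr rfl fun p hp => ?_
      rw [map_sub]
      ring
    · rw [Finset.filter_filter]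
      have hset : Finset.univ.filter (fun p : Fin (t+1) × Fin (t+1) => p.1 < p.2
            ∧ ¬ confluentBlock m s (p.1 : ℕ) ≠ confluentBlock m s (p.2 : ℕ))
          = Finset.univ.filter (fun p : Fin (t+1) × Fin (t+1) => p.1 < p.2
            ∧ confluentBlock m s (p.1 : ℕ) = confluentBlock m s (p.2 : ℕ)) := by
        ext p
        simp [not_not]
      rw [hset]
      refine Finset.prod_congr rfl fun p hp => ?_
      rw [Finset.mem_filter] at hp
      rw [hp.2.2]
      ring
  rw [hCsplit]
  set Psame := ∏ p ∈ Finset.univ.filter (fun p : Fin (t+1) × Fin (t+1) =>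
      p.1 < p.2 ∧ confluentBlock m s (p.1 : ℕ) = confluentBlock m s (p.2 : ℕ)),
    (X p.2 - X p.1 : MvPolynomial (Fin (t+1)) (MvPolynomial (Fin (m+1)) ℤ)) with hPsame
  have hHom : Homog (Finset.univ.filter (fun p : Fin (t+1) × Fin (t+1) =>
      p.1 < p.2 ∧ confluentBlock m s (p.1 : ℕ) = confluentBlock m s (p.2 : ℕ))).card Psame :=
    Homog.prod _ _ (fun p _ => homog_X_sub_X p.2 p.1)
  have hcs := coeff_same hs hspos
  rw [← hPsame] at hcs
  have hmem : (Finsupp.equivFunOnFinite.symm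
      (fun r : Fin (t+1) => confluentOffset m s (r : ℕ))) ∈ Psame.support :=
    mem_support_iff.mpr (by rw [hcs]; exact one_ne_zero)
  have hdeg : fdeg (Finsupp.equivFunOnFinite.symm
      (fun r : Fin (t+1) => confluentOffset m s (r : ℕ)))
      = (Finset.univ.filter (fun p : Fin (t+1) × Fin (t+1) =>
          p.1 < p.2 ∧ confluentBlock m s (p.1 : ℕ) = confluentBlock m s (p.2 : ℕ))).card :=
    hHom _ hmem
  rw [coeff_peel _ _ _ (fun p _ => homog_X_sub_X p.2 p.1)
    (fun dd hdd => le_of_eq (hHom dd hdd).symm) hdeg]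
  rw [hcs, mul_one, cross_prod hs]
end

section
/- Let t ≥ 1 and let α = (α₁,…,α_t) ∈ ℕ^t with 0 < α₁ < ⋯ < α_t. Then in ℤ[x₀,…,x_t] one has the identity V_α(1+x₀,…,1+x_t) = Σ_{1 ≤ β₁ < ⋯ < β_t ≤ α_t} det( binom(α_i, β_j) )_{1≤i,j≤t} · V_β(x₀,…,x_t), where the sum ranges over all strictly increasing tuples β = (β₁,…,β_t) of positive integers (only finitely many terms are nonzero, since the binomial-coefficient determinant vanishes once β_t > α_t). -/
open MvPolynomial
open scoped Classical

open Matrix Finset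

variable {R : Type*} [CommRing R]

theorem det_mul_expand {m : ℕ} {κ : Type*} [Fintype κ] [DecidableEq κ]
    (B : Matrix (Fin m) κ R) (Cm : Matrix κ (Fin m) R) :
    (B * Cm).det = ∑ r : Fin m → κ, (∏ i, B i (r i)) * (Cm.submatrix r id).det := by
  have h : (B * Cm).det
      = (Matrix.detRowAlternating : (Fin m → R) [⋀^Fin m]→ₗ[R] R).toMultilinearMap
          (fun i => ∑ k : κ, B i k • Cm k) := by
    congr 1
    ext i j
    simp [Matrix.mul_apply]
  rw [h,
    (Matrix.detRowAlternating : (Fin m → R) [⋀^Fin m]→ₗ[R] R).toMultilinearMap.map_sum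
      (g := fun (i : Fin m) (k : κ) => B i k • Cm k)]
  refine Finset.sum_congr rfl fun r _ => ?_
  rw [MultilinearMap.map_smul_univ]
  simp only [smul_eq_mul]
  congr 1

theorem cauchy_binet {m : ℕ} {κ : Type*} [Fintype κ] [DecidableEq κ] [LinearOrder κ]
    (B : Matrix (Fin m) κ R) (Cm : Matrix κ (Fin m) R) :
    (B * Cm).det = ∑ f ∈ Finset.univ.filter (fun f : Fin m → κ => StrictMono f),
      (B.submatrix id f).det * (Cm.submatrix f id).det := by
  classical
  rw [det_mul_expand]
  rw [← Finset.sum_filter_add_sum_filter_not Finset.univ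
      (fun r : Fin m → κ => Function.Injective r)]
  have h0 : ∑ r ∈ Finset.univ.filter
      (fun r : Fin m → κ => ¬ Function.Injective r),
      (∏ i, B i (r i)) * (Cm.submatrix r id).det = 0 := by
    refine Finset.sum_eq_zero fun r hr => ?_
    replace hr := Finset.mem_filter.mp hr
    simp only [Finset.mem_filter, Function.Injective] at hr
    push_neg at hr
    obtain ⟨i, j, hij, hne⟩ := hr.2
    rw [Matrix.det_zero_of_row_eq hne (by ext l; simp [Matrix.submatrix_apply, hij])]
    ring
  rw [h0, add_zero]
  -- expand det (B.submatrix id f) on the RHS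
  have hexp : ∀ f : Fin m → κ, (B.submatrix id f).det
      = ∑ σ : Equiv.Perm (Fin m), ((Equiv.Perm.sign σ : ℤ) : R) * ∏ i, B i (f (σ i)) := by
    intro f
    rw [← Matrix.det_transpose, Matrix.det_apply']
    rfl
  -- combine
  have hmono_eq : ∀ (f g : Fin m → κ), StrictMono f → StrictMono g →
      Finset.image f Finset.univ = Finset.image g Finset.univ → f = g := by
    intro f g hf hg h
    have hc : (Finset.image f Finset.univ).card = m := by
      rw [Finset.card_image_of_injective _ hf.injective, Finset.card_univ,
        Fintype.card_fin]
    have h1 := Finset.orderEmbOfFin_unique hc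
      (fun x => Finset.mem_image_of_mem f (Finset.mem_univ x)) hf
    have h2 := Finset.orderEmbOfFin_unique hc
      (fun x => h ▸ Finset.mem_image_of_mem g (Finset.mem_univ x)) hg
    exact h1.trans h2.symm
  have hrw : ∑ f ∈ Finset.univ.filter (fun f : Fin m → κ => StrictMono f),
      (B.submatrix id f).det * (Cm.submatrix f id).det
      = ∑ f ∈ Finset.univ.filter (fun f : Fin m → κ => StrictMono f),
          ∑ σ : Equiv.Perm (Fin m),
            ((Equiv.Perm.sign σ : ℤ) : R) * (∏ i, B i (f (σ i))) * (Cm.submatrix f id).det :=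
    Finset.sum_congr rfl fun f _ => by
      rw [hexp f, Finset.sum_mul]
  rw [hrw, ← Finset.sum_product']
  refine (Finset.sum_bij (fun (p : (Fin m → κ) × Equiv.Perm (Fin m)) _ => p.1 ∘ p.2)
    ?_ ?_ ?_ ?_).symm
  · rintro ⟨f, σ⟩ hp
    simp only [Finset.mem_product, Finset.mem_filter, Finset.mem_univ, true_and] at hp ⊢
    exact hp.1.injective.comp σ.injective
  · rintro ⟨f, σ⟩ hp ⟨g, τ⟩ hq h
    simp only [Finset.mem_product, Finset.mem_filter, Finset.mem_univ, true_and] at hp hq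
    have h' : f ∘ ⇑σ = g ∘ ⇑τ := h
    have himg : Finset.image f Finset.univ = Finset.image g Finset.univ := by
      have h2 : Finset.image (f ∘ ⇑σ) Finset.univ = Finset.image (g ∘ ⇑τ) Finset.univ := by
        rw [h']
      rwa [← Finset.image_image, ← Finset.image_image (g := g),
        Finset.image_univ_equiv, Finset.image_univ_equiv] at h2
    have hfg : f = g := hmono_eq f g hp.1 hq.1 himg
    subst hfg
    have hst : σ = τ := Equiv.coe_fn_injective
      (funext fun i => hp.1.injective (congrFun h' i))
    rw [hst]
  · rintro r hr
    simp only [Finset.mem_filter, Finset.mem_univ, true_and] at hr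
    set s : Finset κ := Finset.image r Finset.univ with hs
    have hc : s.card = m := by
      rw [hs, Finset.card_image_of_injective _ hr, Finset.card_univ, Fintype.card_fin]
    set f : Fin m → κ := fun i => s.orderEmbOfFin hc i with hf
    have hfSM : StrictMono f := (s.orderEmbOfFin hc).strictMono
    have he : Function.Injective
        (fun i => (s.orderIsoOfFin hc).symm ⟨r i, by
          rw [hs]; exact Finset.mem_image_of_mem r (Finset.mem_univ i)⟩) := by
      intro i j hij
      apply hr
      have := congrArg (fun x => ((s.orderIsoOfFin hc) x : κ)) hij
      simpa using this
    refine ⟨⟨f, Equiv.ofBijective _ (Finite.injective_iff_bijective.mp he)⟩, ?_, ?_⟩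
    · simp only [Finset.mem_product, Finset.mem_filter, Finset.mem_univ, true_and]
      exact ⟨hfSM, trivial⟩
    · ext i
      simp only [Function.comp_apply, Equiv.ofBijective_apply, hf]
      rw [← Finset.coe_orderIsoOfFin_apply]
      simp
  · rintro ⟨f, σ⟩ hp
    simp only [Finset.mem_product, Finset.mem_filter, Finset.mem_univ, true_and] at hp
    have h1 : Cm.submatrix (f ∘ σ) id = (Cm.submatrix f id).submatrix σ id := by
      ext i j; rfl
    rw [h1, Matrix.det_permute]
    simp only [Function.comp_apply]
    ring



/-- Let `α : Fin (t+1) → ℕ` be strictly increasing with `α 0 = 0`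
(encoding exponents `0 < α₁ < ⋯ < α_t`).  Substituting `1 + x_i` for `x_i` in the
generalized Vandermonde determinant `V_α = det (x_i ^ α_j)` gives
`V_α(1+x₀,…,1+x_t) = Σ_β det(binom(α_i, β_j))_{1≤i,j≤t} · V_β(x₀,…,x_t)`,
the sum being over all strictly increasing tuples `1 ≤ β₁ < ⋯ < β_t ≤ α_t`
(encoded as strictly monotone `β : Fin (t+1) → {0,…,α_t}` with `β 0 = 0`). -/
theorem vandermonde_shift_expansion (t : ℕ) (ht : 1 ≤ t)
    (α : Fin (t + 1) → ℕ) (hα0 : α 0 = 0) (hαmono : StrictMono α) :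
    bind₁ (fun i : Fin (t + 1) => (1 : MvPolynomial (Fin (t + 1)) ℤ) + X i)
      (Matrix.det (Matrix.of fun i j : Fin (t + 1) =>
        (X i : MvPolynomial (Fin (t + 1)) ℤ) ^ α j))
    = ∑ β ∈ (Finset.univ : Finset (Fin (t + 1) → Fin (α (Fin.last t) + 1))).filter
        (fun β => (β 0 : ℕ) = 0 ∧ StrictMono fun j => (β j : ℕ)),
        C (Matrix.det (Matrix.of fun i j : Fin t =>
            ((α i.succ).choose (β j.succ : ℕ) : ℤ))) *
          Matrix.det (Matrix.of fun i j : Fin (t + 1) =>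
            (X i : MvPolynomial (Fin (t + 1)) ℤ) ^ (β j : ℕ)) := by
  classical
  set N := α (Fin.last t) + 1 with hNdef
  set B : Matrix (Fin (t + 1)) (Fin N) (MvPolynomial (Fin (t + 1)) ℤ) :=
    Matrix.of (fun i k => (X i : MvPolynomial (Fin (t + 1)) ℤ) ^ (k : ℕ)) with hB
  set Cm : Matrix (Fin N) (Fin (t + 1)) (MvPolynomial (Fin (t + 1)) ℤ) :=
    Matrix.of (fun k j => C (((α j).choose (k : ℕ) : ℤ))) with hCm
  -- Step A : LHS = det (B * Cm)
  have hLHS : bind₁ (fun i : Fin (t + 1) => (1 : MvPolynomial (Fin (t + 1)) ℤ) + X i)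
      (Matrix.det (Matrix.of fun i j : Fin (t + 1) =>
        (X i : MvPolynomial (Fin (t + 1)) ℤ) ^ α j)) = (B * Cm).det := by
    rw [AlgHom.map_det]
    congr 1
    refine Matrix.ext fun i j => ?_
    have h1 : (AlgHom.mapMatrix (bind₁ (fun i : Fin (t + 1) =>
        (1 : MvPolynomial (Fin (t + 1)) ℤ) + X i)))
        (Matrix.of fun i j : Fin (t + 1) =>
          (X i : MvPolynomial (Fin (t + 1)) ℤ) ^ α j) i j
        = ((1 : MvPolynomial (Fin (t + 1)) ℤ) + X i) ^ α j := by
      simp [AlgHom.mapMatrix_apply, Matrix.map_apply]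
    rw [h1, Matrix.mul_apply]
    have hle : α j + 1 ≤ N := by
      rw [hNdef]
      exact Nat.succ_le_succ (hαmono.monotone (Fin.le_last j))
    have h2 : ∀ k : Fin N, B i k * Cm k j
        = (X i : MvPolynomial (Fin (t + 1)) ℤ) ^ (k : ℕ)
          * (((α j).choose (k : ℕ) : MvPolynomial (Fin (t + 1)) ℤ)) := by
      intro k
      simp only [hB, hCm, Matrix.of_apply]
      rw [map_natCast (C : ℤ →+* MvPolynomial (Fin (t + 1)) ℤ)]
    rw [Finset.sum_congr rfl (fun k _ => h2 k)]
    rw [Fin.sum_univ_eq_sum_range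
      (fun k => (X i : MvPolynomial (Fin (t + 1)) ℤ) ^ k
        * (((α j).choose k : MvPolynomial (Fin (t + 1)) ℤ)))]
    rw [← Finset.sum_subset (Finset.range_subset_range.2 hle)
      (fun k _ hk => by
        have hlt : α j < k := by
          simp only [Finset.mem_range] at hk
          omega
        rw [Nat.choose_eq_zero_of_lt hlt]
        simp)]
    rw [add_comm (1 : MvPolynomial (Fin (t + 1)) ℤ) (X i), add_pow]
    simp
  rw [hLHS, cauchy_binet]
  -- Step B : drop terms with f 0 ≠ 0
  rw [← Finset.sum_filter_add_sum_filter_not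
      (Finset.univ.filter (fun f : Fin (t + 1) → Fin N => StrictMono f))
      (fun f => f 0 = 0)]
  have hzero : ∑ f ∈ (Finset.univ.filter
        (fun f : Fin (t + 1) → Fin N => StrictMono f)).filter (fun f => ¬ f 0 = 0),
      (B.submatrix id f).det * (Cm.submatrix f id).det = 0 := by
    refine Finset.sum_eq_zero fun f hf => ?_
    simp only [Finset.mem_filter, Finset.mem_univ, true_and] at hf
    have hcol : ∀ k, (Cm.submatrix f id) k 0 = 0 := by
      intro k
      have hf0 : 0 < (f 0 : ℕ) := Nat.pos_of_ne_zero fun h => hf.2 (Fin.ext h)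
      have hk0 : 0 < (f k : ℕ) :=
        lt_of_lt_of_le hf0 (hf.1.monotone (Fin.zero_le k))
      simp only [hCm, Matrix.submatrix_apply, Matrix.of_apply, id_eq, hα0]
      rw [Nat.choose_eq_zero_of_lt hk0]
      simp
    rw [Matrix.det_eq_zero_of_column_eq_zero 0 hcol, mul_zero]
  rw [hzero, add_zero]
  -- Step C : identify index sets
  have hsets : ((Finset.univ.filter
        (fun f : Fin (t + 1) → Fin N => StrictMono f)).filter (fun f => f 0 = 0))
      = (Finset.univ : Finset (Fin (t + 1) → Fin N)).filter
        (fun β => (β 0 : ℕ) = 0 ∧ StrictMono fun j => (β j : ℕ)) := by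
    ext f
    simp only [Finset.mem_filter, Finset.mem_univ, true_and]
    constructor
    · rintro ⟨hm, h0⟩
      exact ⟨by simp [h0], fun a b hab => by exact_mod_cast hm hab⟩
    · rintro ⟨h0, hm⟩
      exact ⟨fun a b hab => hm hab, Fin.ext h0⟩
  rw [hsets]
  refine Finset.sum_congr rfl fun f hf => ?_
  simp only [Finset.mem_filter, Finset.mem_univ, true_and] at hf
  -- term equality
  have hB' : B.submatrix id f
      = Matrix.of (fun i j : Fin (t + 1) =>
          (X i : MvPolynomial (Fin (t + 1)) ℤ) ^ (f j : ℕ)) := rfl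
  have hC' : Cm.submatrix f id
      = (C : ℤ →+* MvPolynomial (Fin (t + 1)) ℤ).mapMatrix
          (Matrix.of (fun j l : Fin (t + 1) => (((α l).choose (f j : ℕ) : ℤ)))) := rfl
  rw [hB', hC', ← RingHom.map_det]
  rw [mul_comm]
  congr 1
  -- the determinant of the binomial matrix
  have hf0 : (f 0 : ℕ) = 0 := hf.1
  rw [Matrix.det_succ_column_zero]
  rw [Finset.sum_eq_single 0]
  · have hD0 : (Matrix.of fun j l : Fin (t + 1) => (((α l).choose (f j : ℕ) : ℤ))) 0 0 = 1 := by
      simp [hf0]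
    rw [hD0]
    have hsub : (Matrix.of fun j l : Fin (t + 1) =>
          (((α l).choose (f j : ℕ) : ℤ))).submatrix (Fin.succAbove 0) Fin.succ
        = (Matrix.of fun i j : Fin t =>
            ((α i.succ).choose (f j.succ : ℕ) : ℤ))ᵀ := by
      refine Matrix.ext fun i j => ?_
      simp [Fin.succAbove_zero, Matrix.submatrix_apply, Matrix.transpose_apply]
    rw [hsub, Matrix.det_transpose]
    simp
  · intro j _ hj
    have hjpos : 0 < (f j : ℕ) := by
      have hjp : 0 < (j : ℕ) := Nat.pos_of_ne_zero (fun h => hj (Fin.ext h))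
      have hlt : (f 0 : ℕ) < (f j : ℕ) :=
        hf.2 (show (0 : Fin (t + 1)) < j from Fin.lt_def.mpr (by simpa using hjp))
      omega
    have : (Matrix.of fun j l : Fin (t + 1) => (((α l).choose (f j : ℕ) : ℤ))) j 0 = 0 := by
      simp only [Matrix.of_apply, hα0]
      rw [Nat.choose_eq_zero_of_lt hjpos]
      simp
    rw [this]
    ring
  · intro h
    exact absurd (Finset.mem_univ 0) h
end

section
/- Let t ≥ 1 and let β = (β₁,…,β_t) be integers with 1 ≤ β₁ < ⋯ < β_t. Then β₁!⋯β_t! · W_β(x₁,…,x_t) lies in ℤ[x₁,…,x_t]; it is divisible in ℤ[x₁,…,x_t] by x₁⋯x_t · ∏_{1≤i<j≤t}(x_j − x_i); the quotient Q_β is a nonzero polynomial with integer coefficients; and deg W_β = β₁+⋯+β_t, so deg Q_β = β₁+⋯+β_t − t(t+1)/2. -/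
open MvPolynomial

/-- `W_β`: the determinant of the matrix with entries `binom(x_i, β_j)`, where
`binom(x, k) = x(x−1)⋯(x−k+1)/k!` is the polynomial binomial coefficient. -/
noncomputable def Wdet (t : ℕ) (β : Fin t → ℕ) : MvPolynomial (Fin t) ℚ :=
  Matrix.det (Matrix.of fun i j : Fin t =>
    C ((Nat.factorial (β j) : ℚ))⁻¹ *
      ∏ k ∈ Finset.range (β j), ((X i : MvPolynomial (Fin t) ℚ) - C (k : ℚ)))

open Finset

noncomputable section WAux

variable {R : Type*} [CommRing R] [IsDomain R] {σ : Type*}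

set_option linter.unusedSectionVars false

/-- helper: the top homogeneous component of a nonzero polynomial is nonzero. -/
lemma hc_top_ne_zero {p : MvPolynomial σ R} (hp : p ≠ 0) :
    homogeneousComponent p.totalDegree p ≠ 0 := by
  obtain ⟨d, hd, hdeg⟩ := Finset.exists_mem_eq_sup p.support
    (support_nonempty.2 hp) (fun s => s.sum fun _ e => e)
  intro h
  have := coeff_homogeneousComponent (σ := σ) (R := R) p.totalDegree p d
  rw [h] at this
  have hdd : d.degree = p.totalDegree := by
    simpa [Finsupp.degree_apply, Finsupp.sum, totalDegree] using hdeg.symm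
  rw [if_pos hdd] at this
  exact (mem_support_iff.1 hd) (by simpa using this.symm)

lemma totalDegree_mul_eq {p q : MvPolynomial σ R} (hp : p ≠ 0) (hq : q ≠ 0) :
    (p * q).totalDegree = p.totalDegree + q.totalDegree := by
  refine le_antisymm (totalDegree_mul p q) ?_
  set a := p.totalDegree
  set b := q.totalDegree
  have key : homogeneousComponent (a + b) (p * q)
      = homogeneousComponent a p * homogeneousComponent b q := by
    conv_lhs => rw [← sum_homogeneousComponent p, ← sum_homogeneousComponent q]
    rw [Finset.sum_mul_sum, map_sum]
    rw [Finset.sum_eq_single a]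
    · rw [map_sum, Finset.sum_eq_single b]
      · have hmem : homogeneousComponent a p * homogeneousComponent b q
            ∈ homogeneousSubmodule σ R (a + b) :=
          ((homogeneousComponent_mem a p).mul (homogeneousComponent_mem b q))
        rw [homogeneousComponent_of_mem hmem, if_pos rfl]
      · intro j hj hjb
        have hj' : j < b + 1 := Finset.mem_range.1 hj
        have hmem : homogeneousComponent a p * homogeneousComponent j q
            ∈ homogeneousSubmodule σ R (a + j) :=
          ((homogeneousComponent_mem a p).mul (homogeneousComponent_mem j q))
        rw [homogeneousComponent_of_mem hmem, if_neg (by omega)]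
      · intro h
        exact absurd (Finset.self_mem_range_succ b) h
    · intro i hi hia
      have hi' : i < a + 1 := Finset.mem_range.1 hi
      rw [map_sum, Finset.sum_eq_zero]
      intro j hj
      have hj' : j < b + 1 := Finset.mem_range.1 hj
      have hmem : homogeneousComponent i p * homogeneousComponent j q
          ∈ homogeneousSubmodule σ R (i + j) :=
        ((homogeneousComponent_mem i p).mul (homogeneousComponent_mem j q))
      rw [homogeneousComponent_of_mem hmem, if_neg (by omega)]
    · intro h
      exact absurd (Finset.self_mem_range_succ a) h
  have hne : homogeneousComponent (a + b) (p * q) ≠ 0 := by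
    rw [key]
    exact mul_ne_zero (hc_top_ne_zero hp) (hc_top_ne_zero hq)
  by_contra hlt
  push_neg at hlt
  exact hne (homogeneousComponent_eq_zero _ _ hlt)

lemma totalDegree_prod_eq {ι : Type*} (s : Finset ι) (f : ι → MvPolynomial σ R)
    (hf : ∀ i ∈ s, f i ≠ 0) :
    (∏ i ∈ s, f i) ≠ 0 ∧ (∏ i ∈ s, f i).totalDegree = ∑ i ∈ s, (f i).totalDegree := by
  classical
  induction s using Finset.cons_induction with
  | empty => simp
  | cons a s ha ih =>
    obtain ⟨h1, h2⟩ := ih (fun i hi => hf i (Finset.mem_cons_of_mem hi))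
    have hfa := hf a (Finset.mem_cons_self a s)
    rw [Finset.prod_cons, Finset.sum_cons]
    exact ⟨mul_ne_zero hfa h1, by rw [totalDegree_mul_eq hfa h1, h2]⟩

end WAux


noncomputable section WAux2

set_option linter.unusedSectionVars false

variable {R : Type*} [CommRing R] {σ : Type*}

/-- If `f` vanishes under a substitution `g` which is congruent to the identity mod `d`,
then `d` divides `f`. -/
lemma dvd_of_aeval_eq_zero (d : MvPolynomial σ R) (g : σ → MvPolynomial σ R)
    (hg : ∀ k, d ∣ (X k - g k)) (f : MvPolynomial σ R)
    (hf : aeval g f = 0) : d ∣ f := by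
  set I : Ideal (MvPolynomial σ R) := Ideal.span {d}
  set π := Ideal.Quotient.mk I
  have key : π.comp ((aeval g : MvPolynomial σ R →ₐ[R] MvPolynomial σ R) : MvPolynomial σ R →+* MvPolynomial σ R) = π := by
    apply MvPolynomial.ringHom_ext
    · intro r
      simp
    · intro k
      have : X k - g k ∈ I := Ideal.mem_span_singleton.2 (hg k)
      simp only [RingHom.comp_apply, RingHom.coe_coe, aeval_X]
      rw [Ideal.Quotient.eq]
      simpa [neg_sub] using I.neg_mem this
  have h2 : π f = 0 := by
    have := RingHom.congr_fun key f
    simp only [RingHom.comp_apply, RingHom.coe_coe] at this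
    rw [← this, hf, map_zero]
  rw [← Ideal.mem_span_singleton]
  exact (Ideal.Quotient.eq_zero_iff_mem).1 h2

/-- primes pairwise non-associated, each dividing n: the product divides n. -/
lemma prod_dvd_of_primes {α : Type*} [CommMonoidWithZero α] [IsCancelMulZero α] {ι : Type*}
    (s : Finset ι) (f : ι → α) (n : α)
    (hp : ∀ i ∈ s, Prime (f i))
    (hna : ∀ i ∈ s, ∀ j ∈ s, i ≠ j → ¬ Associated (f i) (f j))
    (hdvd : ∀ i ∈ s, f i ∣ n) :
    (∏ i ∈ s, f i) ∣ n := by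
  classical
  revert hp hna hdvd
  induction s using Finset.cons_induction generalizing n with
  | empty => simp
  | cons a s ha ih =>
    intro hp hna hdvd
    obtain ⟨k, rfl⟩ := hdvd a (Finset.mem_cons_self a s)
    rw [Finset.prod_cons]
    refine mul_dvd_mul_left _ (ih k (fun i hi => hp i (Finset.mem_cons_of_mem hi))
      (fun i hi j hj hij => hna i (Finset.mem_cons_of_mem hi) j (Finset.mem_cons_of_mem hj) hij)
      (fun i hi => ?_))
    have hia : i ≠ a := fun h => ha (h ▸ hi)
    have hpi := hp i (Finset.mem_cons_of_mem hi)
    have hdi := hdvd i (Finset.mem_cons_of_mem hi)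
    rcases hpi.dvd_or_dvd hdi with h | h
    · exact absurd (hpi.associated_of_dvd (hp a (Finset.mem_cons_self a s)) h)
        (hna i (Finset.mem_cons_of_mem hi) a (Finset.mem_cons_self a s) hia)
    · exact h

end WAux2


noncomputable section WAux3

lemma mv_prime_X {t : ℕ} (i : Fin t) : Prime (X i : MvPolynomial (Fin t) ℤ) := by
  have hpos : 0 < t := i.pos
  obtain ⟨m, rfl⟩ : ∃ m, t = m + 1 := ⟨t - 1, by omega⟩
  let e : Fin (m + 1) ≃ Option (Fin m) := (Equiv.swap i 0).trans (finSuccEquiv m)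
  have he : e i = none := by simp [e]
  let φ : MvPolynomial (Fin (m + 1)) ℤ ≃ₐ[ℤ] Polynomial (MvPolynomial (Fin m) ℤ) :=
    (renameEquiv ℤ e).trans (optionEquivLeft ℤ (Fin m))
  rw [← MulEquiv.prime_iff φ.toMulEquiv]
  have : φ (X i) = Polynomial.X := by
    simp [φ, he, optionEquivLeft_X_none]
  rw [show φ.toMulEquiv (X i) = φ (X i) from rfl, this]
  exact Polynomial.prime_X

lemma mv_prime_X_sub_X {t : ℕ} {a b : Fin t} (hab : a ≠ b) :
    Prime ((X b - X a : MvPolynomial (Fin t) ℤ)) := by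
  classical
  let f : Fin t → MvPolynomial (Fin t) ℤ := fun k => if k = b then X b - X a else X k
  let g : Fin t → MvPolynomial (Fin t) ℤ := fun k => if k = b then X b + X a else X k
  have hfa : f a = X a := by simp [f, hab]
  have hga : g a = X a := by simp [g, hab]
  let F : MvPolynomial (Fin t) ℤ →ₐ[ℤ] MvPolynomial (Fin t) ℤ := aeval f
  let G : MvPolynomial (Fin t) ℤ →ₐ[ℤ] MvPolynomial (Fin t) ℤ := aeval g
  have hFG : F.comp G = AlgHom.id ℤ _ := by
    apply MvPolynomial.algHom_ext
    intro k
    by_cases hk : k = b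
    · subst hk
      simp [F, G, f, g, hfa, hab]
    · simp [F, G, f, g, hk]
  have hGF : G.comp F = AlgHom.id ℤ _ := by
    apply MvPolynomial.algHom_ext
    intro k
    by_cases hk : k = b
    · subst hk
      simp [F, G, f, g, hga, hab]
    · simp [F, G, f, g, hk]
  let ψ : MvPolynomial (Fin t) ℤ ≃ₐ[ℤ] MvPolynomial (Fin t) ℤ := AlgEquiv.ofAlgHom F G hFG hGF
  have : ψ (X b) = X b - X a := by simp [ψ, F, f]
  rw [show (X b - X a : MvPolynomial (Fin t) ℤ) = ψ.toMulEquiv (X b) from this.symm,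
    MulEquiv.prime_iff ψ.toMulEquiv]
  exact mv_prime_X b

lemma mv_not_associated {t : ℕ} {p q : MvPolynomial (Fin t) ℤ} (v : Fin t → ℤ)
    (hp : eval v p = 0) (hq : eval v q ≠ 0) : ¬ Associated p q := by
  rintro ⟨u, hu⟩
  apply hq
  rw [← hu, map_mul, hp, zero_mul]

end WAux3


noncomputable section WAux4

set_option linter.unusedSectionVars false

variable {R : Type*} [CommRing R] {σ : Type*}

/-- `MSmall n p` : `p` is zero or has total degree `< n`. -/
def MSmall (n : ℕ) (p : MvPolynomial σ R) : Prop := p = 0 ∨ p.totalDegree < n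

lemma MSmall.mono {n m : ℕ} {p : MvPolynomial σ R} (h : MSmall n p) (hnm : n ≤ m) : MSmall m p := by
  rcases h with h | h
  · exact Or.inl h
  · exact Or.inr (lt_of_lt_of_le h hnm)

lemma MSmall.add {n : ℕ} {a b : MvPolynomial σ R} (ha : MSmall n a) (hb : MSmall n b) :
    MSmall n (a + b) := by
  rcases ha with ha | ha
  · simpa [ha] using hb
  rcases hb with hb | hb
  · rw [hb, add_zero]; exact Or.inr ha
  exact Or.inr (lt_of_le_of_lt (totalDegree_add a b) (by omega))

lemma MSmall.mul_right {n k : ℕ} {a b : MvPolynomial σ R} (ha : MSmall n a)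
    (hb : b.totalDegree ≤ k) : MSmall (n + k) (a * b) := by
  rcases ha with ha | ha
  · exact Or.inl (by simp [ha])
  by_cases h : a * b = 0
  · exact Or.inl h
  exact Or.inr (lt_of_le_of_lt (totalDegree_mul a b) (by omega))

lemma MSmall.totalDegree_le {n : ℕ} {p : MvPolynomial σ R} (h : MSmall n p) :
    p.totalDegree ≤ n := by
  rcases h with h | h
  · simp [h]
  · omega

lemma prod_err {ι : Type*} (s : Finset ι) (g r : ι → MvPolynomial σ R) (d : ι → ℕ)
    (hg : ∀ i ∈ s, (g i).totalDegree ≤ d i) (hr : ∀ i ∈ s, MSmall (d i) (r i)) :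
    MSmall (∑ i ∈ s, d i) ((∏ i ∈ s, (g i + r i)) - ∏ i ∈ s, g i) := by
  classical
  induction s using Finset.cons_induction with
  | empty => simp [MSmall]
  | cons a s ha ih =>
    have hD := ih (fun i hi => hg i (Finset.mem_cons_of_mem hi))
      (fun i hi => hr i (Finset.mem_cons_of_mem hi))
    set P := ∏ i ∈ s, (g i + r i) with hP
    set G := ∏ i ∈ s, g i with hG
    set D := ∑ i ∈ s, d i with hDdef
    have hGd : G.totalDegree ≤ D := by
      refine le_trans (totalDegree_finset_prod s g) ?_
      exact Finset.sum_le_sum (fun i hi => hg i (Finset.mem_cons_of_mem hi))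
    have hPd : P.totalDegree ≤ D := by
      have : P = G + (P - G) := by ring
      rw [this]
      exact le_trans (totalDegree_add _ _) (max_le hGd hD.totalDegree_le)
    rw [Finset.prod_cons, Finset.prod_cons, Finset.sum_cons]
    have hid : (g a + r a) * P - g a * G = g a * (P - G) + r a * P := by ring
    rw [hid]
    have h1 : MSmall (d a + D) (g a * (P - G)) := by
      have := hD.mul_right (hg a (Finset.mem_cons_self a s))
      rw [mul_comm] at this
      exact this.mono (by omega)
    have h2 : MSmall (d a + D) (r a * P) :=
      (hr a (Finset.mem_cons_self a s)).mul_right hPd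
    exact h1.add h2

lemma hc_prod_eq {ι : Type*} (s : Finset ι) (g r : ι → MvPolynomial σ R) (d : ι → ℕ)
    (hg : ∀ i ∈ s, (g i).IsHomogeneous (d i)) (hr : ∀ i ∈ s, MSmall (d i) (r i)) :
    homogeneousComponent (∑ i ∈ s, d i) (∏ i ∈ s, (g i + r i)) = ∏ i ∈ s, g i := by
  have herr := prod_err s g r d (fun i hi => (hg i hi).totalDegree_le) hr
  have hsplit : (∏ i ∈ s, (g i + r i)) = (∏ i ∈ s, g i) + ((∏ i ∈ s, (g i + r i)) - ∏ i ∈ s, g i) := by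
    ring
  rw [hsplit, map_add]
  have hhom : (∏ i ∈ s, g i) ∈ homogeneousSubmodule σ R (∑ i ∈ s, d i) :=
    (mem_homogeneousSubmodule _ _).2 (IsHomogeneous.prod s g d hg)
  rw [homogeneousComponent_of_mem hhom, if_pos rfl]
  rcases herr with h | h
  · rw [h, map_zero, add_zero]
  · rw [homogeneousComponent_eq_zero _ _ h, add_zero]

end WAux4


noncomputable section WAux5

/-- The integer matrix of falling-factorial type entries. -/
def Amat (t : ℕ) (β : Fin t → ℕ) : Matrix (Fin t) (Fin t) (MvPolynomial (Fin t) ℤ) :=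
  Matrix.of fun i j => ∏ k ∈ Finset.range (β j), (X i - C (k : ℤ))


lemma Pent_deg_le {t : ℕ} (i : Fin t) (n : ℕ) :
    (∏ k ∈ Finset.range n, ((X i : MvPolynomial (Fin t) ℤ) - C (k : ℤ))).totalDegree ≤ n := by
  refine le_trans (totalDegree_finset_prod _ _) ?_
  have : ∀ k ∈ Finset.range n, ((X i : MvPolynomial (Fin t) ℤ) - C (k : ℤ)).totalDegree ≤ 1 :=
    fun k _ => le_trans (totalDegree_sub_C_le _ _) (le_of_eq (totalDegree_X i))
  have h2 := Finset.sum_le_sum this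
  simpa using h2

lemma Pent_err {t : ℕ} (i : Fin t) (n : ℕ) :
    MSmall n ((∏ k ∈ Finset.range n, ((X i : MvPolynomial (Fin t) ℤ) - C (k : ℤ))) - X i ^ n) := by
  induction n with
  | zero => simp [MSmall]
  | succ n ih =>
    rw [Finset.prod_range_succ]
    set P := ∏ k ∈ Finset.range n, ((X i : MvPolynomial (Fin t) ℤ) - C (k : ℤ)) with hP
    have hid : P * (X i - C (n : ℤ)) - X i ^ (n + 1)
        = (P - X i ^ n) * (X i - C (n : ℤ)) + (-(C (n : ℤ) * X i ^ n)) := by ring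
    rw [hid]
    have hdeg1 : ((X i : MvPolynomial (Fin t) ℤ) - C (n : ℤ)).totalDegree ≤ 1 :=
      le_trans (totalDegree_sub_C_le _ _) (le_of_eq (totalDegree_X i))
    have h1 : MSmall (n + 1) ((P - X i ^ n) * (X i - C (n : ℤ))) := by
      rcases ih with h | h
      · exact Or.inl (by rw [h, zero_mul])
      by_cases hz : (P - X i ^ n) * (X i - C (n : ℤ)) = 0
      · exact Or.inl hz
      refine Or.inr (lt_of_le_of_lt (totalDegree_mul _ _) ?_)
      omega
    have h2 : MSmall (n + 1) (-(C (n : ℤ) * X i ^ n)) := by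
      by_cases hz : (-(C (n : ℤ) * X i ^ n) : MvPolynomial (Fin t) ℤ) = 0
      · exact Or.inl hz
      refine Or.inr ?_
      rw [totalDegree_neg]
      refine lt_of_le_of_lt (totalDegree_mul _ _) ?_
      have : (C (n : ℤ) : MvPolynomial (Fin t) ℤ).totalDegree = 0 := totalDegree_C _
      have h3 : ((X i : MvPolynomial (Fin t) ℤ) ^ n).totalDegree ≤ n :=
        le_of_eq (totalDegree_X_pow _ _)
      omega
    -- combine
    rcases h1 with h1 | h1
    · rcases h2 with h2 | h2
      · exact Or.inl (by rw [h1, h2, add_zero])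
      · rw [h1, zero_add]; exact Or.inr h2
    rcases h2 with h2 | h2
    · rw [h2, add_zero]; exact Or.inr h1
    by_cases hz : (P - X i ^ n) * (X i - C (n : ℤ)) + (-(C (n : ℤ) * X i ^ n)) = 0
    · exact Or.inl hz
    exact Or.inr (lt_of_le_of_lt (totalDegree_add _ _) (by omega))

lemma prodXpow {t : ℕ} (c : Fin t → ℕ) :
    (∏ j : Fin t, (X j : MvPolynomial (Fin t) ℤ) ^ c j)
      = monomial (Finsupp.equivFunOnFinite.symm c) 1 := by
  rw [← prod_X_pow_eq_monomial]
  refine (Finset.prod_subset (Finset.subset_univ _) ?_).symm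
  intro x _ hx
  have : (Finsupp.equivFunOnFinite.symm c) x = 0 := by
    simpa [Finsupp.mem_support_iff] using hx
  have hcx : c x = 0 := this
  simp [hcx]

lemma detA_deg_le (t : ℕ) (β : Fin t → ℕ) :
    (Amat t β).det.totalDegree ≤ ∑ j, β j := by
  rw [Matrix.det_apply]
  refine totalDegree_finsetSum_le (fun σ _ => ?_)
  have hprod : (∏ i, Amat t β (σ i) i).totalDegree ≤ ∑ j, β j := by
    refine le_trans (totalDegree_finset_prod _ _) (Finset.sum_le_sum fun i _ => ?_)
    exact Pent_deg_le (σ i) (β i)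
  rcases Int.units_eq_one_or (Equiv.Perm.sign σ) with h | h
  · rw [h, one_smul]; exact hprod
  · rw [h, Units.smul_def]
    push_cast
    rw [neg_smul, one_smul, totalDegree_neg]
    exact hprod

lemma hc_detA (t : ℕ) (β : Fin t → ℕ) :
    homogeneousComponent (∑ j, β j) (Amat t β).det
      = ∑ σ : Equiv.Perm (Fin t), Equiv.Perm.sign σ •
          ∏ i, (X (σ i) : MvPolynomial (Fin t) ℤ) ^ β i := by
  rw [Matrix.det_apply, map_sum]
  refine Finset.sum_congr rfl (fun σ _ => ?_)
  rw [Units.smul_def, map_smul, Units.smul_def]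
  congr 1
  have hA : ∀ i : Fin t, Amat t β (σ i) i
      = (X (σ i) : MvPolynomial (Fin t) ℤ) ^ β i
        + (Amat t β (σ i) i - (X (σ i) : MvPolynomial (Fin t) ℤ) ^ β i) := by
    intro i; ring
  rw [Finset.prod_congr rfl (fun i _ => hA i)]
  exact hc_prod_eq Finset.univ _ _ β (fun i _ => isHomogeneous_X_pow (σ i) (β i))
    (fun i _ => Pent_err (σ i) (β i))

lemma coeff_sum_perm (t : ℕ) (β : Fin t → ℕ) (hβinj : Function.Injective β) :
    coeff (Finsupp.equivFunOnFinite.symm β)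
      (∑ σ : Equiv.Perm (Fin t), Equiv.Perm.sign σ •
        ∏ i, (X (σ i) : MvPolynomial (Fin t) ℤ) ^ β i) = 1 := by
  classical
  have hmon : ∀ σ : Equiv.Perm (Fin t),
      (∏ i, (X (σ i) : MvPolynomial (Fin t) ℤ) ^ β i)
        = monomial (Finsupp.equivFunOnFinite.symm (fun j => β (σ.symm j))) 1 := by
    intro σ
    rw [← prodXpow]
    rw [← Equiv.prod_comp σ (fun j => (X j : MvPolynomial (Fin t) ℤ) ^ β (σ.symm j))]
    refine Finset.prod_congr rfl (fun i _ => ?_)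
    rw [Equiv.symm_apply_apply]
  rw [MvPolynomial.coeff_sum]
  rw [Finset.sum_eq_single (1 : Equiv.Perm (Fin t))]
  · rw [hmon, Units.smul_def, MvPolynomial.coeff_smul]
    simp [coeff_monomial]
    rfl
  · intro σ _ hσ
    rw [hmon, Units.smul_def, MvPolynomial.coeff_smul, coeff_monomial]
    rw [if_neg, smul_zero]
    intro h
    apply hσ
    have h2 : (fun j => β (σ.symm j)) = β := Finsupp.equivFunOnFinite.symm.injective h
    have h3 : ∀ j, σ.symm j = j := fun j => hβinj (congrFun h2 j)
    ext j
    have := h3 (σ j)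
    rw [Equiv.symm_apply_apply] at this
    simp [← this]
  · intro h
    exact absurd (Finset.mem_univ _) h

lemma detA_facts (t : ℕ) (β : Fin t → ℕ) (hβinj : Function.Injective β) :
    (Amat t β).det ≠ 0 ∧ (Amat t β).det.totalDegree = ∑ j, β j := by
  have hc1 : coeff (Finsupp.equivFunOnFinite.symm β)
      (homogeneousComponent (∑ j, β j) (Amat t β).det) = 1 := by
    rw [hc_detA]; exact coeff_sum_perm t β hβinj
  have hne : (Amat t β).det ≠ 0 := by
    intro h
    rw [h, map_zero] at hc1
    simp at hc1
  refine ⟨hne, le_antisymm (detA_deg_le t β) ?_⟩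
  by_contra hlt
  push_neg at hlt
  rw [homogeneousComponent_eq_zero _ _ hlt] at hc1
  simp at hc1

lemma X_dvd_detA (t : ℕ) (β : Fin t → ℕ) (hβ1 : ∀ j, 1 ≤ β j) (i : Fin t) :
    (X i : MvPolynomial (Fin t) ℤ) ∣ (Amat t β).det := by
  classical
  set g : Fin t → MvPolynomial (Fin t) ℤ := fun k => if k = i then 0 else X k with hg
  refine dvd_of_aeval_eq_zero (X i) g (fun k => ?_) _ ?_
  · by_cases hk : k = i
    · subst hk; simp [g]
    · simp [g, hk]
  · have : (aeval g : MvPolynomial (Fin t) ℤ →ₐ[ℤ] MvPolynomial (Fin t) ℤ).toRingHom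
        (Amat t β).det = ((Amat t β).map (aeval g)).det := by
      exact RingHom.map_det _ _
    rw [show (aeval g) ((Amat t β).det) = _ from this]
    refine Matrix.det_eq_zero_of_row_eq_zero i (fun j => ?_)
    have h0 : (0 : ℕ) ∈ Finset.range (β j) := Finset.mem_range.2 (hβ1 j)
    simp only [Matrix.map_apply, Amat, Matrix.of_apply, map_prod, map_sub, aeval_X, aeval_C]
    refine Finset.prod_eq_zero h0 ?_
    simp [g]

lemma Xsub_dvd_detA (t : ℕ) (β : Fin t → ℕ) {a b : Fin t} (hab : a ≠ b) :
    ((X b - X a) : MvPolynomial (Fin t) ℤ) ∣ (Amat t β).det := by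
  classical
  set g : Fin t → MvPolynomial (Fin t) ℤ := fun k => if k = b then X a else X k with hg
  refine dvd_of_aeval_eq_zero (X b - X a) g (fun k => ?_) _ ?_
  · by_cases hk : k = b
    · subst hk; simp [g]
    · simp [g, hk]
  · have : (aeval g : MvPolynomial (Fin t) ℤ →ₐ[ℤ] MvPolynomial (Fin t) ℤ).toRingHom
        (Amat t β).det = ((Amat t β).map (aeval g)).det := RingHom.map_det _ _
    rw [show (aeval g) ((Amat t β).det) = _ from this]
    refine Matrix.det_zero_of_row_eq hab ?_
    funext j
    simp only [Matrix.map_apply, Amat, Matrix.of_apply, map_prod, map_sub, aeval_X, aeval_C]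
    have hga : g a = X a := by simp [g, hab]
    have hgb : g b = X a := by simp [g]
    rw [hga, hgb]

lemma V_dvd_detA (t : ℕ) (β : Fin t → ℕ) (hβ1 : ∀ j, 1 ≤ β j) :
    ((∏ i, (X i : MvPolynomial (Fin t) ℤ)) *
      ∏ p ∈ Finset.univ.filter (fun p : Fin t × Fin t => p.1 < p.2),
        ((X p.2 : MvPolynomial (Fin t) ℤ) - X p.1)) ∣ (Amat t β).det := by
  classical
  set s : Finset (Fin t ⊕ (Fin t × Fin t)) :=
    (Finset.univ : Finset (Fin t)).disjSum
      (Finset.univ.filter (fun p : Fin t × Fin t => p.1 < p.2)) with hs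
  set f : Fin t ⊕ (Fin t × Fin t) → MvPolynomial (Fin t) ℤ :=
    Sum.elim (fun i => X i) (fun p => X p.2 - X p.1) with hf
  have hprod : (∏ x ∈ s, f x) = (∏ i, (X i : MvPolynomial (Fin t) ℤ)) *
      ∏ p ∈ Finset.univ.filter (fun p : Fin t × Fin t => p.1 < p.2),
        ((X p.2 : MvPolynomial (Fin t) ℤ) - X p.1) := by
    rw [hs, Finset.prod_disjSum]
    rfl
  rw [← hprod]
  have hmemr : ∀ p : Fin t × Fin t, Sum.inr p ∈ s → p.1 < p.2 := by
    intro p hp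
    rcases Finset.mem_disjSum.1 hp with ⟨x, _, hx⟩ | ⟨x, hx, hx2⟩
    · exact absurd hx (by simp)
    · obtain rfl : x = p := Sum.inr.inj hx2
      exact (Finset.mem_filter.1 hx).2
  refine prod_dvd_of_primes s f _ ?_ ?_ ?_
  · rintro (i | p) hmem
    · exact mv_prime_X i
    · exact mv_prime_X_sub_X (ne_of_lt (hmemr p hmem))
  · rintro (i | p) hmem1 (j | q) hmem2 hne
    · -- X i vs X j
      have hij : i ≠ j := fun h => hne (by rw [h])
      refine mv_not_associated (fun k => if k = i then 0 else 1) (by simp [f]) ?_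
      simp [f, hij.symm]
    · -- X i vs X q.2 - X q.1
      have hq := hmemr q hmem2
      refine mv_not_associated (fun k => if k = i then 0 else ((k : ℤ) + 1)) (by simp [f]) ?_
      simp only [f, Sum.elim_inr, eval_sub, eval_X]
      by_cases h1 : q.1 = i
      · have h2 : q.2 ≠ i := fun h => (ne_of_lt hq) ((h1.trans h.symm))
        simp only [h1, if_pos rfl, if_neg h2]
        have : (0 : ℤ) < (q.2 : ℤ) + 1 := by positivity
        omega
      · by_cases h2 : q.2 = i
        · simp only [h2, if_pos rfl, if_neg h1]
          have : (0 : ℤ) < (q.1 : ℤ) + 1 := by positivity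
          omega
        · simp only [if_neg h1, if_neg h2]
          have : (q.1 : ℤ) ≠ (q.2 : ℤ) := by
            simp only [Ne, Int.natCast_inj]
            intro h
            exact (ne_of_lt hq) (Fin.ext (by exact_mod_cast h))
          omega
    · -- X q.2 - X q.1 vs X j
      refine mv_not_associated (fun _ => 1) (by simp [f]) (by simp [f])
    · -- X p.2 - X p.1 vs X q.2 - X q.1
      have hp := hmemr p hmem1
      have hq2 := hmemr q hmem2
      have hpq : p ≠ q := fun h => hne (by rw [h])
      refine mv_not_associated
        (fun k => if k = p.1 ∨ k = p.2 then 0 else ((k : ℤ) + 1)) ?_ ?_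
      · simp [f]
      · simp only [f, Sum.elim_inr, eval_sub, eval_X]
        by_cases h1 : q.1 = p.1 ∨ q.1 = p.2
        · by_cases h2 : q.2 = p.1 ∨ q.2 = p.2
          · exfalso
            -- both endpoints of q are in {p.1, p.2}; with the order constraints q = p
            have hq1q2 : q.1 ≠ q.2 := ne_of_lt hq2
            rcases h1 with h1 | h1 <;> rcases h2 with h2 | h2
            · exact hq1q2 (h1.trans h2.symm)
            · exact hpq.symm (Prod.ext h1 h2)
            · -- q.1 = p.2, q.2 = p.1 : then q.1 < q.2 gives p.2 < p.1, contra p.1 < p.2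
              rw [h1, h2] at hq2
              exact absurd hq2 (not_lt_of_gt hp)
            · exact hq1q2 (h1.trans h2.symm)
          · rw [if_pos h1, if_neg h2]
            have : (0 : ℤ) < (q.2 : ℤ) + 1 := by positivity
            omega
        · by_cases h2 : q.2 = p.1 ∨ q.2 = p.2
          · rw [if_pos h2, if_neg h1]
            have : (0 : ℤ) < (q.1 : ℤ) + 1 := by positivity
            omega
          · rw [if_neg h1, if_neg h2]
            have : (q.1 : ℤ) ≠ (q.2 : ℤ) := by
              simp only [Ne, Int.natCast_inj]
              intro h
              exact (ne_of_lt hq2) (Fin.ext (by exact_mod_cast h))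
            omega
  · rintro (i | p) hmem
    · exact X_dvd_detA t β hβ1 i
    · exact Xsub_dvd_detA t β (ne_of_lt (hmemr p hmem))

lemma deg_X_sub_X {t : ℕ} {a b : Fin t} (hab : a ≠ b) :
    ((X b - X a : MvPolynomial (Fin t) ℤ)).totalDegree = 1 := by
  refine le_antisymm (le_trans (totalDegree_sub _ _) ?_) ?_
  · simp [totalDegree_X]
  · have hcoeff : coeff (Finsupp.single b 1) ((X b - X a : MvPolynomial (Fin t) ℤ)) = 1 := by
      rw [coeff_sub, MvPolynomial.coeff_X_same, MvPolynomial.coeff_X']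
      rw [if_neg, sub_zero]
      intro h
      rcases (Finsupp.single_eq_single_iff _ _ _ _).1 h with ⟨h1, _⟩ | ⟨h1, _⟩
      · exact hab h1
      · exact one_ne_zero h1
    have hmem : Finsupp.single b 1 ∈ ((X b - X a : MvPolynomial (Fin t) ℤ)).support :=
      mem_support_iff.2 (by rw [hcoeff]; exact one_ne_zero)
    have := le_totalDegree hmem
    simpa using this

lemma card_lt_pairs (t : ℕ) :
    (Finset.univ.filter (fun p : Fin t × Fin t => p.1 < p.2)).card = t * (t - 1) / 2 := by
  classical
  rw [Finset.card_filter]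
  rw [Fintype.sum_prod_type_right]
  have hinner : ∀ j : Fin t,
      (∑ i : Fin t, if (i, j).1 < (i, j).2 then 1 else 0) = (j : ℕ) := by
    intro j
    have : (∑ i : Fin t, if (i, j).1 < (i, j).2 then 1 else 0)
        = (Finset.univ.filter (fun i : Fin t => i < j)).card := by
      rw [Finset.card_filter]
    rw [this]
    have : Finset.univ.filter (fun i : Fin t => i < j) = Finset.Iio j := by
      ext i; simp
    rw [this, Fin.card_Iio]
  rw [Finset.sum_congr rfl (fun j _ => hinner j)]
  rw [Fin.sum_univ_eq_sum_range (fun i => i) t]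
  exact Finset.sum_range_id t

lemma map_detA_eq (t : ℕ) (β : Fin t → ℕ) :
    C (∏ j, (Nat.factorial (β j) : ℚ)) * Wdet t β
      = MvPolynomial.map (Int.castRingHom ℚ) (Amat t β).det := by
  have hdet : MvPolynomial.map (Int.castRingHom ℚ) (Amat t β).det
      = ((Amat t β).map (MvPolynomial.map (Int.castRingHom ℚ))).det :=
    RingHom.map_det _ _
  rw [hdet]
  have hmat : (Amat t β).map (MvPolynomial.map (Int.castRingHom ℚ))
      = (Matrix.of fun i j : Fin t =>
          C ((Nat.factorial (β j) : ℚ))⁻¹ *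
            ∏ k ∈ Finset.range (β j), ((X i : MvPolynomial (Fin t) ℚ) - C (k : ℚ)))
        * Matrix.diagonal (fun j => C ((Nat.factorial (β j) : ℚ))) := by
    ext i j
    rw [Matrix.mul_diagonal]
    have hfac : ((Nat.factorial (β j) : ℚ)) ≠ 0 := by
      exact_mod_cast Nat.factorial_ne_zero (β j)
    have hl : (Amat t β).map (MvPolynomial.map (Int.castRingHom ℚ)) i j
        = ∏ k ∈ Finset.range (β j), ((X i : MvPolynomial (Fin t) ℚ) - C (k : ℚ)) := by
      simp only [Matrix.map_apply, Amat, Matrix.of_apply, map_prod, map_sub,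
        MvPolynomial.map_X, MvPolynomial.map_C]
      refine Finset.prod_congr rfl (fun k _ => ?_)
      norm_num
    rw [hl, Matrix.of_apply]
    rw [mul_comm (C ((Nat.factorial (β j) : ℚ))⁻¹) _, mul_assoc, ← C_mul,
      inv_mul_cancel₀ hfac, C_1, mul_one]
  rw [hmat, Matrix.det_mul, Matrix.det_diagonal]
  rw [← Wdet]
  rw [mul_comm]
  congr 1
  rw [← map_prod]


/-- For integers `1 ≤ β₁ < ⋯ < β_t`, the polynomial
`β₁!⋯β_t! · W_β` has integer coefficients and is divisible (over `ℤ`) by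
`x₁⋯x_t·∏_{i<j}(x_j − x_i)`, with nonzero integer quotient `Q_β`; moreover
`deg W_β = β₁+⋯+β_t` and `deg Q_β = β₁+⋯+β_t − t(t+1)/2`. -/
theorem Wdet_factorization (t : ℕ) (ht : 1 ≤ t) (β : Fin t → ℕ)
    (hβ1 : 0 < β ⟨0, ht⟩) (hβmono : StrictMono β) :
    ∃ Q : MvPolynomial (Fin t) ℤ, Q ≠ 0 ∧
      C (∏ j, (Nat.factorial (β j) : ℚ)) * Wdet t β =
        MvPolynomial.map (Int.castRingHom ℚ)
          (((∏ i, (X i : MvPolynomial (Fin t) ℤ)) *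
            ∏ p ∈ Finset.univ.filter (fun p : Fin t × Fin t => p.1 < p.2),
              ((X p.2 : MvPolynomial (Fin t) ℤ) - X p.1)) * Q) ∧
      (Wdet t β).totalDegree = ∑ j, β j ∧
      Q.totalDegree = (∑ j, β j) - t * (t + 1) / 2 := by
  classical
  have hβ1' : ∀ j, 1 ≤ β j := by
    intro j
    have h0j : (⟨0, ht⟩ : Fin t) ≤ j := by simp [Fin.le_def]
    have := hβmono.monotone h0j
    omega
  have hβinj : Function.Injective β := hβmono.injective
  obtain ⟨hAne, hAdeg⟩ := detA_facts t β hβinj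
  obtain ⟨Q, hQ⟩ := V_dvd_detA t β hβ1'
  set V1 : MvPolynomial (Fin t) ℤ := ∏ i, X i with hV1
  set V2 : MvPolynomial (Fin t) ℤ :=
    ∏ p ∈ Finset.univ.filter (fun p : Fin t × Fin t => p.1 < p.2), (X p.2 - X p.1) with hV2
  have hQne : Q ≠ 0 := by
    intro h
    rw [h, mul_zero] at hQ
    exact hAne hQ
  have hV12ne : V1 * V2 ≠ 0 := fun h => hAne (by rw [hQ, h, zero_mul])
  have hV1ne : V1 ≠ 0 := left_ne_zero_of_mul hV12ne
  have hV2ne : V2 ≠ 0 := right_ne_zero_of_mul hV12ne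
  -- degrees of V1 and V2
  have hV1f : ∀ i ∈ (Finset.univ : Finset (Fin t)), (X i : MvPolynomial (Fin t) ℤ) ≠ 0 := by
    intro i _
    exact fun h => hV1ne (Finset.prod_eq_zero (Finset.mem_univ i) h)
  have hV2f : ∀ p ∈ Finset.univ.filter (fun p : Fin t × Fin t => p.1 < p.2),
      ((X p.2 - X p.1) : MvPolynomial (Fin t) ℤ) ≠ 0 := by
    intro p hp
    exact fun h => hV2ne (Finset.prod_eq_zero hp h)
  have hV1deg : V1.totalDegree = t := by
    obtain ⟨_, hdeg⟩ := totalDegree_prod_eq Finset.univ (fun i : Fin t => (X i : MvPolynomial (Fin t) ℤ)) hV1f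
    rw [hV1, hdeg]
    simp [totalDegree_X]
  have hV2deg : V2.totalDegree = t * (t - 1) / 2 := by
    obtain ⟨_, hdeg⟩ := totalDegree_prod_eq _ (fun p : Fin t × Fin t => ((X p.2 - X p.1) : MvPolynomial (Fin t) ℤ)) hV2f
    rw [hV2, hdeg]
    rw [Finset.sum_congr rfl (fun p hp => deg_X_sub_X (ne_of_lt (Finset.mem_filter.1 hp).2))]
    rw [Finset.sum_const, smul_eq_mul, mul_one, card_lt_pairs]
  -- total degree identity
  have hsum : (∑ j, β j) = V1.totalDegree + V2.totalDegree + Q.totalDegree := by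
    rw [← hAdeg, hQ, totalDegree_mul_eq hV12ne hQne, totalDegree_mul_eq hV1ne hV2ne]
  refine ⟨Q, hQne, ?_, ?_, ?_⟩
  · rw [← hQ]
    exact map_detA_eq t β
  · -- totalDegree of Wdet
    have hc : (∏ j, (Nat.factorial (β j) : ℚ)) ≠ 0 := by
      refine Finset.prod_ne_zero_iff.2 (fun j _ => ?_)
      exact_mod_cast Nat.factorial_ne_zero (β j)
    have hmapdeg : (MvPolynomial.map (Int.castRingHom ℚ) (Amat t β).det).totalDegree
        = ∑ j, β j := by
      rw [← hAdeg]
      unfold totalDegree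
      rw [MvPolynomial.support_map_of_injective _ (by exact Int.cast_injective)]
    have heq : (C (∏ j, (Nat.factorial (β j) : ℚ)) * Wdet t β).totalDegree = ∑ j, β j := by
      rw [map_detA_eq t β]; exact hmapdeg
    have h1 : (C (∏ j, (Nat.factorial (β j) : ℚ)) * Wdet t β).totalDegree
        ≤ (Wdet t β).totalDegree := by
      refine le_trans (totalDegree_mul _ _) ?_
      rw [totalDegree_C]
      simp
    have h2 : (Wdet t β).totalDegree
        ≤ (C (∏ j, (Nat.factorial (β j) : ℚ)) * Wdet t β).totalDegree := by
      have hW : Wdet t β = C (∏ j, (Nat.factorial (β j) : ℚ))⁻¹ *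
          (C (∏ j, (Nat.factorial (β j) : ℚ)) * Wdet t β) := by
        rw [← mul_assoc, ← C_mul, inv_mul_cancel₀ hc, C_1, one_mul]
      nth_rewrite 1 [hW]
      refine le_trans (totalDegree_mul _ _) ?_
      rw [totalDegree_C]
      simp
    omega
  · -- totalDegree of Q
    rw [hV1deg, hV2deg] at hsum
    obtain ⟨m, rfl⟩ : ∃ m, t = m + 1 := ⟨t - 1, by omega⟩
    have e0 : (m + 1) * (m + 1 - 1) = m * (m + 1) := by
      simp [Nat.add_sub_cancel]
      ring
    rw [e0] at hsum
    have e2 : m * (m + 1) / 2 * 2 = m * (m + 1) :=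
      Nat.div_mul_cancel (Nat.even_mul_succ_self m).two_dvd
    have e3 : (m + 1) * (m + 1 + 1) / 2 * 2 = (m + 1) * (m + 1 + 1) :=
      Nat.div_mul_cancel (Nat.even_mul_succ_self (m + 1)).two_dvd
    have e4 : (m + 1) * (m + 1 + 1) = m * (m + 1) + 2 * (m + 1) := by ring
    omega
end WAux5
end
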